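/- arXiv:2103.12153 — 5 statements merged into one kernel-verified Lean document; each statement's English description precedes it below -/
import Mathlib

section
/- Let k be a positive integer and let G be a finite simple graph in which every cycle has length at least 2k+2. Then every induced subgraph of G that is a k-vine is contained (as a subgraph) in a unique maximal k-vine of G, namely the k-ball U_k(v) at the center v of the given k-vine: U_k(v) is a k-vine of G, it contains the given k-vine, and every k-vine of G containing the given k-vine is a subgraph of U_k(v). -/
open SimpleGraph

/-- The eccentricity (`ℕ∞`-valued) of a vertex: supremum of extended distances to
all vertices.  It is infinite if the graph is disconnected. -/
noncomputable def eccent {V : Type*} (G : SimpleGraph V) (v : V) : ℕ∞ :=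
  ⨆ w, G.edist v w

/-- The radius (`ℕ∞`-valued) of a graph: minimum eccentricity. -/
noncomputable def gradius {V : Type*} (G : SimpleGraph V) : ℕ∞ :=
  ⨅ v, _root_.eccent G v

/-- The diameter (`ℕ∞`-valued) of a graph: maximum distance between two vertices. -/
noncomputable def gdiam {V : Type*} (G : SimpleGraph V) : ℕ∞ :=
  ⨆ v, ⨆ w, G.edist v w

/-- Two graphs on `Fin n` have the same `k`-deck: there is a bijection `φ` between the
`k`-element vertex subsets such that for each subset `s` the subgraph induced by `s` in the
first graph is isomorphic to the subgraph induced by `φ s` in the second. -/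
def SameDeck {n : ℕ} (G H : SimpleGraph (Fin n)) (k : ℕ) : Prop :=
  ∃ φ : {s : Finset (Fin n) // s.card = k} ≃ {s : Finset (Fin n) // s.card = k},
    ∀ s : {s : Finset (Fin n) // s.card = k},
      Nonempty ((SimpleGraph.induce (↑s.1 : Set (Fin n)) G) ≃g
                (SimpleGraph.induce (↑(φ s).1 : Set (Fin n)) H))

/-- A `k`-vine: a tree with diameter exactly `2k`. -/
def IsVine {V : Type*} (k : ℕ) (A : SimpleGraph V) : Prop :=
  A.IsTree ∧ gdiam A = ((2 * k : ℕ) : ℕ∞)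

/-- A `k`-center of `G`: a vertex `v` such that some subgraph of `G` is a `k`-vine
with center `v` (i.e. `v` has eccentricity `k` in it). -/
def IsKCenter {V : Type*} (k : ℕ) (G : SimpleGraph V) (v : V) : Prop :=
  ∃ (B : G.Subgraph) (hv : v ∈ B.verts),
    IsVine k B.coe ∧ _root_.eccent B.coe ⟨v, hv⟩ = (k : ℕ∞)

/-- The `k`-ball at a vertex `v` of `G`: the subgraph induced by all vertices at
distance at most `k` from `v`. -/
def kBall {V : Type*} (G : SimpleGraph V) (v : V) (k : ℕ) : G.Subgraph :=
  (⊤ : G.Subgraph).induce {w | G.edist v w ≤ (k : ℕ∞)}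

namespace VineAux

variable {V : Type*} {G : SimpleGraph V}

lemma path_loop_eq_nil {u : V} {p : G.Walk u u} (hp : p.IsPath) : p = .nil := by
  cases p with
  | nil => rfl
  | cons h q =>
    rw [Walk.cons_isPath_iff] at hp
    exact absurd q.end_mem_support hp.2

lemma exists_last_edge {a b : V} (p : G.Walk a b) (h : ¬ p.Nil) :
    ∃ c, G.Adj c b ∧ s(c, b) ∈ p.edges := by
  induction p with
  | nil => simp at h
  | @cons x y z hadj q ih =>
    by_cases hq : q.Nil
    · have : y = z := hq.eq
      subst this
      exact ⟨x, hadj, by simp⟩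
    · obtain ⟨c, hc, hce⟩ := ih hq
      exact ⟨c, hc, by simp [hce]⟩

lemma exists_cycle_of_two_paths :
    ∀ (n : ℕ) {x y : V} (p q : G.Walk x y), p.IsPath → q.IsPath → p ≠ q →
      p.length + q.length ≤ n →
      ∃ (z : V) (c : G.Walk z z), c.IsCycle ∧ c.length ≤ p.length + q.length := by
  intro n
  induction n with
  | zero =>
    intro x y p q hp hq hpq hn
    have hp0 : p.length = 0 := by omega
    have : x = y := Walk.eq_of_length_eq_zero hp0
    subst this
    rw [path_loop_eq_nil hp, path_loop_eq_nil hq] at hpq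
    exact absurd rfl hpq
  | succ n ih =>
    intro x y p q hp hq hpq hn
    classical
    cases p with
    | nil =>
      rw [path_loop_eq_nil hq] at hpq
      exact absurd rfl hpq
    | @cons _ a _ hxa p' =>
      cases q with
      | nil =>
        have := path_loop_eq_nil hp
        simp at this
      | @cons _ b _ hxb q' =>
        rw [Walk.cons_isPath_iff] at hp hq
        by_cases hab : a = b
        · subst hab
          have hpq' : p' ≠ q' := by
            rintro rfl
            exact hpq (by rw [proof_irrel hxa hxb])
          obtain ⟨z, c, hc, hcl⟩ := ih p' q' hp.1 hq.1 hpq' (by simp at hn ⊢; omega)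
          exact ⟨z, c, hc, by simp at hcl ⊢; omega⟩
        · set W : G.Walk a x := p'.append (Walk.cons hxb q').reverse with hW
          have hPedge : s(x, a) ∉ W.bypass.edges := by
            intro hmem
            have := W.edges_bypass_subset hmem
            rw [hW, Walk.edges_append, Walk.edges_reverse] at this
            rcases List.mem_append.mp this with h1 | h2
            · exact hp.2 (Walk.fst_mem_support_of_mem_edges p' h1)
            · rw [List.mem_reverse, Walk.edges_cons, List.mem_cons] at h2
              rcases h2 with h2 | h2
              · exact hab (Sym2.congr_right.mp h2)
              · exact hq.2 (Walk.fst_mem_support_of_mem_edges q' h2)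
          refine ⟨x, Walk.cons hxa W.bypass,
            (Walk.cons_isCycle_iff _ _).mpr ⟨W.bypass_isPath, hPedge⟩, ?_⟩
          have h1 := W.length_bypass_le
          have h2 : W.length = p'.length + (q'.length + 1) := by
            rw [hW]
            simp [Walk.length_append, Walk.length_reverse]
          simp only [Walk.length_cons]
          omega

section helpers
variable {k : ℕ}

lemma paths_eq_of_short
    (hg : ∀ (z : V) (c : G.Walk z z), c.IsCycle → 2 * k + 2 ≤ c.length)
    {x y : V} {p q : G.Walk x y} (hp : p.IsPath) (hq : q.IsPath)
    (hlen : p.length + q.length ≤ 2 * k + 1) : p = q := by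
  by_contra hne
  obtain ⟨z, c, hc, hcl⟩ := exists_cycle_of_two_paths (p.length + q.length) p q hp hq hne le_rfl
  have := hg z c hc
  omega

lemma exists_path_length_edist {a b : V} (h : G.edist a b ≠ ⊤) :
    ∃ p : G.Walk a b, p.IsPath ∧ (p.length : ℕ∞) = G.edist a b := by
  classical
  obtain ⟨w, hw⟩ := exists_walk_of_edist_ne_top h
  refine ⟨w.bypass, w.bypass_isPath, le_antisymm ?_ ?_⟩
  · rw [← hw]
    exact_mod_cast Nat.cast_le.mpr w.length_bypass_le
  · exact edist_le _

lemma edist_eq_length_of_path (hA : G.IsAcyclic) {a b : V} {P : G.Walk a b}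
    (hP : P.IsPath) : G.edist a b = P.length := by
  classical
  refine le_antisymm (edist_le P) ?_
  rw [edist_eq_sInf]
  refine le_sInf ?_
  rintro _ ⟨w, rfl⟩
  have h1 : w.bypass = P := by
    have := hA.path_unique ⟨w.bypass, w.bypass_isPath⟩ ⟨P, hP⟩
    exact congrArg Subtype.val this
  have : P.length ≤ w.length := h1 ▸ w.length_bypass_le
  exact_mod_cast Nat.cast_le.mpr this

lemma isPath_concat {a b c : V} {p : G.Walk a b} (hp : p.IsPath) (h : G.Adj b c)
    (hc : c ∉ p.support) : (p.concat h).IsPath := by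
  have : (p.concat h).reverse.IsPath := by
    rw [Walk.reverse_concat]
    rw [Walk.cons_isPath_iff]
    exact ⟨hp.reverse, by rwa [Walk.support_reverse, List.mem_reverse]⟩
  rw [← Walk.reverse_reverse (p.concat h)]; exact this.reverse

lemma isPath_append {a b c : V} {p : G.Walk a b} {q : G.Walk b c}
    (hp : p.IsPath) (hq : q.IsPath)
    (hdisj : ∀ u, u ∈ p.support → u ∈ q.support → u = b) :
    (p.append q).IsPath := by
  rw [Walk.isPath_def, Walk.support_append]
  have hbq : b ∉ q.support.tail := by
    have := hq.support_nodup
    rw [q.support_eq_cons] at this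
    exact (List.nodup_cons.mp this).1
  refine List.Nodup.append hp.support_nodup (hq.support_nodup.tail) ?_
  intro u hup huq
  have : u = b := hdisj u hup (List.mem_of_mem_tail huq)
  subst this
  exact hbq huq

lemma lift_walk {S : Set V} :
    ∀ {a b : V} (p : G.Walk a b) (ha : a ∈ S) (hb : b ∈ S)
      (_ : ∀ u ∈ p.support, u ∈ S),
      ∃ q : ((⊤ : G.Subgraph).induce S).coe.Walk ⟨a, ha⟩ ⟨b, hb⟩,
        q.length = p.length := by
  intro a b p
  induction p with
  | nil => exact fun ha hb _ => ⟨Walk.nil, rfl⟩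
  | @cons a c b h p' ih =>
    intro ha hb hp
    have hc : c ∈ S := hp c (by simp)
    obtain ⟨q', hq'⟩ := ih hc hb (fun u hu => hp u (by simp [hu]))
    have hadj : ((⊤ : G.Subgraph).induce S).coe.Adj ⟨a, ha⟩ ⟨c, hc⟩ := by
      exact ⟨ha, hc, h⟩
    exact ⟨Walk.cons hadj q', by simp [hq']⟩

lemma subgraph_edist_mono {H : G.Subgraph} (x y : H.verts) :
    G.edist ↑x ↑y ≤ H.coe.edist x y := by
  rcases eq_or_ne (H.coe.edist x y) ⊤ with h | h
  · rw [h]; exact le_top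
  · obtain ⟨p, hp⟩ := exists_walk_of_edist_ne_top h
    calc G.edist ↑x ↑y ≤ ((p.map H.hom).length : ℕ∞) := edist_le _
    _ = (p.length : ℕ∞) := by rw [Walk.length_map]
    _ = H.coe.edist x y := hp

lemma exists_first_decomp {a b : V} (p : G.Walk a b) (S : Set V) (hb : b ∈ S) :
    ∃ (z : V) (r : G.Walk a z) (s : G.Walk z b), z ∈ S ∧
      (∀ u ∈ r.support, u ∈ S → u = z) ∧
      r.length + s.length = p.length ∧ r.append s = p := by
  induction p with
  | nil => exact ⟨_, Walk.nil, Walk.nil, hb, by simp, by simp, by simp⟩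
  | @cons a c b h p' ih =>
    by_cases haS : a ∈ S
    · exact ⟨a, Walk.nil, Walk.cons h p', haS, by simp, by simp, by simp⟩
    · obtain ⟨z, r', s', hz, hr', hlen, happ⟩ := ih hb
      refine ⟨z, Walk.cons h r', s', hz, ?_, by simp [← hlen]; omega, by simp [happ]⟩
      intro u hu huS
      rw [Walk.support_cons, List.mem_cons] at hu
      rcases hu with rfl | hu
      · exact absurd huS haS
      · exact hr' u hu huS

end helpers
section main
variable {k : ℕ}

lemma takeUntil_drop_len [DecidableEq V] {a b u : V} {p : G.Walk a b} (h : u ∈ p.support) :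
    (p.takeUntil u h).length + (p.dropUntil u h).length = p.length := by
  conv_rhs => rw [← p.take_spec h]
  rw [Walk.length_append]

lemma no_equal_level
    (hg : ∀ (z : V) (c : G.Walk z z), c.IsCycle → 2 * k + 2 ≤ c.length)
    {v c c' : V} (hadj : G.Adj c c') (h1 : G.edist v c ≤ (k : ℕ∞))
    (h2 : G.edist v c' ≤ (k : ℕ∞)) : G.edist v c ≠ G.edist v c' := by
  intro heq
  classical
  obtain ⟨γ, hγp, hγl⟩ := exists_path_length_edist
    (h1.trans_lt (by exact_mod_cast ENat.coe_lt_top k)).ne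
  obtain ⟨γ', hγ'p, hγ'l⟩ := exists_path_length_edist (a := v) (b := c')
    (h2.trans_lt (by exact_mod_cast ENat.coe_lt_top k)).ne
  have hll : γ.length = γ'.length := by
    have := hγl.trans (heq.trans hγ'l.symm)
    exact_mod_cast this
  have hlk : γ.length ≤ k := by
    have := hγl.trans_le h1
    exact_mod_cast this
  have hcmem : c ∉ γ'.support := by
    intro hmem
    have ht1 : G.edist v c ≤ ((γ'.takeUntil c hmem).length : ℕ∞) := edist_le _
    rw [← hγl] at ht1
    have ht1' : γ.length ≤ (γ'.takeUntil c hmem).length := by exact_mod_cast ht1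
    have ht2 := γ'.length_takeUntil_le hmem
    have ht3 := takeUntil_drop_len hmem
    have hd0 : (γ'.dropUntil c hmem).length = 0 := by omega
    exact hadj.ne (Walk.eq_of_length_eq_zero hd0)
  have hpath2 : (γ'.concat hadj.symm).IsPath := isPath_concat hγ'p hadj.symm hcmem
  have := paths_eq_of_short hg hγp hpath2
    (by rw [Walk.length_concat]; omega)
  have : γ.length = (γ'.concat hadj.symm).length := by rw [this]
  rw [Walk.length_concat] at this
  omega

lemma ball_acyclic
    (hg : ∀ (z : V) (c : G.Walk z z), c.IsCycle → 2 * k + 2 ≤ c.length) (v : V) :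
    (((⊤ : G.Subgraph).induce {w | G.edist v w ≤ (k : ℕ∞)}).coe).IsAcyclic := by
  classical
  set S : Set V := {w | G.edist v w ≤ (k : ℕ∞)} with hS
  set U : G.Subgraph := (⊤ : G.Subgraph).induce S with hU
  intro z0 c hc
  set C : G.Walk (z0 : V) (z0 : V) := c.map U.hom with hCdef
  have hC : C.IsCycle := (Walk.map_isCycle_iff_of_injective Subgraph.hom_injective).mpr hc
  have hCS : ∀ u ∈ C.support, G.edist v u ≤ (k : ℕ∞) := by
    intro u hu
    have hu : u ∈ (c.map U.hom).support := hu
    rw [Walk.support_map, List.mem_map] at hu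
    obtain ⟨⟨w, hw⟩, _, rfl⟩ := hu
    exact hw
  -- choose a vertex of max level
  obtain ⟨u, hus, humax⟩ := C.support.toFinset.exists_max_image (fun w => G.edist v w)
    ⟨z0, by simp⟩
  rw [List.mem_toFinset] at hus
  have humax' : ∀ w ∈ C.support, G.edist v w ≤ G.edist v u := by
    intro w hw; exact humax w (List.mem_toFinset.mpr hw)
  -- rotate the cycle to start at u
  have hC' : (C.rotate u hus).IsCycle := hC.rotate hus
  have hC'mem : ∀ w ∈ (C.rotate u hus).support, w ∈ C.support := by
    intro w hw
    rw [Walk.mem_support_iff] at hw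
    rcases hw with rfl | hw
    · exact hus
    · have := (Walk.support_rotate C u hus).mem_iff.mp hw
      exact List.mem_of_mem_tail this
  revert hC' hC'mem
  cases hrot : C.rotate u hus with
  | nil => intro hC' _; exact hC'.not_nil Walk.nil_nil
  | @cons _ a _ hua q =>
    intro hC' hC'mem
    rw [Walk.cons_isCycle_iff] at hC'
    obtain ⟨hq, hedge⟩ := hC'
    have hqnil : ¬ q.Nil := by
      intro hnil
      exact hua.ne (hnil.eq ▸ rfl)
    obtain ⟨b, hbu, hbe⟩ := exists_last_edge q hqnil
    have hbq : b ∈ q.support := Walk.fst_mem_support_of_mem_edges q hbe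
    have haC : a ∈ C.support := hC'mem a (by simp)
    have hbC : b ∈ C.support := hC'mem b (by simp [Walk.support_cons, hbq])
    have hab : a ≠ b := by
      rintro rfl
      exact hedge (by rwa [Sym2.eq_swap] at hbe)
    -- levels
    have hdu : G.edist v u ≤ (k : ℕ∞) := hCS u hus
    have hda : G.edist v a < G.edist v u :=
      lt_of_le_of_ne (humax' a haC) (no_equal_level hg hua.symm (hCS a haC) hdu)
    have hdb : G.edist v b < G.edist v u :=
      lt_of_le_of_ne (humax' b hbC) (no_equal_level hg hbu (hCS b hbC) hdu)
    -- geodesics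
    obtain ⟨γa, hγap, hγal⟩ := exists_path_length_edist (a := v) (b := a)
      ((hCS a haC).trans_lt (by exact_mod_cast ENat.coe_lt_top k)).ne
    obtain ⟨γb, hγbp, hγbl⟩ := exists_path_length_edist (a := v) (b := b)
      ((hCS b hbC).trans_lt (by exact_mod_cast ENat.coe_lt_top k)).ne
    have humem : ∀ {e : V} {γ : G.Walk v e}, (γ.length : ℕ∞) = G.edist v e →
        G.edist v e < G.edist v u → u ∉ γ.support := by
      intro e γ hγl hlt hmem
      have h1 : G.edist v u ≤ ((γ.takeUntil u hmem).length : ℕ∞) := edist_le _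
      have h2 := γ.length_takeUntil_le hmem
      have : G.edist v u ≤ (γ.length : ℕ∞) := h1.trans (by exact_mod_cast h2)
      exact absurd (this.trans_lt (hγl ▸ hlt)) (lt_irrefl _)
    have hpa : (γa.concat hua.symm).IsPath :=
      isPath_concat hγap hua.symm (humem hγal hda)
    have hpb : (γb.concat hbu).IsPath :=
      isPath_concat hγbp hbu (humem hγbl hdb)
    -- lengths
    have hka : γa.length + 1 ≤ k := by
      have h1 : (γa.length : ℕ∞) < G.edist v u := hγal ▸ hda
      have h2 : G.edist v u ≤ (k : ℕ∞) := hdu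
      have := h1.trans_le h2
      exact_mod_cast Order.add_one_le_of_lt this
    have hkb : γb.length + 1 ≤ k := by
      have h1 : (γb.length : ℕ∞) < G.edist v u := hγbl ▸ hdb
      have := h1.trans_le hdu
      exact_mod_cast Order.add_one_le_of_lt this
    have heqp := paths_eq_of_short hg hpa hpb
      (by rw [Walk.length_concat, Walk.length_concat]; omega)
    -- derive a = b
    have hmem1 : s(a, u) ∈ (γa.concat hua.symm).edges := by
      rw [Walk.edges_concat]
      simp
    rw [heqp, Walk.edges_concat, List.concat_eq_append, List.mem_append, List.mem_singleton] at hmem1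
    rcases hmem1 with hmem1 | hmem1
    · exact humem hγbl hdb (Walk.fst_mem_support_of_mem_edges _ (Sym2.eq_swap ▸ hmem1))
    · have : a = b := by
        have := Sym2.eq_iff.mp hmem1
        rcases this with ⟨h1, _⟩ | ⟨h1, h2⟩
        · exact h1
        · exact absurd h1.symm hua.ne
      exact hab this

end main
lemma gdiam_attained {W : Type*} [Finite W] [Nonempty W] (H : SimpleGraph W) :
    ∃ x y : W, H.edist x y = gdiam H := by
  obtain ⟨⟨x, y⟩, hmax⟩ := Finite.exists_max (fun p : W × W => H.edist p.1 p.2)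
  refine ⟨x, y, le_antisymm (le_iSup₂ (f := fun a b => H.edist a b) x y) ?_⟩
  exact iSup₂_le fun a b => hmax (a, b)

lemma edist_le_gdiam {W : Type*} {H : SimpleGraph W} (x y : W) :
    H.edist x y ≤ gdiam H :=
  le_iSup₂ (f := fun a b => H.edist a b) x y

lemma aux3 {W : Type*} {H : SimpleGraph W} (hA : H.IsAcyclic) {k : ℕ}
    {v x y w z : W} {α : H.Walk v x} {β : H.Walk v y}
    (hαp : α.IsPath) (hβp : β.IsPath) (hβl : β.length = k)
    (hdisj : ∀ u, u ∈ α.support → u ∈ β.support → u = v)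
    (hdiam : gdiam H ≤ ((2 * k : ℕ) : ℕ∞))
    {r : H.Walk w z} {s : H.Walk z v} (hr : r.IsPath) (hs : s.IsPath)
    (hz : z ∈ α.support)
    (hrS : ∀ u ∈ r.support, (u ∈ α.support ∨ u ∈ β.support) → u = z)
    (hm : k + 1 ≤ r.length + s.length) : False := by
  classical
  set τ : H.Walk v z := α.takeUntil z hz with hτ
  have hτp : τ.IsPath := hαp.takeUntil hz
  have hts : τ.length = s.length := by
    have h1 : H.edist v z = (τ.length : ℕ∞) := edist_eq_length_of_path hA hτp
    have h2 : H.edist v z = (s.reverse.length : ℕ∞) :=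
      edist_eq_length_of_path hA hs.reverse
    rw [Walk.length_reverse] at h2
    exact_mod_cast h1.symm.trans h2
  have hP1 : (β.reverse.append τ).IsPath := by
    refine isPath_append hβp.reverse hτp ?_
    intro u hu1 hu2
    rw [Walk.support_reverse, List.mem_reverse] at hu1
    exact hdisj u (α.support_takeUntil_subset hz hu2) hu1
  have hP : ((β.reverse.append τ).append r.reverse).IsPath := by
    refine isPath_append hP1 hr.reverse ?_
    intro u hu1 hu2
    rw [Walk.support_reverse, List.mem_reverse] at hu2
    rw [Walk.mem_support_append_iff] at hu1
    refine hrS u hu2 ?_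
    rcases hu1 with hu1 | hu1
    · rw [Walk.support_reverse, List.mem_reverse] at hu1
      exact Or.inr hu1
    · exact Or.inl (α.support_takeUntil_subset hz hu1)
  have hPlen : ((β.reverse.append τ).append r.reverse).length
      = k + s.length + r.length := by
    rw [Walk.length_append, Walk.length_append, Walk.length_reverse,
      Walk.length_reverse, hβl, hts]
  have h1 : H.edist y w = (((β.reverse.append τ).append r.reverse).length : ℕ∞) :=
    edist_eq_length_of_path hA hP
  have h2 := (h1.symm.trans_le (edist_le_gdiam y w)).trans hdiam
  rw [hPlen] at h2
  have : k + s.length + r.length ≤ 2 * k := by exact_mod_cast h2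
  omega

lemma tree_center_bound {W : Type*} {H : SimpleGraph W} (hA : H.IsAcyclic)
    (hC : H.Connected) {k : ℕ} {v x y : W} {α : H.Walk v x} {β : H.Walk v y}
    (hαp : α.IsPath) (hβp : β.IsPath) (hαl : α.length = k) (hβl : β.length = k)
    (hdisj : ∀ u, u ∈ α.support → u ∈ β.support → u = v)
    (hdiam : gdiam H ≤ ((2 * k : ℕ) : ℕ∞)) (w : W) :
    H.edist v w ≤ (k : ℕ∞) := by
  classical
  by_contra hgt
  obtain ⟨ρ, hρp, hρl⟩ := exists_path_length_edist
    (edist_ne_top_iff_reachable.mpr (hC.preconnected v w))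
  have hρk : k + 1 ≤ ρ.length := by
    rw [not_le] at hgt
    rw [← hρl] at hgt
    exact_mod_cast Order.add_one_le_of_lt hgt
  obtain ⟨z, r, s, hzS, hrS, hlen, happ⟩ := exists_first_decomp ρ.reverse
    {u | u ∈ α.support ∨ u ∈ β.support} (Or.inl α.start_mem_support)
  have hrs : (r.append s).IsPath := by rw [happ]; exact hρp.reverse
  have hr : r.IsPath := hrs.of_append_left
  have hs : s.IsPath := hrs.of_append_right
  rw [Walk.length_reverse] at hlen
  rcases hzS with hz | hz
  · exact aux3 hA hαp hβp hβl hdisj hdiam hr hs hz hrS (by omega)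
  · refine aux3 hA hβp hαp hαl (fun u h1 h2 => hdisj u h2 h1) hdiam hr hs hz
      (fun u hu hmem => hrS u hu (Or.symm hmem)) (by omega)

end VineAux

open VineAux in
/-- In a graph with girth at least `2k+2`, every induced subgraph that is a `k`-vine is
contained in a unique maximal `k`-vine, namely the `k`-ball at its center `v`: the
`k`-ball at `v` is a `k`-vine of `G`, it contains the given `k`-vine, and every `k`-vine
of `G` containing the given `k`-vine is a subgraph of the `k`-ball at `v`. -/
theorem vine_absorbed_in_kBall {V : Type*} [Fintype V] (k : ℕ) (hk : 1 ≤ k)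
    (G : SimpleGraph V)
    (hgirth : ∀ (v : V) (c : G.Walk v v), c.IsCycle → 2 * k + 2 ≤ c.length)
    (B : G.Subgraph) (hBind : B.IsInduced) (hB : IsVine k B.coe)
    (v : V) (hv : v ∈ B.verts) (hcent : _root_.eccent B.coe ⟨v, hv⟩ = (k : ℕ∞)) :
    IsVine k (kBall G v k).coe ∧ B ≤ kBall G v k ∧
      ∀ B' : G.Subgraph, IsVine k B'.coe → B ≤ B' → B' ≤ kBall G v k := by
  classical
  set S : Set V := {w | G.edist v w ≤ (k : ℕ∞)} with hSdef
  have hUdef : kBall G v k = (⊤ : G.Subgraph).induce S := rfl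
  have hBconn : B.coe.Connected := hB.1.isConnected
  have hBacyc : B.coe.IsAcyclic := hB.1.IsAcyclic
  have heccle : ∀ w : B.verts, B.coe.edist ⟨v, hv⟩ w ≤ (k : ℕ∞) := by
    intro w
    calc B.coe.edist ⟨v, hv⟩ w ≤ _root_.eccent B.coe ⟨v, hv⟩ :=
          le_iSup (fun w => B.coe.edist ⟨v, hv⟩ w) w
      _ = (k : ℕ∞) := hcent
  have hBS : ∀ w, w ∈ B.verts → w ∈ S := fun w hw =>
    (subgraph_edist_mono ⟨v, hv⟩ ⟨w, hw⟩).trans (heccle ⟨w, hw⟩)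
  have hBle : B ≤ kBall G v k := by
    rw [hUdef]
    refine ⟨fun w hw => hBS w hw, fun a b hab => ?_⟩
    exact ⟨hBS _ (B.edge_vert hab), hBS _ (B.edge_vert hab.symm), B.adj_sub hab⟩
  have hvS : v ∈ S := by
    show G.edist v v ≤ (k : ℕ∞)
    rw [SimpleGraph.edist_self]
    exact zero_le
  have hUacyc : (kBall G v k).coe.IsAcyclic := ball_acyclic hgirth v
  have hlift : ∀ (w : V) (hw : w ∈ S),
      ∃ q : (kBall G v k).coe.Walk ⟨v, hvS⟩ ⟨w, hw⟩, (q.length : ℕ∞) ≤ (k : ℕ∞) := by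
    intro w hw
    have hwk : G.edist v w ≤ (k : ℕ∞) := hw
    obtain ⟨p, hpp, hpl⟩ := exists_path_length_edist (a := v) (b := w)
      (hwk.trans_lt (ENat.coe_lt_top k)).ne
    have hsup : ∀ u ∈ p.support, u ∈ S := by
      intro u hu
      have h1 : G.edist v u ≤ ((p.takeUntil u hu).length : ℕ∞) := edist_le _
      have h2 := p.length_takeUntil_le hu
      show G.edist v u ≤ (k : ℕ∞)
      calc G.edist v u ≤ (p.length : ℕ∞) := h1.trans (by exact_mod_cast h2)
        _ = G.edist v w := hpl
        _ ≤ (k : ℕ∞) := hwk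
    obtain ⟨q, hq⟩ := lift_walk p hvS hw hsup
    refine ⟨q, ?_⟩
    show ((q.length : ℕ) : ℕ∞) ≤ (k : ℕ∞); rw [hq, hpl]
    exact hwk
  have hUconn : (kBall G v k).coe.Connected := by
    haveI : Nonempty ↥(kBall G v k).verts := ⟨⟨v, hvS⟩⟩
    refine ⟨fun a b => ?_⟩
    obtain ⟨qa, _⟩ := hlift a a.2
    obtain ⟨qb, _⟩ := hlift b b.2
    exact ⟨qa.reverse.append qb⟩
  have : Nonempty B.verts := ⟨⟨v, hv⟩⟩
  obtain ⟨xb, yb, hxy⟩ := gdiam_attained B.coe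
  rw [hB.2] at hxy
  have h2kk : ((2 * k : ℕ) : ℕ∞) = (k : ℕ∞) + (k : ℕ∞) := by
    push_cast
    ring
  -- the center is at distance exactly k from both extremes
  have hxk : B.coe.edist ⟨v, hv⟩ xb = (k : ℕ∞) := by
    have tri : B.coe.edist xb yb ≤ B.coe.edist xb ⟨v, hv⟩ + B.coe.edist ⟨v, hv⟩ yb :=
      SimpleGraph.edist_triangle
    rw [hxy, SimpleGraph.edist_comm (u := xb)] at tri
    have h1 : ((2 * k : ℕ) : ℕ∞) ≤ B.coe.edist ⟨v, hv⟩ xb + (k : ℕ∞) :=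
      tri.trans (add_le_add_right (heccle yb) _)
    rw [h2kk] at h1
    exact le_antisymm (heccle xb)
      ((WithTop.add_le_add_iff_right (ENat.coe_ne_top k)).mp h1)
  have hyk : B.coe.edist ⟨v, hv⟩ yb = (k : ℕ∞) := by
    have tri : B.coe.edist xb yb ≤ B.coe.edist xb ⟨v, hv⟩ + B.coe.edist ⟨v, hv⟩ yb :=
      SimpleGraph.edist_triangle
    rw [hxy] at tri
    have h1 : ((2 * k : ℕ) : ℕ∞) ≤ (k : ℕ∞) + B.coe.edist ⟨v, hv⟩ yb :=
      tri.trans (add_le_add_left (by rw [SimpleGraph.edist_comm]; exact heccle xb) _)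
    rw [h2kk] at h1
    exact le_antisymm (heccle yb)
      ((WithTop.add_le_add_iff_left (ENat.coe_ne_top k)).mp h1)
  -- paths in B realizing these distances
  obtain ⟨π, hπp, hπl⟩ := exists_path_length_edist (a := xb) (b := yb)
    (by rw [hxy]; exact ENat.coe_ne_top _)
  rw [hxy] at hπl
  have hπlen : π.length = 2 * k := by exact_mod_cast hπl
  obtain ⟨α, hαp, hαl⟩ := exists_path_length_edist (a := (⟨v, hv⟩ : B.verts)) (b := xb)
    (by rw [hxk]; exact ENat.coe_ne_top _)
  rw [hxk] at hαl
  have hαlen : α.length = k := by exact_mod_cast hαl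
  obtain ⟨β, hβp, hβl⟩ := exists_path_length_edist (a := (⟨v, hv⟩ : B.verts)) (b := yb)
    (by rw [hyk]; exact ENat.coe_ne_top _)
  rw [hyk] at hβl
  have hβlen : β.length = k := by exact_mod_cast hβl
  -- the two legs meet only at the center
  have hdisj : ∀ u, u ∈ α.support → u ∈ β.support → u = (⟨v, hv⟩ : B.verts) := by
    intro u h1 h2
    by_contra hne
    have l1 := takeUntil_drop_len h1
    have l2 := takeUntil_drop_len h2
    have ht1 : 1 ≤ (α.takeUntil u h1).length := by
      rcases Nat.eq_zero_or_pos (α.takeUntil u h1).length with h0 | h0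
      · exact absurd (Walk.eq_of_length_eq_zero h0).symm hne
      · exact h0
    have hwalk : B.coe.edist xb yb ≤
        (((α.dropUntil u h1).reverse.append (β.dropUntil u h2)).length : ℕ∞) :=
      edist_le _
    rw [hxy, Walk.length_append, Walk.length_reverse] at hwalk
    have : 2 * k ≤ (α.dropUntil u h1).length + (β.dropUntil u h2).length := by
      exact_mod_cast hwalk
    omega
  -- part 1 : the ball is a k-vine
  have hUup : gdiam (kBall G v k).coe ≤ ((2 * k : ℕ) : ℕ∞) := by
    rw [gdiam, h2kk]
    refine iSup_le fun a => iSup_le fun b => ?_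
    have ha : (kBall G v k).coe.edist a ⟨v, hvS⟩ ≤ (k : ℕ∞) := by
      obtain ⟨qa, hqa⟩ := hlift a a.2
      rw [SimpleGraph.edist_comm]
      exact (edist_le qa).trans hqa
    have hb : (kBall G v k).coe.edist ⟨v, hvS⟩ b ≤ (k : ℕ∞) := by
      obtain ⟨qb, hqb⟩ := hlift b b.2
      exact (edist_le qb).trans hqb
    exact SimpleGraph.edist_triangle.trans (add_le_add ha hb)
  have hUlow : ((2 * k : ℕ) : ℕ∞) ≤ gdiam (kBall G v k).coe := by
    have hπU : (π.map (SimpleGraph.Subgraph.inclusion hBle)).IsPath :=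
      Walk.map_isPath_of_injective (Subgraph.inclusion.injective hBle) hπp
    have := edist_eq_length_of_path hUacyc hπU
    rw [Walk.length_map, hπlen] at this
    rw [← this]
    exact edist_le_gdiam _ _
  have hUvine : IsVine k (kBall G v k).coe :=
    ⟨⟨hUconn, hUacyc⟩, le_antisymm hUup hUlow⟩
  refine ⟨hUvine, hBle, ?_⟩
  -- part 3 : any k-vine containing B is inside the ball
  intro B' hB' hBB'
  have hv' : v ∈ B'.verts := hBB'.1 hv
  have hα' : (α.map (SimpleGraph.Subgraph.inclusion hBB')).IsPath :=
    Walk.map_isPath_of_injective (Subgraph.inclusion.injective hBB') hαp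
  have hβ' : (β.map (SimpleGraph.Subgraph.inclusion hBB')).IsPath :=
    Walk.map_isPath_of_injective (Subgraph.inclusion.injective hBB') hβp
  have hdisj' : ∀ u, u ∈ (α.map (SimpleGraph.Subgraph.inclusion hBB')).support →
      u ∈ (β.map (SimpleGraph.Subgraph.inclusion hBB')).support →
      u = SimpleGraph.Subgraph.inclusion hBB' ⟨v, hv⟩ := by
    intro u hu1 hu2
    rw [Walk.support_map, List.mem_map] at hu1 hu2
    obtain ⟨u1, hu1s, rfl⟩ := hu1
    obtain ⟨u2, hu2s, hu2e⟩ := hu2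
    have : u2 = u1 := Subgraph.inclusion.injective hBB' hu2e
    subst this
    rw [hdisj u2 hu1s hu2s]
  have hwb : ∀ w, w ∈ B'.verts → w ∈ S := by
    intro w hw
    have hbound := tree_center_bound hB'.1.IsAcyclic hB'.1.isConnected hα' hβ'
      (by rw [Walk.length_map]; exact hαlen) (by rw [Walk.length_map]; exact hβlen)
      hdisj' hB'.2.le (⟨w, hw⟩ : B'.verts)
    exact (subgraph_edist_mono _ _).trans hbound
  rw [hUdef]
  refine ⟨fun w hw => hwb w hw, fun a b hab => ?_⟩
  exact ⟨hwb _ (B'.edge_vert hab), hwb _ (B'.edge_vert hab.symm), B'.adj_sub hab⟩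
end

section
/- Let ℱ be a class of finite simple graphs closed under isomorphism, and let n and ℓ be positive integers with ℓ < n. Suppose G and G′ are n-vertex graphs having the same (n−ℓ)-deck, ℱ is an absorbing family for both G and G′, and m(F,G) = m(F,G′) for every F ∈ ℱ having at least n−ℓ vertices. Then m(F,G) = m(F,G′) for every F ∈ ℱ. -/
open SimpleGraph

/-- Membership of a graph `A` (up to isomorphism) in a class `ℱ` of finite graphs,
where the class is represented by choosing, for each `m`, a set of graphs on `Fin m`. -/
def MemF (ℱ : ∀ m : ℕ, Set (SimpleGraph (Fin m))) {α : Type*} (A : SimpleGraph α) : Prop :=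
  ∃ (m : ℕ) (B : SimpleGraph (Fin m)), B ∈ ℱ m ∧ Nonempty (A ≃g B)

/-- `ℱ` is an absorbing family for `G`: every `ℱ`-subgraph of `G` (an induced subgraph
belonging to `ℱ`) is an induced subgraph of a unique maximal `ℱ`-subgraph of `G`. -/
def Absorbing (ℱ : ∀ m : ℕ, Set (SimpleGraph (Fin m))) {n : ℕ}
    (G : SimpleGraph (Fin n)) : Prop :=
  ∀ S : Finset (Fin n), MemF ℱ (SimpleGraph.induce (↑S : Set (Fin n)) G) →
    ∃! T : Finset (Fin n), S ⊆ T ∧ MemF ℱ (SimpleGraph.induce (↑T : Set (Fin n)) G) ∧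
      ∀ T' : Finset (Fin n), T ⊆ T' →
        MemF ℱ (SimpleGraph.induce (↑T' : Set (Fin n)) G) → T' = T

/-- `m(F, G)`: the number of vertex subsets `S` of `G` such that the induced subgraph
`G[S]` is isomorphic to `F` and is a maximal `ℱ`-subgraph of `G`. -/
noncomputable def mCount (ℱ : ∀ m : ℕ, Set (SimpleGraph (Fin m))) {j n : ℕ}
    (F : SimpleGraph (Fin j)) (G : SimpleGraph (Fin n)) : ℕ :=
  Nat.card {S : Finset (Fin n) //
    Nonempty ((SimpleGraph.induce (↑S : Set (Fin n)) G) ≃g F) ∧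
    MemF ℱ (SimpleGraph.induce (↑S : Set (Fin n)) G) ∧
    ∀ T : Finset (Fin n), S ⊆ T →
      MemF ℱ (SimpleGraph.induce (↑T : Set (Fin n)) G) → T = S}

/-! ### Auxiliary development -/

namespace AFC

open Finset
open scoped Classical

variable (ℱ : ∀ m : ℕ, Set (SimpleGraph (Fin m))) {n : ℕ}

/-- `S` induces an `ℱ`-subgraph of `G`. -/
def IsF (G : SimpleGraph (Fin n)) (S : Finset (Fin n)) : Prop :=
  MemF ℱ (SimpleGraph.induce (↑S : Set (Fin n)) G)

/-- `S` is a maximal `ℱ`-subgraph of `G`. -/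
def IsMax (G : SimpleGraph (Fin n)) (S : Finset (Fin n)) : Prop :=
  IsF ℱ G S ∧ ∀ T : Finset (Fin n), S ⊆ T → IsF ℱ G T → T = S

/-- `G[S]` is isomorphic to `F`. -/
def IsoTo {m : ℕ} (F : SimpleGraph (Fin m)) (G : SimpleGraph (Fin n))
    (S : Finset (Fin n)) : Prop :=
  Nonempty ((SimpleGraph.induce (↑S : Set (Fin n)) G) ≃g F)

variable {ℱ}

lemma memF_congr {α β : Type*} {A : SimpleGraph α} {A' : SimpleGraph β}
    (e : A ≃g A') : MemF ℱ A ↔ MemF ℱ A' := by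
  constructor <;> rintro ⟨m, B, hB, ⟨f⟩⟩
  · exact ⟨m, B, hB, ⟨e.symm.trans f⟩⟩
  · exact ⟨m, B, hB, ⟨e.trans f⟩⟩

lemma mCount_eq_card (F : SimpleGraph (Fin 0)) : True := trivial

/-- `mCount` as a `Finset.card`. -/
lemma mCount_eq {j : ℕ} (F : SimpleGraph (Fin j)) (G : SimpleGraph (Fin n)) :
    mCount ℱ F G =
      (Finset.univ.filter (fun S : Finset (Fin n) =>
        IsoTo F G S ∧ IsMax ℱ G S)).card := by
  rw [mCount, Nat.card_eq_fintype_card, Fintype.card_subtype]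
  congr 1
  apply Finset.filter_congr
  intro S _
  unfold IsoTo IsMax IsF
  tauto

/-- cardinality from an isomorphism to a `Fin m` graph -/
lemma card_of_isoTo {m : ℕ} {F : SimpleGraph (Fin m)} {G : SimpleGraph (Fin n)}
    {S : Finset (Fin n)} (h : IsoTo F G S) : S.card = m := by
  obtain ⟨e⟩ := h
  have := Fintype.card_congr e.toEquiv
  simpa [Fintype.card_coe] using this

/-- Transport of an induced subgraph along a permutation that is a partial isomorphism. -/
def isoOfPerm {G G' : SimpleGraph (Fin n)} (σ : Equiv.Perm (Fin n))
    {S : Finset (Fin n)}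
    (hadj : ∀ x ∈ S, ∀ y ∈ S, (G'.Adj (σ x) (σ y) ↔ G.Adj x y)) :
    (SimpleGraph.induce (↑S : Set (Fin n)) G) ≃g
      (SimpleGraph.induce (↑(S.image σ) : Set (Fin n)) G') where
  toEquiv := Equiv.subtypeEquiv σ (fun a => by
    simp only [Finset.coe_image, Set.mem_image, Finset.mem_coe]
    constructor
    · intro ha; exact ⟨a, ha, rfl⟩
    · rintro ⟨b, hb, hba⟩; rwa [← σ.injective hba])
  map_rel_iff' := by
    rintro ⟨x, hx⟩ ⟨y, hy⟩
    simp only [Equiv.subtypeEquiv_apply, comap_adj, Function.Embedding.coe_subtype]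
    exact hadj x hx y hy

lemma isF_image {G G' : SimpleGraph (Fin n)} {σ : Equiv.Perm (Fin n)}
    {S : Finset (Fin n)}
    (hadj : ∀ x ∈ S, ∀ y ∈ S, (G'.Adj (σ x) (σ y) ↔ G.Adj x y)) :
    IsF ℱ G S ↔ IsF ℱ G' (S.image σ) :=
  memF_congr (isoOfPerm σ hadj)

lemma isoTo_image {m : ℕ} {F : SimpleGraph (Fin m)} {G G' : SimpleGraph (Fin n)}
    {σ : Equiv.Perm (Fin n)} {S : Finset (Fin n)}
    (hadj : ∀ x ∈ S, ∀ y ∈ S, (G'.Adj (σ x) (σ y) ↔ G.Adj x y)) :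
    IsoTo F G S ↔ IsoTo F G' (S.image σ) := by
  constructor <;> rintro ⟨e⟩
  · exact ⟨(isoOfPerm σ hadj).symm.trans e⟩
  · exact ⟨(isoOfPerm σ hadj).trans e⟩

/-- Extend an isomorphism between induced subgraphs to a global permutation. -/
lemma exists_perm_extend {G G' : SimpleGraph (Fin n)} {A A' : Finset (Fin n)}
    (e : (SimpleGraph.induce (↑A : Set (Fin n)) G) ≃g
         (SimpleGraph.induce (↑A' : Set (Fin n)) G')) :
    ∃ σ : Equiv.Perm (Fin n), A.image σ = A' ∧
      ∀ x ∈ A, ∀ y ∈ A, (G'.Adj (σ x) (σ y) ↔ G.Adj x y) := by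
  have hcard : A.card = A'.card := by
    have := Fintype.card_congr e.toEquiv
    simpa [Fintype.card_coe] using this
  let e₁ : {x : Fin n // x ∈ A} ≃ {x : Fin n // x ∈ A'} :=
    (Equiv.subtypeEquivRight (fun x => by simp)).trans <|
      e.toEquiv.trans (Equiv.subtypeEquivRight (fun x => by simp))
  have hc : Fintype.card {x : Fin n // ¬ x ∈ A} = Fintype.card {x : Fin n // ¬ x ∈ A'} := by
    rw [Fintype.card_subtype_compl, Fintype.card_subtype_compl]
    simp [Fintype.card_coe, Fintype.card_subtype, hcard]
  let e₂ : {x : Fin n // ¬ x ∈ A} ≃ {x : Fin n // ¬ x ∈ A'} := Fintype.equivOfCardEq hc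
  set σ : Equiv.Perm (Fin n) := (Equiv.sumCompl (· ∈ A)).symm.trans ((e₁.sumCongr e₂).trans
      (Equiv.sumCompl (· ∈ A'))) with hσdef
  have hσ : ∀ x (hx : x ∈ A), σ x = ↑(e₁ ⟨x, hx⟩) := by
    intro x hx
    show (Equiv.sumCompl (· ∈ A')) ((e₁.sumCongr e₂) ((Equiv.sumCompl (· ∈ A)).symm x)) = _
    rw [Equiv.sumCompl_symm_apply_of_pos hx]
    rfl
  have he₁ : ∀ x (hx : x ∈ A), (↑(e₁ ⟨x, hx⟩) : Fin n) = ↑(e ⟨x, by simpa using hx⟩) := by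
    intro x hx; rfl
  refine ⟨σ, ?_, ?_⟩
  · apply Finset.eq_of_subset_of_card_le
    · intro y hy
      obtain ⟨x, hx, rfl⟩ := Finset.mem_image.mp hy
      rw [hσ x hx]
      exact (e₁ ⟨x, hx⟩).2
    · rw [Finset.card_image_of_injective _ σ.injective, hcard]
  · intro x hx y hy
    rw [hσ x hx, hσ y hy, he₁ x hx, he₁ y hy]
    exact e.map_adj_iff


/-! ### image algebra -/

lemma image_symm_image (σ : Equiv.Perm (Fin n)) (S : Finset (Fin n)) :
    (S.image σ).image σ.symm = S := by
  rw [Finset.image_image]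
  simp

lemma image_subset_iff_perm (σ : Equiv.Perm (Fin n)) {S W : Finset (Fin n)} :
    S.image σ ⊆ W.image σ ↔ S ⊆ W :=
  Finset.image_subset_image_iff σ.injective

lemma hadj_mono {G G' : SimpleGraph (Fin n)} {σ : Equiv.Perm (Fin n)}
    {S s : Finset (Fin n)} (hSs : S ⊆ s)
    (hadj : ∀ x ∈ s, ∀ y ∈ s, (G'.Adj (σ x) (σ y) ↔ G.Adj x y)) :
    ∀ x ∈ S, ∀ y ∈ S, (G'.Adj (σ x) (σ y) ↔ G.Adj x y) :=
  fun x hx y hy => hadj x (hSs hx) y (hSs hy)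

lemma hadj_symm {G G' : SimpleGraph (Fin n)} {σ : Equiv.Perm (Fin n)}
    {s : Finset (Fin n)}
    (hadj : ∀ x ∈ s, ∀ y ∈ s, (G'.Adj (σ x) (σ y) ↔ G.Adj x y)) :
    ∀ x ∈ s.image σ, ∀ y ∈ s.image σ,
      (G.Adj (σ.symm x) (σ.symm y) ↔ G'.Adj x y) := by
  intro x hx y hy
  obtain ⟨a, ha, rfl⟩ := Finset.mem_image.mp hx
  obtain ⟨b, hb, rfl⟩ := Finset.mem_image.mp hy
  simp only [Equiv.symm_apply_apply]
  exact (hadj a ha b hb).symm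

/-! ### hulls -/

variable {G : SimpleGraph (Fin n)}

lemma hull_spec (habs : Absorbing ℱ G) {S : Finset (Fin n)} (hS : IsF ℱ G S) :
    ∃ T : Finset (Fin n),
      (S ⊆ T ∧ IsMax ℱ G T ∧ ∀ S', S ⊆ S' → IsF ℱ G S' → S' ⊆ T) ∧
      ∀ T₁, S ⊆ T₁ → IsMax ℱ G T₁ → T₁ = T := by
  obtain ⟨T, ⟨hST, hTF, hTmax⟩, huniq⟩ := habs S hS
  refine ⟨T, ⟨hST, ⟨hTF, fun T' h h' => hTmax T' h h'⟩, ?_⟩, ?_⟩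
  · intro S' hSS' hS'
    obtain ⟨T', ⟨h1, h2, h3⟩, _⟩ := habs S' hS'
    have : T' = T := huniq T' ⟨hSS'.trans h1, h2, h3⟩
    exact this ▸ (h1.trans subset_rfl)
  · intro T₁ hST₁ ⟨h1, h2⟩
    exact huniq T₁ ⟨hST₁, h1, fun T' h h' => h2 T' h h'⟩

noncomputable def hull (habs : Absorbing ℱ G) (S : Finset (Fin n)) : Finset (Fin n) :=
  if h : IsF ℱ G S then (hull_spec habs h).choose else ∅

lemma subset_hull (habs : Absorbing ℱ G) {S : Finset (Fin n)} (hS : IsF ℱ G S) :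
    S ⊆ hull habs S := by
  rw [hull, dif_pos hS]; exact (hull_spec habs hS).choose_spec.1.1

lemma isMax_hull (habs : Absorbing ℱ G) {S : Finset (Fin n)} (hS : IsF ℱ G S) :
    IsMax ℱ G (hull habs S) := by
  rw [hull, dif_pos hS]; exact (hull_spec habs hS).choose_spec.1.2.1

lemma subset_hull_of_isF (habs : Absorbing ℱ G) {S S' : Finset (Fin n)} (hS : IsF ℱ G S)
    (hSS' : S ⊆ S') (hS' : IsF ℱ G S') : S' ⊆ hull habs S := by
  rw [hull, dif_pos hS]; exact (hull_spec habs hS).choose_spec.1.2.2 S' hSS' hS'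

lemma hull_eq (habs : Absorbing ℱ G) {S T : Finset (Fin n)} (hS : IsF ℱ G S)
    (hST : S ⊆ T) (hT : IsMax ℱ G T) : hull habs S = T := by
  rw [hull, dif_pos hS]
  exact ((hull_spec habs hS).choose_spec.2 T hST hT).symm


/-! ### pair counting -/

variable (ℱ)

/-- `S` is maximal among `ℱ`-subsets of `s`. -/
def maxin (G : SimpleGraph (Fin n)) (s S : Finset (Fin n)) : Prop :=
  ∀ S', S ⊆ S' → S' ⊆ s → IsF ℱ G S' → S' = S

/-- number of `k`-cards in which `S` is maximal -/
noncomputable def cCount (G : SimpleGraph (Fin n)) (k : ℕ) (S : Finset (Fin n)) : ℕ :=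
  (Finset.univ.filter (fun s : Finset (Fin n) =>
    s.card = k ∧ S ⊆ s ∧ maxin ℱ G s S)).card

/-- total count over cards of maximal-in-card `ℱ`-subsets isomorphic to `F` -/
noncomputable def Npairs {m : ℕ} (F : SimpleGraph (Fin m)) (G : SimpleGraph (Fin n))
    (k : ℕ) : ℕ :=
  ∑ s ∈ Finset.univ.filter (fun s : Finset (Fin n) => s.card = k),
    (Finset.univ.filter (fun S : Finset (Fin n) =>
      S ⊆ s ∧ IsoTo F G S ∧ IsF ℱ G S ∧ maxin ℱ G s S)).card

variable {ℱ}

lemma maxin_image {G G' : SimpleGraph (Fin n)} {σ : Equiv.Perm (Fin n)}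
    {s S : Finset (Fin n)}
    (hadj : ∀ x ∈ s, ∀ y ∈ s, (G'.Adj (σ x) (σ y) ↔ G.Adj x y))
    (h : maxin ℱ G s S) : maxin ℱ G' (s.image σ) (S.image σ) := by
  intro S'' h1 h2 hF
  have hadj'' := hadj_mono h2 (hadj_symm hadj)
  have hS' : IsF ℱ G (S''.image σ.symm) := (isF_image hadj'').mp hF
  have hsub : S ⊆ S''.image σ.symm := by
    have := Finset.image_subset_image (f := σ.symm) h1
    rwa [image_symm_image] at this
  have hsub2 : S''.image σ.symm ⊆ s := by
    have := Finset.image_subset_image (f := σ.symm) h2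
    rwa [image_symm_image] at this
  have := h _ hsub hsub2 hS'
  have h4 : (S''.image σ.symm).image σ = S''  := by
    rw [Finset.image_image]; simp
  rw [← h4, this]

/-- transported inner count for Lemma A -/
lemma inner_card_eq {m : ℕ} {F : SimpleGraph (Fin m)} {G G' : SimpleGraph (Fin n)}
    {σ : Equiv.Perm (Fin n)} {s : Finset (Fin n)}
    (hadj : ∀ x ∈ s, ∀ y ∈ s, (G'.Adj (σ x) (σ y) ↔ G.Adj x y)) :
    (Finset.univ.filter (fun S : Finset (Fin n) =>
      S ⊆ s ∧ IsoTo F G S ∧ IsF ℱ G S ∧ maxin ℱ G s S)).card =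
    (Finset.univ.filter (fun S : Finset (Fin n) =>
      S ⊆ s.image σ ∧ IsoTo F G' S ∧ IsF ℱ G' S ∧ maxin ℱ G' (s.image σ) S)).card := by
  refine Finset.card_bij' (fun S _ => S.image σ) (fun S _ => S.image σ.symm)
    ?hi ?hj ?left ?right
  case hi =>
    intro S hS
    simp only [Finset.mem_filter, Finset.mem_univ, true_and] at hS ⊢
    obtain ⟨h1, h2, h3, h4⟩ := hS
    exact ⟨Finset.image_subset_image h1, (isoTo_image (hadj_mono h1 hadj)).mp h2,
      (isF_image (hadj_mono h1 hadj)).mp h3, maxin_image hadj h4⟩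
  case hj =>
    intro S hS
    simp only [Finset.mem_filter, Finset.mem_univ, true_and] at hS ⊢
    obtain ⟨h1, h2, h3, h4⟩ := hS
    have hadj' := hadj_symm hadj
    have h1' : S.image σ.symm ⊆ s := by
      have := Finset.image_subset_image (f := σ.symm) h1
      rwa [image_symm_image] at this
    refine ⟨h1', (isoTo_image (hadj_mono h1 hadj')).mp h2,
      (isF_image (hadj_mono h1 hadj')).mp h3, ?_⟩
    have := maxin_image (σ := σ.symm) hadj' h4
    rwa [image_symm_image] at this
  case left => intro S _; exact image_symm_image σ S
  case right =>
    intro S _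
    show (S.image σ.symm).image σ = S
    rw [Finset.image_image]; simp

/-- transported inner count, for an isomorphism of cards -/
lemma inner_card_eq' {m : ℕ} {F : SimpleGraph (Fin m)} {G G' : SimpleGraph (Fin n)}
    {s t : Finset (Fin n)}
    (e : (SimpleGraph.induce (↑s : Set (Fin n)) G) ≃g
         (SimpleGraph.induce (↑t : Set (Fin n)) G')) :
    (Finset.univ.filter (fun S : Finset (Fin n) =>
      S ⊆ s ∧ IsoTo F G S ∧ IsF ℱ G S ∧ maxin ℱ G s S)).card =
    (Finset.univ.filter (fun S : Finset (Fin n) =>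
      S ⊆ t ∧ IsoTo F G' S ∧ IsF ℱ G' S ∧ maxin ℱ G' t S)).card := by
  obtain ⟨σ, hσ1, hσ2⟩ := exists_perm_extend e
  rw [← hσ1]
  exact inner_card_eq hσ2

/-- Lemma A: deck invariance of the pair count. -/
lemma npairs_deck {m : ℕ} {F : SimpleGraph (Fin m)} {G G' : SimpleGraph (Fin n)} {k : ℕ}
    (hdeck : SameDeck G G' k) : Npairs ℱ F G k = Npairs ℱ F G' k := by
  obtain ⟨φ, hφ⟩ := hdeck
  rw [Npairs, Npairs]
  refine Finset.sum_bij' (fun s hs => (φ ⟨s, by simpa using hs⟩ : _).1)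
    (fun s hs => (φ.symm ⟨s, by simpa using hs⟩ : _).1) ?hi ?hj ?left ?right ?h
  case hi =>
    intro s hs
    simpa using (φ ⟨s, by simpa using hs⟩).2
  case hj =>
    intro s hs
    simpa using (φ.symm ⟨s, by simpa using hs⟩).2
  case left =>
    intro s hs
    exact congrArg Subtype.val (φ.symm_apply_apply ⟨s, by simpa using hs⟩)
  case right =>
    intro s hs
    exact congrArg Subtype.val (φ.apply_symm_apply ⟨s, by simpa using hs⟩)
  case h =>
    intro s hs
    exact inner_card_eq' (Nonempty.some (hφ ⟨s, by simpa using hs⟩))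


/-- Lemma B: swap the order of summation. -/
lemma npairs_swap {m : ℕ} {F : SimpleGraph (Fin m)} {G : SimpleGraph (Fin n)} {k : ℕ} :
    Npairs ℱ F G k =
      ∑ S ∈ Finset.univ.filter (fun S => IsoTo F G S ∧ IsF ℱ G S), cCount ℱ G k S := by
  have h1 : Npairs ℱ F G k = ∑ s : Finset (Fin n), ∑ S : Finset (Fin n),
      if s.card = k ∧ S ⊆ s ∧ IsoTo F G S ∧ IsF ℱ G S ∧ maxin ℱ G s S then 1 else 0 := by
    rw [Npairs, Finset.sum_filter]
    apply Finset.sum_congr rfl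
    intro s _
    by_cases h : s.card = k
    · rw [if_pos h, Finset.card_filter]
      apply Finset.sum_congr rfl
      intro S _
      by_cases h2 : S ⊆ s ∧ IsoTo F G S ∧ IsF ℱ G S ∧ maxin ℱ G s S
      · rw [if_pos h2, if_pos ⟨h, h2⟩]
      · rw [if_neg h2, if_neg (by tauto)]
    · rw [if_neg h]; symm; apply Finset.sum_eq_zero; intro S _; rw [if_neg (by tauto)]
  rw [h1, Finset.sum_comm, Finset.sum_filter]
  apply Finset.sum_congr rfl
  intro S _
  by_cases h : IsoTo F G S ∧ IsF ℱ G S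
  · rw [if_pos h, cCount, Finset.card_filter]
    apply Finset.sum_congr rfl
    intro s _
    refine if_congr ?_ rfl rfl
    tauto
  · rw [if_neg h]; apply Finset.sum_eq_zero; intro s _; rw [if_neg (by tauto)]

/-- existence of permutation mapping a finset to another of the same size -/
lemma exists_perm_image {A A' : Finset (Fin n)} (h : A.card = A'.card) :
    ∃ σ : Equiv.Perm (Fin n), A.image σ = A' := by
  obtain ⟨σ, hσ, -⟩ :=
    exists_perm_extend (G := (⊥ : SimpleGraph (Fin n))) (G' := (⊥ : SimpleGraph (Fin n)))
      (A := A) (A' := A')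
      ⟨Fintype.equivOfCardEq (by simp [Fintype.card_coe, h]), by simp⟩
  exact ⟨σ, hσ⟩

/-- the number of `k`-sets containing a fixed set depends only on its size -/
lemma supcount_card {k : ℕ} {S₁ S₂ : Finset (Fin n)} (h : S₁.card = S₂.card) :
    (Finset.univ.filter (fun s : Finset (Fin n) => s.card = k ∧ S₁ ⊆ s)).card =
    (Finset.univ.filter (fun s : Finset (Fin n) => s.card = k ∧ S₂ ⊆ s)).card := by
  obtain ⟨σ, hσ⟩ := exists_perm_image h
  refine Finset.card_bij' (fun s _ => s.image σ) (fun s _ => s.image σ.symm)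
    ?hi ?hj ?left ?right
  case hi =>
    intro s hs
    simp only [Finset.mem_filter, Finset.mem_univ, true_and] at hs ⊢
    refine ⟨by rw [Finset.card_image_of_injective _ σ.injective]; exact hs.1, ?_⟩
    rw [← hσ]
    exact Finset.image_subset_image hs.2
  case hj =>
    intro s hs
    simp only [Finset.mem_filter, Finset.mem_univ, true_and] at hs ⊢
    refine ⟨by rw [Finset.card_image_of_injective _ σ.symm.injective]; exact hs.1, ?_⟩
    have := Finset.image_subset_image (f := σ.symm) hs.2
    rwa [← hσ, image_symm_image] at this
  case left => intro s _; exact image_symm_image σ s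
  case right =>
    intro s _
    show (s.image σ.symm).image σ = s
    rw [Finset.image_image]; simp

/-- for a maximal set, every containing card works -/
lemma cCount_of_max {G : SimpleGraph (Fin n)} {k : ℕ} {S : Finset (Fin n)}
    (hmax : IsMax ℱ G S) :
    cCount ℱ G k S =
      (Finset.univ.filter (fun s : Finset (Fin n) => s.card = k ∧ S ⊆ s)).card := by
  rw [cCount]
  congr 1
  apply Finset.filter_congr
  intro s _
  constructor
  · rintro ⟨h1, h2, -⟩; exact ⟨h1, h2⟩
  · rintro ⟨h1, h2⟩
    exact ⟨h1, h2, fun S' hS' _ hF => hmax.2 S' hS' hF⟩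


variable (ℱ)

/-- contribution to the non-maximal part coming from one maximal set `T` -/
noncomputable def gSum {m : ℕ} (F : SimpleGraph (Fin m)) (G : SimpleGraph (Fin n))
    (k : ℕ) (T : Finset (Fin n)) : ℕ :=
  ∑ S ∈ Finset.univ.filter (fun S : Finset (Fin n) =>
      S ⊂ T ∧ IsoTo F G S ∧ IsF ℱ G S), cCount ℱ G k S

variable {ℱ}

/-- Lemma D2: group the non-maximal part by hulls. -/
lemma nonmax_fiberwise {m : ℕ} {F : SimpleGraph (Fin m)} {G : SimpleGraph (Fin n)}
    (habs : Absorbing ℱ G) (k : ℕ) :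
    ∑ S ∈ (Finset.univ.filter (fun S => IsoTo F G S ∧ IsF ℱ G S)).filter
        (fun S => ¬ IsMax ℱ G S), cCount ℱ G k S =
    ∑ T ∈ Finset.univ.filter (fun T => IsMax ℱ G T), gSum ℱ F G k T := by
  rw [← Finset.sum_fiberwise_of_maps_to (g := fun S => hull habs S)
    (t := Finset.univ.filter (fun T => IsMax ℱ G T))
    (fun S hS => by
      simp only [Finset.mem_filter, Finset.mem_univ, true_and] at hS ⊢
      exact isMax_hull habs hS.1.2)]
  apply Finset.sum_congr rfl
  intro T hT
  simp only [Finset.mem_filter, Finset.mem_univ, true_and] at hT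
  rw [gSum]
  apply Finset.sum_congr _ (fun _ _ => rfl)
  ext S
  simp only [Finset.mem_filter, Finset.mem_univ, true_and]
  constructor
  · rintro ⟨⟨⟨hiso, hF⟩, hnmax⟩, hhull⟩
    have hsub : S ⊆ T := hhull ▸ subset_hull habs hF
    refine ⟨⟨hsub, ?_⟩, hiso, hF⟩
    intro hTS
    rw [subset_antisymm hsub hTS] at hnmax
    exact hnmax hT
  · rintro ⟨hsub, hiso, hF⟩
    refine ⟨⟨⟨hiso, hF⟩, ?_⟩, hull_eq habs hF hsub.subset hT⟩
    intro hmax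
    exact hsub.ne (hmax.2 T hsub.subset hT.1).symm

/-- one-directional transport of `maxin` when all `ℱ`-supersets stay inside a
maximal set `T` on which the permutation is a partial isomorphism. -/
lemma maxin_image_hull {G G' : SimpleGraph (Fin n)} (habs' : Absorbing ℱ G')
    {σ : Equiv.Perm (Fin n)} {T S s : Finset (Fin n)}
    (hadj : ∀ x ∈ T, ∀ y ∈ T, (G'.Adj (σ x) (σ y) ↔ G.Adj x y))
    (hST : S ⊆ T) (hS : IsF ℱ G S) (hT' : IsMax ℱ G' (T.image σ))
    (h : maxin ℱ G s S) : maxin ℱ G' (s.image σ) (S.image σ) := by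
  have hSF' : IsF ℱ G' (S.image σ) := (isF_image (hadj_mono hST hadj)).mp hS
  intro S'' h1 h2 hF''
  -- S'' is contained in the hull of `S.image σ`, which is `T.image σ`
  have hhull : hull habs' (S.image σ) = T.image σ :=
    hull_eq habs' hSF' (Finset.image_subset_image hST) hT'
  have hS''T : S'' ⊆ T.image σ := by
    rw [← hhull]
    exact subset_hull_of_isF habs' hSF' h1 hF''
  -- pull back
  have hadjT := hadj_symm hadj
  have hS' : IsF ℱ G (S''.image σ.symm) :=
    (isF_image (hadj_mono hS''T hadjT)).mp hF''
  have hsub : S ⊆ S''.image σ.symm := by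
    have := Finset.image_subset_image (f := σ.symm) h1
    rwa [image_symm_image] at this
  have hsub2 : S''.image σ.symm ⊆ s := by
    have := Finset.image_subset_image (f := σ.symm) h2
    rwa [image_symm_image] at this
  have heq := h _ hsub hsub2 hS'
  have h4 : (S''.image σ.symm).image σ = S'' := by
    rw [Finset.image_image]; simp
  rw [← h4, heq]

/-- Lemma D3: `cCount` is transported along a partial isomorphism of hulls. -/
lemma cCount_image {G G' : SimpleGraph (Fin n)} (habs : Absorbing ℱ G)
    (habs' : Absorbing ℱ G') {σ : Equiv.Perm (Fin n)} {T S : Finset (Fin n)}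
    (hadj : ∀ x ∈ T, ∀ y ∈ T, (G'.Adj (σ x) (σ y) ↔ G.Adj x y))
    (hT : IsMax ℱ G T) (hT' : IsMax ℱ G' (T.image σ))
    (hST : S ⊆ T) (hS : IsF ℱ G S) (k : ℕ) :
    cCount ℱ G k S = cCount ℱ G' k (S.image σ) := by
  rw [cCount, cCount]
  refine Finset.card_bij' (fun s _ => s.image σ) (fun s _ => s.image σ.symm)
    ?hi ?hj ?left ?right
  case hi =>
    intro s hs
    simp only [Finset.mem_filter, Finset.mem_univ, true_and] at hs ⊢
    obtain ⟨h1, h2, h3⟩ := hs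
    exact ⟨by rw [Finset.card_image_of_injective _ σ.injective, h1],
      Finset.image_subset_image h2, maxin_image_hull habs' hadj hST hS hT' h3⟩
  case hj =>
    intro s hs
    simp only [Finset.mem_filter, Finset.mem_univ, true_and] at hs ⊢
    obtain ⟨h1, h2, h3⟩ := hs
    have hadjT := hadj_symm hadj
    have hST' : S.image σ ⊆ T.image σ := Finset.image_subset_image hST
    have hSF' : IsF ℱ G' (S.image σ) := (isF_image (hadj_mono hST hadj)).mp hS
    have hT'' : IsMax ℱ G ((T.image σ).image σ.symm) := by
      rwa [image_symm_image]
    refine ⟨by rw [Finset.card_image_of_injective _ σ.symm.injective, h1], ?_, ?_⟩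
    · have := Finset.image_subset_image (f := σ.symm) h2
      rwa [image_symm_image] at this
    · have := maxin_image_hull (σ := σ.symm) habs hadjT hST' hSF' hT'' h3
      rwa [image_symm_image] at this
  case left => intro s _; exact image_symm_image σ s
  case right =>
    intro s _
    show (s.image σ.symm).image σ = s
    rw [Finset.image_image]; simp

/-- Lemma D4: `gSum` is transported along a partial isomorphism of maximal sets. -/
lemma gSum_image {m : ℕ} {F : SimpleGraph (Fin m)} {G G' : SimpleGraph (Fin n)}
    (habs : Absorbing ℱ G) (habs' : Absorbing ℱ G') {σ : Equiv.Perm (Fin n)}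
    {T : Finset (Fin n)}
    (hadj : ∀ x ∈ T, ∀ y ∈ T, (G'.Adj (σ x) (σ y) ↔ G.Adj x y))
    (hT : IsMax ℱ G T) (hT' : IsMax ℱ G' (T.image σ)) (k : ℕ) :
    gSum ℱ F G k T = gSum ℱ F G' k (T.image σ) := by
  rw [gSum, gSum]
  refine Finset.sum_bij' (fun S _ => S.image σ) (fun S _ => S.image σ.symm)
    ?hi ?hj ?left ?right ?h
  case hi =>
    intro S hS
    simp only [Finset.mem_filter, Finset.mem_univ, true_and] at hS ⊢
    obtain ⟨h1, h2, h3⟩ := hS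
    refine ⟨?_, (isoTo_image (hadj_mono h1.subset hadj)).mp h2,
      (isF_image (hadj_mono h1.subset hadj)).mp h3⟩
    constructor
    · exact Finset.image_subset_image h1.subset
    · intro hcon
      have := Finset.image_subset_image (f := σ.symm) hcon
      rw [image_symm_image, image_symm_image] at this
      exact h1.not_subset this
  case hj =>
    intro S hS
    simp only [Finset.mem_filter, Finset.mem_univ, true_and] at hS ⊢
    obtain ⟨h1, h2, h3⟩ := hS
    have hadjT := hadj_symm hadj
    have hsub : S.image σ.symm ⊆ T := by
      have := Finset.image_subset_image (f := σ.symm) h1.subset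
      rwa [image_symm_image] at this
    refine ⟨?_, (isoTo_image (hadj_mono h1.subset hadjT)).mp h2,
      (isF_image (hadj_mono h1.subset hadjT)).mp h3⟩
    constructor
    · exact hsub
    · intro hcon
      have := Finset.image_subset_image (f := σ) hcon
      have h4 : (S.image σ.symm).image σ = S := by rw [Finset.image_image]; simp
      rw [h4] at this
      exact h1.not_subset this
  case left => intro S _; exact image_symm_image σ S
  case right =>
    intro S _
    show (S.image σ.symm).image σ = S
    rw [Finset.image_image]; simp
  case h =>
    intro S hS
    simp only [Finset.mem_filter, Finset.mem_univ, true_and] at hS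
    exact cCount_image habs habs' hadj hT hT' hS.1.subset hS.2.2 k


/-! ### canonical codes for isomorphism classes -/

/-- an injective encoding of graphs on `Fin q` by natural numbers -/
noncomputable def enc (q : ℕ) (B : SimpleGraph (Fin q)) : ℕ :=
  (Fintype.equivFin (Finset (Fin q × Fin q))
    (Finset.univ.filter (fun p : Fin q × Fin q => B.Adj p.1 p.2))).val

lemma enc_inj (q : ℕ) {B B' : SimpleGraph (Fin q)} (h : enc q B = enc q B') :
    B = B' := by
  have h2 := (Fintype.equivFin (Finset (Fin q × Fin q))).injective (Fin.val_injective h)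
  ext x y
  have := Finset.ext_iff.mp h2 (x, y)
  simpa using this

variable (ℱ)

/-- canonical code of the isomorphism class (within `ℱ q`) of a graph -/
noncomputable def code (q : ℕ) {α : Type*} (H : SimpleGraph α) : ℕ :=
  sInf {c : ℕ | ∃ B : SimpleGraph (Fin q), B ∈ ℱ q ∧ Nonempty (H ≃g B) ∧ enc q B = c}

variable {ℱ}

lemma code_congr {q : ℕ} {α β : Type*} {H : SimpleGraph α} {H' : SimpleGraph β}
    (e : Nonempty (H ≃g H')) : code ℱ q H = code ℱ q H' := by
  obtain ⟨e⟩ := e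
  unfold code
  congr 1
  ext c
  constructor <;> rintro ⟨B, hB, ⟨f⟩, hc⟩
  · exact ⟨B, hB, ⟨e.symm.trans f⟩, hc⟩
  · exact ⟨B, hB, ⟨e.trans f⟩, hc⟩

/-- every `ℱ`-set has a representative in `ℱ` on `Fin q` for `q` its size -/
lemma classSet_nonempty
    (hiso : ∀ (m m' : ℕ) (B : SimpleGraph (Fin m)) (B' : SimpleGraph (Fin m')),
      B ∈ ℱ m → Nonempty (B ≃g B') → B' ∈ ℱ m')
    {G : SimpleGraph (Fin n)} {T : Finset (Fin n)} (hT : IsF ℱ G T)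
    {q : ℕ} (hq : T.card = q) :
    ∃ B : SimpleGraph (Fin q), B ∈ ℱ q ∧
      Nonempty ((SimpleGraph.induce (↑T : Set (Fin n)) G) ≃g B) := by
  obtain ⟨m', B₀, hB₀, ⟨f⟩⟩ := hT
  have hm' : m' = q := by
    have h3 : T.card = m' := card_of_isoTo ⟨f⟩
    omega
  subst hm'
  exact ⟨B₀, hB₀, ⟨f⟩⟩

/-- the canonical code is attained by a representative -/
lemma code_mem
    (hiso : ∀ (m m' : ℕ) (B : SimpleGraph (Fin m)) (B' : SimpleGraph (Fin m')),
      B ∈ ℱ m → Nonempty (B ≃g B') → B' ∈ ℱ m')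
    {G : SimpleGraph (Fin n)} {T : Finset (Fin n)} (hT : IsF ℱ G T)
    {q : ℕ} (hq : T.card = q) :
    ∃ B : SimpleGraph (Fin q), B ∈ ℱ q ∧
      Nonempty ((SimpleGraph.induce (↑T : Set (Fin n)) G) ≃g B) ∧
      enc q B = code ℱ q (SimpleGraph.induce (↑T : Set (Fin n)) G) := by
  obtain ⟨B, hB, hiso'⟩ := classSet_nonempty hiso hT hq
  have hne : {c : ℕ | ∃ B : SimpleGraph (Fin q), B ∈ ℱ q ∧
      Nonempty ((SimpleGraph.induce (↑T : Set (Fin n)) G) ≃g B) ∧ enc q B = c}.Nonempty :=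
    ⟨enc q B, B, hB, hiso', rfl⟩
  obtain ⟨B', hB', h1, h2⟩ := Nat.sInf_mem hne
  exact ⟨B', hB', h1, h2⟩

/-- two `ℱ`-sets of the same size and code are isomorphic -/
lemma class_iso_of_code_eq
    (hiso : ∀ (m m' : ℕ) (B : SimpleGraph (Fin m)) (B' : SimpleGraph (Fin m')),
      B ∈ ℱ m → Nonempty (B ≃g B') → B' ∈ ℱ m')
    {G₁ G₂ : SimpleGraph (Fin n)} {T₁ T₂ : Finset (Fin n)}
    (h₁ : IsF ℱ G₁ T₁) (h₂ : IsF ℱ G₂ T₂) (hcard : T₁.card = T₂.card)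
    (hcode : code ℱ T₁.card (SimpleGraph.induce (↑T₁ : Set (Fin n)) G₁) =
             code ℱ T₂.card (SimpleGraph.induce (↑T₂ : Set (Fin n)) G₂)) :
    Nonempty ((SimpleGraph.induce (↑T₁ : Set (Fin n)) G₁) ≃g
              (SimpleGraph.induce (↑T₂ : Set (Fin n)) G₂)) := by
  set q := T₂.card
  obtain ⟨B₁, hB₁, ⟨f₁⟩, he₁⟩ := code_mem hiso h₁ hcard
  obtain ⟨B₂, hB₂, ⟨f₂⟩, he₂⟩ := code_mem hiso h₂ rfl
  rw [hcard] at hcode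
  rw [hcode, ← he₂] at he₁
  have : B₁ = B₂ := enc_inj q he₁
  subst this
  exact ⟨f₁.trans f₂.symm⟩

/-- `gSum` only depends on the isomorphism class of the maximal set -/
lemma gSum_eq_of_iso {m : ℕ} {F : SimpleGraph (Fin m)} {G₁ G₂ : SimpleGraph (Fin n)}
    (habs₁ : Absorbing ℱ G₁) (habs₂ : Absorbing ℱ G₂) {T₁ T₂ : Finset (Fin n)}
    (hT₁ : IsMax ℱ G₁ T₁) (hT₂ : IsMax ℱ G₂ T₂)
    (e : Nonempty ((SimpleGraph.induce (↑T₁ : Set (Fin n)) G₁) ≃g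
                   (SimpleGraph.induce (↑T₂ : Set (Fin n)) G₂))) (k : ℕ) :
    gSum ℱ F G₁ k T₁ = gSum ℱ F G₂ k T₂ := by
  obtain ⟨σ, hσ1, hσ2⟩ := exists_perm_extend e.some
  have := gSum_image (F := F) habs₁ habs₂ hσ2 hT₁ (by rwa [hσ1]) k
  rwa [hσ1] at this

/-- `gSum` vanishes on small maximal sets -/
lemma gSum_eq_zero {m : ℕ} {F : SimpleGraph (Fin m)} {G : SimpleGraph (Fin n)}
    {T : Finset (Fin n)} (h : T.card ≤ m) (k : ℕ) : gSum ℱ F G k T = 0 := by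
  rw [gSum]
  apply Finset.sum_eq_zero
  intro S hS
  simp only [Finset.mem_filter, Finset.mem_univ, true_and] at hS
  obtain ⟨h1, h2, -⟩ := hS
  have := Finset.card_lt_card h1
  rw [card_of_isoTo h2] at this
  omega


/-- Abstract pairing lemma: two finite families partitioned into classes by
classifiers, with matching class sizes and class-constant weights, have equal sums. -/
lemma pair_sum {ι κ γ : Type*} [DecidableEq ι] [DecidableEq κ] [DecidableEq γ] :
    ∀ (N : ℕ) (A : Finset ι) (B : Finset κ) (g : ι → ℕ) (h : κ → ℕ)
      (cA : ι → γ) (cB : κ → γ), A.card ≤ N →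
    (∀ a ∈ A, (A.filter (fun x => cA x = cA a)).card =
              (B.filter (fun x => cB x = cA a)).card) →
    (∀ b ∈ B, (A.filter (fun x => cA x = cB b)).card =
              (B.filter (fun x => cB x = cB b)).card) →
    (∀ a ∈ A, ∀ a' ∈ A, cA a = cA a' → g a = g a') →
    (∀ b ∈ B, ∀ b' ∈ B, cB b = cB b' → h b = h b') →
    (∀ a ∈ A, ∀ b ∈ B, cA a = cB b → g a = h b) →
    ∑ a ∈ A, g a = ∑ b ∈ B, h b := by
  intro N
  induction N with
  | zero =>
    intro A B g h cA cB hN h1 h2 h3 h4 h5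
    have hA : A = ∅ := Finset.card_eq_zero.mp (Nat.le_zero.mp hN)
    subst hA
    have hB : B = ∅ := by
      by_contra hB
      obtain ⟨b, hb⟩ := Finset.nonempty_of_ne_empty hB
      have := h2 b hb
      simp only [Finset.filter_empty, Finset.card_empty] at this
      have hmem : b ∈ B.filter (fun x => cB x = cB b) := by
        simp [hb]
      rw [Finset.card_eq_zero.mp this.symm] at hmem
      simp at hmem
    subst hB
    simp
  | succ N ih =>
    intro A B g h cA cB hN h1 h2 h3 h4 h5
    rcases Finset.eq_empty_or_nonempty A with hA | ⟨a₀, ha₀⟩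
    · subst hA
      have hB : B = ∅ := by
        by_contra hB
        obtain ⟨b, hb⟩ := Finset.nonempty_of_ne_empty hB
        have := h2 b hb
        simp only [Finset.filter_empty, Finset.card_empty] at this
        have hmem : b ∈ B.filter (fun x => cB x = cB b) := by simp [hb]
        rw [Finset.card_eq_zero.mp this.symm] at hmem
        simp at hmem
      subst hB
      simp
    · have hsplitA := Finset.sum_filter_add_sum_filter_not A (fun x => cA x = cA a₀) g
      have hsplitB := Finset.sum_filter_add_sum_filter_not B (fun x => cB x = cA a₀) h
      rw [← hsplitA, ← hsplitB]
      have hA1 : ∑ a ∈ A.filter (fun x => cA x = cA a₀), g a =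
          (A.filter (fun x => cA x = cA a₀)).card * g a₀ :=
        Finset.sum_const_nat (fun a ha => by
          simp only [Finset.mem_filter] at ha
          exact h3 a ha.1 a₀ ha₀ ha.2)
      have hB1 : ∑ b ∈ B.filter (fun x => cB x = cA a₀), h b =
          (B.filter (fun x => cB x = cA a₀)).card * g a₀ :=
        Finset.sum_const_nat (fun b hb => by
          simp only [Finset.mem_filter] at hb
          exact (h5 a₀ ha₀ b hb.1 hb.2.symm).symm)
      rw [hA1, hB1, h1 a₀ ha₀]
      congr 1
      -- tail: recurse
      have hAfilt : ∀ x ∈ A.filter (fun x => ¬ cA x = cA a₀),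
          (A.filter (fun x => ¬ cA x = cA a₀)).filter (fun y => cA y = cA x) =
          A.filter (fun y => cA y = cA x) := by
        intro x hx
        simp only [Finset.mem_filter] at hx
        rw [Finset.filter_filter]
        apply Finset.filter_congr
        intro y _
        constructor
        · rintro ⟨-, hy⟩; exact hy
        · intro hy; exact ⟨fun hc => hx.2 (hy ▸ hc), hy⟩
      have hBfilt : ∀ x ∈ B.filter (fun x => ¬ cB x = cA a₀),
          (B.filter (fun x => ¬ cB x = cA a₀)).filter (fun y => cB y = cB x) =
          B.filter (fun y => cB y = cB x) := by
        intro x hx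
        simp only [Finset.mem_filter] at hx
        rw [Finset.filter_filter]
        apply Finset.filter_congr
        intro y _
        constructor
        · rintro ⟨-, hy⟩; exact hy
        · intro hy; exact ⟨fun hc => hx.2 (hy ▸ hc), hy⟩
      have hcard : (A.filter (fun x => ¬ cA x = cA a₀)).card ≤ N := by
        have hlt : (A.filter (fun x => ¬ cA x = cA a₀)).card < A.card := by
          apply Finset.card_lt_card
          refine ⟨Finset.filter_subset _ _, fun hsub => ?_⟩
          have := hsub ha₀
          simp only [Finset.mem_filter] at this
          exact this.2 trivial
        omega
      apply ih _ _ g h cA cB hcard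
      · intro a ha
        rw [hAfilt a ha]
        have haA : a ∈ A := (Finset.mem_filter.mp ha).1
        rw [h1 a haA]
        congr 1
        rw [Finset.filter_filter]
        apply Finset.filter_congr
        intro y _
        simp only [Finset.mem_filter] at ha
        constructor
        · intro hy; exact ⟨fun hc => ha.2 (by rw [← hy]; exact hc), hy⟩
        · rintro ⟨-, hy⟩; exact hy
      · intro b hb
        rw [hBfilt b hb]
        have hbB : b ∈ B := (Finset.mem_filter.mp hb).1
        rw [← h2 b hbB]
        congr 1
        rw [Finset.filter_filter]
        apply Finset.filter_congr
        intro y _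
        simp only [Finset.mem_filter] at hb
        constructor
        · rintro ⟨-, hy⟩; exact hy
        · intro hy; exact ⟨fun hc => hb.2 (by rw [← hy]; exact hc), hy⟩
      · intro a ha a' ha'
        exact h3 a (Finset.mem_filter.mp ha).1 a' (Finset.mem_filter.mp ha').1
      · intro b hb b' hb'
        exact h4 b (Finset.mem_filter.mp hb).1 b' (Finset.mem_filter.mp hb').1
      · intro a ha b hb
        exact h5 a (Finset.mem_filter.mp ha).1 b (Finset.mem_filter.mp hb).1


lemma code_mem' {q : ℕ} {α : Type*} {H : SimpleGraph α}
    (hne : ∃ B : SimpleGraph (Fin q), B ∈ ℱ q ∧ Nonempty (H ≃g B)) :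
    ∃ B : SimpleGraph (Fin q), B ∈ ℱ q ∧ Nonempty (H ≃g B) ∧ enc q B = code ℱ q H := by
  obtain ⟨B, hB, hi⟩ := hne
  have hne2 : {c : ℕ | ∃ B : SimpleGraph (Fin q), B ∈ ℱ q ∧ Nonempty (H ≃g B) ∧
      enc q B = c}.Nonempty := ⟨enc q B, B, hB, hi, rfl⟩
  obtain ⟨B', hB', h1, h2⟩ := Nat.sInf_mem hne2
  exact ⟨B', hB', h1, h2⟩

lemma code_iso' {q : ℕ} {α β : Type*} {H₁ : SimpleGraph α} {H₂ : SimpleGraph β}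
    (hne₁ : ∃ B : SimpleGraph (Fin q), B ∈ ℱ q ∧ Nonempty (H₁ ≃g B))
    (hne₂ : ∃ B : SimpleGraph (Fin q), B ∈ ℱ q ∧ Nonempty (H₂ ≃g B))
    (hcode : code ℱ q H₁ = code ℱ q H₂) : Nonempty (H₁ ≃g H₂) := by
  obtain ⟨B₁, hB₁, ⟨f₁⟩, he₁⟩ := code_mem' hne₁
  obtain ⟨B₂, hB₂, ⟨f₂⟩, he₂⟩ := code_mem' hne₂
  rw [hcode, ← he₂] at he₁
  have : B₁ = B₂ := enc_inj q he₁
  subst this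
  exact ⟨f₁.trans f₂.symm⟩

/-- the class fiber inside the big maximal sets is counted by `mCount` -/
lemma fiber_card
    (hiso : ∀ (m m' : ℕ) (B : SimpleGraph (Fin m)) (B' : SimpleGraph (Fin m')),
      B ∈ ℱ m → Nonempty (B ≃g B') → B' ∈ ℱ m')
    {H : SimpleGraph (Fin n)} {q : ℕ} {B₀ : SimpleGraph (Fin q)} (hB₀ : B₀ ∈ ℱ q)
    {m : ℕ} (hmq : m < q) :
    ((Finset.univ.filter (fun T : Finset (Fin n) => IsMax ℱ H T ∧ m < T.card)).filter
      (fun T : Finset (Fin n) => (T.card, code ℱ T.card (SimpleGraph.induce (↑T : Set (Fin n)) H)) =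
        (q, code ℱ q B₀))).card = mCount ℱ B₀ H := by
  rw [mCount_eq]
  congr 1
  ext T
  simp only [Finset.mem_filter, Finset.mem_univ, true_and, Prod.mk.injEq]
  constructor
  · rintro ⟨⟨hmax, -⟩, hTq, hcode⟩
    rw [hTq] at hcode
    have hiso' : Nonempty ((SimpleGraph.induce (↑T : Set (Fin n)) H) ≃g B₀) :=
      code_iso' (classSet_nonempty hiso hmax.1 hTq) ⟨B₀, hB₀, ⟨Iso.refl⟩⟩ hcode
    exact ⟨hiso', hmax⟩
  · rintro ⟨hiso', hmax⟩
    have hTq : T.card = q := card_of_isoTo hiso'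
    refine ⟨⟨hmax, by omega⟩, hTq, ?_⟩
    rw [hTq]
    exact code_congr hiso'

/-- Lemma E: the sums of `gSum` over maximal sets agree. -/
lemma sum_gSum_eq {m : ℕ} {F : SimpleGraph (Fin m)} {G G' : SimpleGraph (Fin n)}
    (hiso : ∀ (m m' : ℕ) (B : SimpleGraph (Fin m)) (B' : SimpleGraph (Fin m')),
      B ∈ ℱ m → Nonempty (B ≃g B') → B' ∈ ℱ m')
    (habs : Absorbing ℱ G) (habs' : Absorbing ℱ G') (k : ℕ)
    (hcount : ∀ (q : ℕ) (B : SimpleGraph (Fin q)), B ∈ ℱ q → m < q →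
      mCount ℱ B G = mCount ℱ B G') :
    ∑ T ∈ Finset.univ.filter (fun T => IsMax ℱ G T), gSum ℱ F G k T =
    ∑ T ∈ Finset.univ.filter (fun T => IsMax ℱ G' T), gSum ℱ F G' k T := by
  have hres : ∀ H : SimpleGraph (Fin n),
      ∑ T ∈ Finset.univ.filter (fun T => IsMax ℱ H T), gSum ℱ F H k T =
      ∑ T ∈ Finset.univ.filter (fun T => IsMax ℱ H T ∧ m < T.card), gSum ℱ F H k T := by
    intro H
    rw [← Finset.sum_filter_add_sum_filter_not
      (Finset.univ.filter (fun T => IsMax ℱ H T)) (fun T => m < T.card)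
      (gSum ℱ F H k)]
    have hz : ∑ T ∈ (Finset.univ.filter (fun T => IsMax ℱ H T)).filter
        (fun T => ¬ m < T.card), gSum ℱ F H k T = 0 :=
      Finset.sum_eq_zero (fun T hT => by
        simp only [Finset.mem_filter, not_lt] at hT
        exact gSum_eq_zero hT.2 k)
    rw [hz, add_zero, Finset.filter_filter]
  rw [hres G, hres G']
  -- classifier
  set cg : Finset (Fin n) → ℕ × ℕ := fun T =>
    (T.card, code ℱ T.card (SimpleGraph.induce (↑T : Set (Fin n)) G)) with hcg
  set cg' : Finset (Fin n) → ℕ × ℕ := fun T =>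
    (T.card, code ℱ T.card (SimpleGraph.induce (↑T : Set (Fin n)) G')) with hcg'
  -- isomorphy from equal classifiers
  have hclass : ∀ (H₁ H₂ : SimpleGraph (Fin n)) (T₁ T₂ : Finset (Fin n)),
      IsF ℱ H₁ T₁ → IsF ℱ H₂ T₂ →
      (T₁.card, code ℱ T₁.card (SimpleGraph.induce (↑T₁ : Set (Fin n)) H₁)) =
      (T₂.card, code ℱ T₂.card (SimpleGraph.induce (↑T₂ : Set (Fin n)) H₂)) →
      Nonempty ((SimpleGraph.induce (↑T₁ : Set (Fin n)) H₁) ≃g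
                (SimpleGraph.induce (↑T₂ : Set (Fin n)) H₂)) := by
    intro H₁ H₂ T₁ T₂ h₁ h₂ hpair
    rw [Prod.mk.injEq] at hpair
    obtain ⟨hc, hcode⟩ := hpair
    rw [hc] at hcode
    exact code_iso' (q := T₂.card) (classSet_nonempty hiso h₁ hc)
      (classSet_nonempty hiso h₂ rfl) hcode
  apply pair_sum ((Finset.univ.filter (fun T => IsMax ℱ G T ∧ m < T.card)).card)
    _ _ _ _ cg cg' le_rfl
  · -- class counts, from the A side
    intro a ha
    simp only [Finset.mem_filter, Finset.mem_univ, true_and] at ha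
    obtain ⟨B₀, hB₀, hi₀⟩ := classSet_nonempty hiso ha.1.1 rfl
    have hca : cg a = (a.card, code ℱ a.card B₀) := by
      rw [hcg]
      simp only [Prod.mk.injEq, true_and]
      exact code_congr hi₀
    rw [hca]
    rw [fiber_card hiso hB₀ ha.2, fiber_card hiso hB₀ ha.2]
    exact hcount a.card B₀ hB₀ ha.2
  · -- class counts, from the B side
    intro b hb
    simp only [Finset.mem_filter, Finset.mem_univ, true_and] at hb
    obtain ⟨B₀, hB₀, hi₀⟩ := classSet_nonempty hiso hb.1.1 rfl
    have hcb : cg' b = (b.card, code ℱ b.card B₀) := by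
      rw [hcg']
      simp only [Prod.mk.injEq, true_and]
      exact code_congr hi₀
    rw [hcb]
    rw [fiber_card hiso hB₀ hb.2, fiber_card hiso hB₀ hb.2]
    exact hcount b.card B₀ hB₀ hb.2
  · -- g constant on classes, A side
    intro a ha a' ha' hc
    simp only [Finset.mem_filter, Finset.mem_univ, true_and] at ha ha'
    exact gSum_eq_of_iso habs habs ha.1 ha'.1 (hclass G G a a' ha.1.1 ha'.1.1 hc) k
  · -- B side
    intro b hb b' hb' hc
    simp only [Finset.mem_filter, Finset.mem_univ, true_and] at hb hb'
    exact gSum_eq_of_iso habs' habs' hb.1 hb'.1 (hclass G' G' b b' hb.1.1 hb'.1.1 hc) k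
  · -- cross
    intro a ha b hb hc
    simp only [Finset.mem_filter, Finset.mem_univ, true_and] at ha hb
    exact gSum_eq_of_iso habs habs' ha.1 hb.1 (hclass G G' a b ha.1.1 hb.1.1 hc) k


/-- Main step: the counting identity for small `m`. -/
lemma main_step {m : ℕ} {F : SimpleGraph (Fin m)} {G G' : SimpleGraph (Fin n)}
    (hiso : ∀ (m m' : ℕ) (B : SimpleGraph (Fin m)) (B' : SimpleGraph (Fin m')),
      B ∈ ℱ m → Nonempty (B ≃g B') → B' ∈ ℱ m')
    {k : ℕ} (hm : m < k) (hkn : k ≤ n) (hdeck : SameDeck G G' k)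
    (habs : Absorbing ℱ G) (habs' : Absorbing ℱ G')
    (hcount : ∀ (q : ℕ) (B : SimpleGraph (Fin q)), B ∈ ℱ q → m < q →
      mCount ℱ B G = mCount ℱ B G') :
    mCount ℱ F G = mCount ℱ F G' := by
  obtain ⟨S₀, -, hS₀⟩ : ∃ S₀ ⊆ (Finset.univ : Finset (Fin n)), S₀.card = m :=
    Finset.exists_subset_card_eq (by
      simp only [Finset.card_univ, Fintype.card_fin]; omega)
  set χ := (Finset.univ.filter (fun s : Finset (Fin n) => s.card = k ∧ S₀ ⊆ s)).card with hχdef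
  have hχ : 0 < χ := by
    obtain ⟨t, ht1, ht2⟩ := Finset.exists_superset_card_eq (s := S₀)
      (by omega : S₀.card ≤ k) (by simp only [Fintype.card_fin]; omega)
    apply Finset.card_pos.mpr
    exact ⟨t, Finset.mem_filter.mpr ⟨Finset.mem_univ t, ht2, ht1⟩⟩
  have hiden : ∀ (H : SimpleGraph (Fin n)), Absorbing ℱ H →
      Npairs ℱ F H k = mCount ℱ F H * χ +
        ∑ T ∈ Finset.univ.filter (fun T => IsMax ℱ H T), gSum ℱ F H k T := by
    intro H habsH
    rw [npairs_swap]
    rw [← Finset.sum_filter_add_sum_filter_not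
      (Finset.univ.filter (fun S => IsoTo F H S ∧ IsF ℱ H S))
      (fun S => IsMax ℱ H S) (cCount ℱ H k)]
    congr 1
    · have h1 : ∀ S ∈ (Finset.univ.filter (fun S => IsoTo F H S ∧ IsF ℱ H S)).filter
          (fun S => IsMax ℱ H S), cCount ℱ H k S = χ := by
        intro S hS
        simp only [Finset.mem_filter, Finset.mem_univ, true_and] at hS
        rw [cCount_of_max hS.2, hχdef]
        exact supcount_card (by rw [card_of_isoTo hS.1.1, hS₀])
      rw [Finset.sum_const_nat h1]
      congr 1
      rw [mCount_eq]
      congr 1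
      rw [Finset.filter_filter]
      apply Finset.filter_congr
      intro S _
      constructor
      · rintro ⟨⟨h1, -⟩, h2⟩; exact ⟨h1, h2⟩
      · rintro ⟨h1, h2⟩; exact ⟨⟨h1, h2.1⟩, h2⟩
    · exact nonmax_fiberwise habsH k
  have h := npairs_deck (ℱ := ℱ) (F := F) hdeck
  rw [hiden G habs, hiden G' habs'] at h
  rw [sum_gSum_eq hiso habs habs' k hcount] at h
  have h2 := Nat.add_right_cancel h
  exact Nat.eq_of_mul_eq_mul_right hχ h2

end AFC

/-- The counting lemma: if `ℱ` is an isomorphism-closed absorbing family for both `G`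
and `G'`, the graphs have the same `(n-ℓ)`-deck, and `m(F,G) = m(F,G')` for every
`F ∈ ℱ` with at least `n-ℓ` vertices, then `m(F,G) = m(F,G')` for all `F ∈ ℱ`. -/
theorem absorbing_family_counting (ℱ : ∀ m : ℕ, Set (SimpleGraph (Fin m)))
    (hiso : ∀ (m m' : ℕ) (B : SimpleGraph (Fin m)) (B' : SimpleGraph (Fin m')),
      B ∈ ℱ m → Nonempty (B ≃g B') → B' ∈ ℱ m')
    (n ℓ : ℕ) (hℓ : 1 ≤ ℓ) (hn : ℓ < n)
    (G G' : SimpleGraph (Fin n)) (hdeck : SameDeck G G' (n - ℓ))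
    (habs : Absorbing ℱ G) (habs' : Absorbing ℱ G')
    (hbig : ∀ (m : ℕ) (F : SimpleGraph (Fin m)), F ∈ ℱ m → n - ℓ ≤ m →
      mCount ℱ F G = mCount ℱ F G') :
    ∀ (m : ℕ) (F : SimpleGraph (Fin m)), F ∈ ℱ m → mCount ℱ F G = mCount ℱ F G' := by
  classical
  set k := n - ℓ with hk
  have main : ∀ (d m : ℕ) (F : SimpleGraph (Fin m)), F ∈ ℱ m → k ≤ m + d →
      mCount ℱ F G = mCount ℱ F G' := by
    intro d
    induction d with
    | zero =>
      intro m F hF h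
      exact hbig m F hF (by omega)
    | succ d ih =>
      intro m F hF h
      by_cases hmk : k ≤ m
      · exact hbig m F hF (by omega)
      · have hm : m < k := by omega
        exact AFC.main_step hiso hm (by omega) hdeck habs habs'
          (fun q B hB hq => ih q B hB (by omega))
  intro m F hF
  exact main k m F hF (by omega)
end

section
/- Let n and ℓ be positive integers with n > 2ℓ. If G is an n-vertex simple graph in which every connected component has at most n−ℓ vertices, then every n-vertex simple graph having the same (n−ℓ)-deck as G is isomorphic to G. -/
open SimpleGraph Finset


open SimpleGraph

namespace Recon

open scoped Classical

variable {n : ℕ}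

/-- The vertex set of the connected component of `v`, as a `Finset`. -/
noncomputable def compF (G : SimpleGraph (Fin n)) (v : Fin n) : Finset (Fin n) :=
  Finset.univ.filter (fun w => G.Reachable v w)

/-- `s` is the vertex set of a connected component: induced subgraph connected and
no edges leaving `s`. -/
def IsCompSet (G : SimpleGraph (Fin n)) (s : Finset (Fin n)) : Prop :=
  (G.induce (↑s : Set (Fin n))).Connected ∧ ∀ u ∈ s, ∀ v, v ∉ s → ¬ G.Adj u v

@[simp] lemma mem_compF {G : SimpleGraph (Fin n)} {v w : Fin n} :
    w ∈ compF G v ↔ G.Reachable v w := by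
  simp [compF]

lemma self_mem_compF {G : SimpleGraph (Fin n)} (v : Fin n) : v ∈ compF G v :=
  mem_compF.mpr (Reachable.refl v)

lemma walk_closed {G : SimpleGraph (Fin n)} {s : Finset (Fin n)}
    (hcl : ∀ x y, x ∈ s → G.Adj x y → y ∈ s) {a b : Fin n} (p : G.Walk a b)
    (ha : a ∈ s) : b ∈ s := by
  induction p with
  | nil => exact ha
  | cons h p ih => exact ih (hcl _ _ ha h)

lemma reach_in_induce {G : SimpleGraph (Fin n)} {s : Finset (Fin n)}
    (hcl : ∀ x y, x ∈ s → G.Adj x y → y ∈ s) {a b : Fin n} (p : G.Walk a b)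
    (ha : a ∈ s) :
    ∃ hb : b ∈ s, (G.induce (↑s : Set (Fin n))).Reachable ⟨a, ha⟩ ⟨b, hb⟩ := by
  induction p with
  | nil => exact ⟨ha, Reachable.refl _⟩
  | @cons u x b h p ih =>
      have hx : x ∈ s := hcl _ _ ha h
      obtain ⟨hb, hr⟩ := ih hx
      exact ⟨hb, (SimpleGraph.Adj.reachable (by exact h :
        (G.induce (↑s : Set (Fin n))).Adj ⟨u, ha⟩ ⟨x, hx⟩)).trans hr⟩

lemma reach_of_induce_reach {G : SimpleGraph (Fin n)} {s : Finset (Fin n)}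
    {x y : (↑s : Set (Fin n))} (h : (G.induce (↑s : Set (Fin n))).Reachable x y) :
    G.Reachable ↑x ↑y :=
  h.map (SimpleGraph.Embedding.induce (↑s : Set (Fin n))).toHom

lemma compF_closed {G : SimpleGraph (Fin n)} {v : Fin n} :
    ∀ x y, x ∈ compF G v → G.Adj x y → y ∈ compF G v := by
  intro x y hx hadj
  rw [mem_compF] at hx ⊢
  exact hx.trans hadj.reachable

lemma compF_isCompSet (G : SimpleGraph (Fin n)) (v : Fin n) :
    IsCompSet G (compF G v) := by
  constructor
  · rw [connected_iff_exists_forall_reachable]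
    refine ⟨⟨v, self_mem_compF v⟩, ?_⟩
    rintro ⟨w, hw⟩
    obtain ⟨p⟩ := mem_compF.mp hw
    obtain ⟨hb, hr⟩ := reach_in_induce compF_closed p (self_mem_compF v)
    exact hr
  · intro u hu w hw hadj
    exact hw (compF_closed u w hu hadj)

lemma subset_compF_of_connected {G : SimpleGraph (Fin n)} {s : Finset (Fin n)}
    (hc : (G.induce (↑s : Set (Fin n))).Connected) {v : Fin n} (hv : v ∈ s) :
    s ⊆ compF G v := by
  intro w hw
  rw [mem_compF]
  exact reach_of_induce_reach (hc ⟨v, hv⟩ ⟨w, hw⟩)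

lemma IsCompSet.eq_compF {G : SimpleGraph (Fin n)} {s : Finset (Fin n)}
    (hs : IsCompSet G s) {v : Fin n} (hv : v ∈ s) : s = compF G v := by
  apply Finset.Subset.antisymm (subset_compF_of_connected hs.1 hv)
  intro w hw
  obtain ⟨p⟩ := mem_compF.mp hw
  exact walk_closed (fun x y hx hxy => by
    by_contra hy; exact hs.2 x hx y hy hxy) p hv

lemma IsCompSet.eq_or_disjoint {G : SimpleGraph (Fin n)} {s t : Finset (Fin n)}
    (hs : IsCompSet G s) (ht : IsCompSet G t) : s = t ∨ Disjoint s t := by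
  by_cases h : Disjoint s t
  · exact Or.inr h
  · left
    obtain ⟨v, hvs, hvt⟩ := Finset.not_disjoint_iff.mp h
    rw [hs.eq_compF hvs, ht.eq_compF hvt]

lemma IsCompSet.nonempty {G : SimpleGraph (Fin n)} {s : Finset (Fin n)}
    (hs : IsCompSet G s) : s.Nonempty := by
  obtain ⟨⟨v, hv⟩⟩ := hs.1.nonempty
  exact ⟨v, hv⟩

/-- `compF` card equals `Nat.card` of the component support. -/
lemma card_compF {G : SimpleGraph (Fin n)} (v : Fin n) :
    (compF G v).card = Nat.card (G.connectedComponentMk v).supp := by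
  have : ((G.connectedComponentMk v).supp : Set (Fin n)) = ↑(compF G v) := by
    ext w
    simp only [ConnectedComponent.mem_supp_iff, Finset.coe_filter, compF,
      Set.mem_setOf_eq, Finset.mem_univ, true_and, Finset.mem_coe, mem_compF]
    rw [ConnectedComponent.eq]
    exact ⟨Reachable.symm, Reachable.symm⟩
  rw [this, Nat.card_coe_set_eq, Set.ncard_coe_finset]


section Transport

variable {β : Type} {G H : SimpleGraph (Fin n)} {t t' : Finset (Fin n)}

/-- Count of `c`-subsets of `t` whose induced subgraph is isomorphic to the pattern `P`. -/
noncomputable def subCnt (G : SimpleGraph (Fin n)) (t : Finset (Fin n)) (c : ℕ)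
    (P : SimpleGraph β) : ℕ :=
  ((t.powersetCard c).filter
    (fun (s : Finset (Fin n)) => Nonempty (G.induce (↑s : Set (Fin n)) ≃g P))).card

/-- The map on ambient vertices induced by an isomorphism of induced subgraphs. -/
noncomputable def emap (e : G.induce (↑t : Set (Fin n)) ≃g H.induce (↑t' : Set (Fin n)))
    (v : Fin n) : Fin n :=
  if h : v ∈ t then ↑(e ⟨v, h⟩) else v

lemma emap_mem (e : G.induce (↑t : Set (Fin n)) ≃g H.induce (↑t' : Set (Fin n)))
    {v : Fin n} (hv : v ∈ t) : emap e v ∈ t' := by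
  simp only [emap, dif_pos hv]
  exact (e ⟨v, hv⟩).2

lemma emap_spec (e : G.induce (↑t : Set (Fin n)) ≃g H.induce (↑t' : Set (Fin n)))
    {v : Fin n} (hv : v ∈ t) : emap e v = ↑(e ⟨v, hv⟩) := dif_pos hv

lemma emap_left_inv (e : G.induce (↑t : Set (Fin n)) ≃g H.induce (↑t' : Set (Fin n)))
    {v : Fin n} (hv : v ∈ t) : emap e.symm (emap e v) = v := by
  rw [emap_spec e hv, emap_spec e.symm (by exact (e ⟨v, hv⟩).2)]
  have : (⟨↑(e ⟨v, hv⟩), (e ⟨v, hv⟩).2⟩ : (↑t' : Set (Fin n))) = e ⟨v, hv⟩ := rfl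
  rw [this]
  have := e.toEquiv.symm_apply_apply ⟨v, hv⟩
  rw [show e.symm (e ⟨v, hv⟩) = e.toEquiv.symm (e.toEquiv ⟨v, hv⟩) from rfl, this]

lemma emap_injOn (e : G.induce (↑t : Set (Fin n)) ≃g H.induce (↑t' : Set (Fin n))) :
    Set.InjOn (emap e) ↑t := by
  intro v hv w hw h
  have := congrArg (emap e.symm) h
  rwa [emap_left_inv e hv, emap_left_inv e hw] at this

lemma image_emap_subset (e : G.induce (↑t : Set (Fin n)) ≃g H.induce (↑t' : Set (Fin n)))
    {s : Finset (Fin n)} (hst : s ⊆ t) : s.image (emap e) ⊆ t' := by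
  intro w hw
  obtain ⟨v, hv, rfl⟩ := Finset.mem_image.mp hw
  exact emap_mem e (hst hv)

lemma card_image_emap (e : G.induce (↑t : Set (Fin n)) ≃g H.induce (↑t' : Set (Fin n)))
    {s : Finset (Fin n)} (hst : s ⊆ t) : (s.image (emap e)).card = s.card :=
  Finset.card_image_of_injOn ((emap_injOn e).mono (by exact_mod_cast hst))

lemma image_image_emap (e : G.induce (↑t : Set (Fin n)) ≃g H.induce (↑t' : Set (Fin n)))
    {s : Finset (Fin n)} (hst : s ⊆ t) :
    (s.image (emap e)).image (emap e.symm) = s := by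
  rw [Finset.image_image]
  have : ∀ v ∈ s, (emap e.symm ∘ emap e) v = id v := fun v hv =>
    emap_left_inv e (hst hv)
  rw [Finset.image_congr this, Finset.image_id]

/-- Restriction of the isomorphism to a subset. -/
noncomputable def isoSub (e : G.induce (↑t : Set (Fin n)) ≃g H.induce (↑t' : Set (Fin n)))
    {s : Finset (Fin n)} (hst : s ⊆ t) :
    G.induce (↑s : Set (Fin n)) ≃g H.induce (↑(s.image (emap e)) : Set (Fin n)) := by
  have hmem : ∀ x : (↑s : Set (Fin n)), (↑x : Fin n) ∈ t := fun x => hst (by exact_mod_cast x.2)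
  refine ⟨Equiv.ofBijective
    (fun x => ⟨emap e ↑x, by
      exact_mod_cast Finset.mem_image_of_mem (emap e) (by exact_mod_cast x.2)⟩ :
      (↑s : Set (Fin n)) → (↑(s.image (emap e)) : Set (Fin n))) ⟨?_, ?_⟩, ?_⟩
  · intro x y hxy
    have h2 : emap e ↑x = emap e ↑y := congrArg Subtype.val hxy
    exact Subtype.ext ((emap_injOn e) (hmem x) (hmem y) h2)
  · rintro ⟨w, hw⟩
    obtain ⟨v, hv, rfl⟩ := Finset.mem_image.mp (by exact_mod_cast hw)
    exact ⟨⟨v, by exact_mod_cast hv⟩, rfl⟩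
  · intro x y
    show (H.induce _).Adj ⟨emap e ↑x, _⟩ ⟨emap e ↑y, _⟩ ↔ _
    have hx := hmem x
    have hy := hmem y
    simp only [comap_adj, Function.Embedding.coe_subtype]
    rw [emap_spec e hx, emap_spec e hy]
    have : H.Adj ↑(e ⟨↑x, hx⟩) ↑(e ⟨↑y, hy⟩) ↔
        (H.induce (↑t' : Set (Fin n))).Adj (e ⟨↑x, hx⟩) (e ⟨↑y, hy⟩) := Iff.rfl
    rw [this, e.map_adj_iff]
    exact Iff.rfl

lemma mem_filter_image (e : G.induce (↑t : Set (Fin n)) ≃g H.induce (↑t' : Set (Fin n)))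
    {c : ℕ} {P : SimpleGraph β} {s : Finset (Fin n)}
    (hs : s ∈ (t.powersetCard c).filter
      (fun (s : Finset (Fin n)) => Nonempty (G.induce (↑s : Set (Fin n)) ≃g P))) :
    s.image (emap e) ∈ (t'.powersetCard c).filter
      (fun (s : Finset (Fin n)) => Nonempty (H.induce (↑s : Set (Fin n)) ≃g P)) := by
  rw [Finset.mem_filter, Finset.mem_powersetCard] at hs ⊢
  obtain ⟨⟨hsub, hcard⟩, ⟨iso⟩⟩ := hs
  exact ⟨⟨image_emap_subset e hsub, by rw [card_image_emap e hsub, hcard]⟩,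
    ⟨((isoSub e hsub).symm.trans iso)⟩⟩

lemma subCnt_congr (e : G.induce (↑t : Set (Fin n)) ≃g H.induce (↑t' : Set (Fin n)))
    (c : ℕ) (P : SimpleGraph β) : subCnt G t c P = subCnt H t' c P := by
  refine Finset.card_bij' (fun s _ => s.image (emap e)) (fun s _ => s.image (emap e.symm))
    (fun s hs => mem_filter_image e hs) (fun s hs => mem_filter_image e.symm hs)
    ?_ ?_
  · intro s hs
    rw [Finset.mem_filter, Finset.mem_powersetCard] at hs
    exact image_image_emap e hs.1.1
  · intro s hs
    rw [Finset.mem_filter, Finset.mem_powersetCard] at hs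
    exact image_image_emap e.symm hs.1.1

end Transport

section Counting

variable {β : Type} {G H : SimpleGraph (Fin n)}

lemma card_supersets (s : Finset (Fin n)) {k : ℕ} (hk : k ≤ n) (hs : s.card ≤ k) :
    (((Finset.univ : Finset (Fin n)).powersetCard k).filter (fun t => s ⊆ t)).card
      = (n - s.card).choose (k - s.card) := by
  have := Finset.card_bij' (fun (t : Finset (Fin n)) (_ : t ∈ ((Finset.univ : Finset (Fin n)).powersetCard k).filter (fun t => s ⊆ t)) => t \ s)
    (fun (u : Finset (Fin n)) (_ : u ∈ sᶜ.powersetCard (k - s.card)) => u ∪ s)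
    ?_ ?_ ?_ ?_
  · rw [this, Finset.card_powersetCard, Finset.card_compl, Fintype.card_fin]
  · intro t ht
    rw [Finset.mem_filter, Finset.mem_powersetCard] at ht
    rw [Finset.mem_powersetCard]
    refine ⟨fun x hx => ?_, ?_⟩
    · rw [Finset.mem_sdiff] at hx
      exact Finset.mem_compl.mpr hx.2
    · rw [Finset.card_sdiff_of_subset ht.2, ht.1.2]
  · intro u hu
    rw [Finset.mem_powersetCard] at hu
    rw [Finset.mem_filter, Finset.mem_powersetCard]
    have hdisj : Disjoint u s := by
      rw [Finset.disjoint_left]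
      intro a ha has
      exact (Finset.mem_compl.mp (hu.1 ha)) has
    refine ⟨⟨Finset.subset_univ _, ?_⟩, Finset.subset_union_right⟩
    rw [Finset.card_union_of_disjoint hdisj, hu.2]
    omega
  · intro t ht
    rw [Finset.mem_filter] at ht
    exact Finset.sdiff_union_of_subset ht.2
  · intro u hu
    rw [Finset.mem_powersetCard] at hu
    apply Finset.union_sdiff_cancel_right
    rw [Finset.disjoint_left]
    intro a ha has
    exact (Finset.mem_compl.mp (hu.1 ha)) has

lemma subCnt_as_sum (G : SimpleGraph (Fin n)) (t : Finset (Fin n)) (c : ℕ)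
    (P : SimpleGraph β) :
    subCnt G t c P = ∑ s ∈ (Finset.univ : Finset (Fin n)).powersetCard c,
      ((if s ⊆ t then (if Nonempty (G.induce (↑s : Set (Fin n)) ≃g P) then 1 else 0)
        else 0 : ℕ)) := by
  rw [subCnt, Finset.card_filter]
  have hpc : t.powersetCard c
      = ((Finset.univ : Finset (Fin n)).powersetCard c).filter (fun s => s ⊆ t) := by
    ext s
    simp only [Finset.mem_powersetCard, Finset.mem_filter, Finset.subset_univ, true_and]
    tauto
  rw [hpc, Finset.sum_filter]

lemma sum_subCnt (G : SimpleGraph (Fin n)) {k c : ℕ} (hc : c ≤ k) (hk : k ≤ n)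
    (P : SimpleGraph β) :
    ∑ t ∈ (Finset.univ : Finset (Fin n)).powersetCard k, subCnt G t c P
      = subCnt G Finset.univ c P * (n - c).choose (k - c) := by
  have step1 : ∑ t ∈ (Finset.univ : Finset (Fin n)).powersetCard k, subCnt G t c P
      = ∑ s ∈ (Finset.univ : Finset (Fin n)).powersetCard c,
          ∑ t ∈ (Finset.univ : Finset (Fin n)).powersetCard k,
            ((if s ⊆ t then (if Nonempty (G.induce (↑s : Set (Fin n)) ≃g P) then 1 else 0)
              else 0 : ℕ)) := by
    rw [← Finset.sum_comm]
    exact Finset.sum_congr rfl fun t _ => subCnt_as_sum G t c P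
  rw [step1]
  have step2 : ∀ s ∈ (Finset.univ : Finset (Fin n)).powersetCard c,
      ∑ t ∈ (Finset.univ : Finset (Fin n)).powersetCard k,
        ((if s ⊆ t then (if Nonempty (G.induce (↑s : Set (Fin n)) ≃g P) then 1 else 0)
          else 0 : ℕ))
      = (if Nonempty (G.induce (↑s : Set (Fin n)) ≃g P) then 1 else 0)
          * (n - c).choose (k - c) := by
    intro s hs
    rw [Finset.mem_powersetCard] at hs
    rw [← Finset.sum_filter, Finset.sum_const, smul_eq_mul, mul_comm]
    congr 1
    rw [← hs.2] at hc ⊢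
    exact card_supersets s hk hc
  rw [Finset.sum_congr rfl step2, ← Finset.sum_mul, ← Finset.card_filter]
  rfl

lemma subCnt_univ_eq_of_deck {k : ℕ} (hdeck : SameDeck G H k) (hk : k ≤ n)
    {c : ℕ} (hc : c ≤ k) (P : SimpleGraph β) :
    subCnt G Finset.univ c P = subCnt H Finset.univ c P := by
  obtain ⟨φ, hφ⟩ := hdeck
  have hmem : ∀ s : Finset (Fin n), s ∈ (Finset.univ : Finset (Fin n)).powersetCard k ↔ s.card = k := by
    intro s
    simp [Finset.mem_powersetCard]
  haveI : Fintype {s : Finset (Fin n) // s.card = k} := Subtype.fintype _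
  have hsum : ∑ t ∈ (Finset.univ : Finset (Fin n)).powersetCard k, subCnt G t c P
      = ∑ t ∈ (Finset.univ : Finset (Fin n)).powersetCard k, subCnt H t c P := by
    rw [Finset.sum_subtype _ hmem (fun t => subCnt G t c P),
        Finset.sum_subtype _ hmem (fun t => subCnt H t c P)]
    have key : ∀ a : {s : Finset (Fin n) // s.card = k},
        subCnt G (↑a) c P = subCnt H (↑(φ a)) c P := fun a =>
      subCnt_congr (hφ a).some c P
    calc ∑ a : {s : Finset (Fin n) // s.card = k}, subCnt G (↑a) c P
        = ∑ a : {s : Finset (Fin n) // s.card = k}, subCnt H (↑(φ a)) c P :=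
          Finset.sum_congr rfl (fun a _ => key a)
      _ = ∑ a : {s : Finset (Fin n) // s.card = k}, subCnt H (↑a) c P :=
          Fintype.sum_equiv φ _ _ (fun a => rfl)
  rw [sum_subCnt G hc hk P, sum_subCnt H hc hk P] at hsum
  have hpos : 0 < (n - c).choose (k - c) :=
    Nat.choose_pos (by omega)
  exact Nat.eq_of_mul_eq_mul_right hpos hsum

end Counting

section Conn

variable {G H : SimpleGraph (Fin n)}

noncomputable def connCnt (G : SimpleGraph (Fin n)) (k : ℕ) : ℕ :=
  (((Finset.univ : Finset (Fin n)).powersetCard k).filter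
    (fun (s : Finset (Fin n)) => (G.induce (↑s : Set (Fin n))).Connected)).card

lemma connCnt_eq_of_deck {k : ℕ} (hdeck : SameDeck G H k) : connCnt G k = connCnt H k := by
  obtain ⟨φ, hφ⟩ := hdeck
  refine Finset.card_bij'
    (fun t ht => (φ ⟨t, by
      simpa using (Finset.mem_powersetCard.mp (Finset.mem_filter.mp ht).1).2⟩ : _).1)
    (fun t ht => (φ.symm ⟨t, by
      simpa using (Finset.mem_powersetCard.mp (Finset.mem_filter.mp ht).1).2⟩ : _).1)
    ?_ ?_ ?_ ?_
  · intro t ht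
    rw [Finset.mem_filter] at ht ⊢
    have hc := ht.2
    constructor
    · rw [Finset.mem_powersetCard]
      exact ⟨Finset.subset_univ _, (φ _).2⟩
    · exact ((hφ _).some.connected_iff).mp hc
  · intro t ht
    rw [Finset.mem_filter] at ht ⊢
    constructor
    · rw [Finset.mem_powersetCard]
      exact ⟨Finset.subset_univ _, (φ.symm _).2⟩
    · have := hφ (φ.symm ⟨t, by
        simpa using (Finset.mem_powersetCard.mp ht.1).2⟩)
      rw [Equiv.apply_symm_apply] at this
      exact (this.some.connected_iff).mpr ht.2
  · intro t ht
    simp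
  · intro t ht
    simp

lemma isCompSet_of_connected_card {k : ℕ} (hcomp' : ∀ v, (compF G v).card ≤ k)
    {s : Finset (Fin n)} (hs : s.card = k) (hk1 : 1 ≤ k)
    (hconn : (G.induce (↑s : Set (Fin n))).Connected) : IsCompSet G s := by
  have hne : s.Nonempty := Finset.card_pos.mp (by omega)
  obtain ⟨v, hv⟩ := hne
  have hsub : s ⊆ compF G v := subset_compF_of_connected hconn hv
  have heq : s = compF G v := by
    apply Finset.eq_of_subset_of_card_le hsub
    rw [hs]
    exact hcomp' v
  rw [heq]
  exact compF_isCompSet G v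

lemma connCnt_le_one {k : ℕ} (hcomp' : ∀ v, (compF G v).card ≤ k)
    (h2k : n < 2 * k) (hk1 : 1 ≤ k) : connCnt G k ≤ 1 := by
  rw [connCnt, Finset.card_le_one]
  intro a ha b hb
  rw [Finset.mem_filter, Finset.mem_powersetCard] at ha hb
  have hca : IsCompSet G a := isCompSet_of_connected_card hcomp' ha.1.2 hk1 ha.2
  have hcb : IsCompSet G b := isCompSet_of_connected_card hcomp' hb.1.2 hk1 hb.2
  rcases hca.eq_or_disjoint hcb with h | h
  · exact h
  · exfalso
    have := Finset.card_union_of_disjoint h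
    have hle : (a ∪ b).card ≤ n := by
      have := Finset.card_le_univ (a ∪ b)
      simpa using this
    rw [Finset.card_union_of_disjoint h, ha.1.2, hb.1.2] at hle
    omega

lemma compF_congr {G : SimpleGraph (Fin n)} {u v : Fin n} (h : u ∈ compF G v) :
    compF G u = compF G v := by
  rw [mem_compF] at h
  ext w
  rw [mem_compF, mem_compF]
  exact ⟨fun hr => h.trans hr, fun hr => h.symm.trans hr⟩

lemma walk_boundary {G : SimpleGraph (Fin n)} {s : Finset (Fin n)} {a b : Fin n}
    (p : G.Walk a b) (ha : a ∈ s) (hb : b ∉ s) :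
    ∃ x ∈ s, ∃ y, y ∉ s ∧ G.Adj x y := by
  induction p with
  | nil => exact absurd ha hb
  | @cons u m w h q ih =>
      by_cases hm : m ∈ s
      · exact ih hm hb
      · exact ⟨u, ha, m, hm, h⟩

lemma insert_connected {G : SimpleGraph (Fin n)} {s : Finset (Fin n)} {x w : Fin n}
    (hconn : (G.induce (↑s : Set (Fin n))).Connected) (hx : x ∈ s) (hw : w ∉ s)
    (hadj : G.Adj x w) :
    (G.induce (↑(insert w s) : Set (Fin n))).Connected := by
  have hsub : (↑s : Set (Fin n)) ⊆ ↑(insert w s) := by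
    intro z hz
    simp only [Finset.coe_insert, Set.mem_insert_iff]
    exact Or.inr hz
  rw [connected_iff_exists_forall_reachable]
  refine ⟨⟨x, by simp [hx]⟩, ?_⟩
  rintro ⟨z, hz⟩
  rcases Finset.mem_insert.mp (by exact_mod_cast hz) with rfl | hzs
  · exact SimpleGraph.Adj.reachable (by exact hadj :
      (G.induce (↑(insert z s) : Set (Fin n))).Adj ⟨x, by simp [hx]⟩ ⟨z, by simp⟩)
  · have hr : (G.induce (↑s : Set (Fin n))).Reachable ⟨x, hx⟩ ⟨z, hzs⟩ := hconn _ _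
    exact hr.map (G.induceHomOfLE hsub).toHom

lemma grow {G : SimpleGraph (Fin n)} (v : Fin n) :
    ∀ j : ℕ, 1 ≤ j → j ≤ (compF G v).card →
    ∃ s : Finset (Fin n), v ∈ s ∧ s ⊆ compF G v ∧ s.card = j ∧
      (G.induce (↑s : Set (Fin n))).Connected := by
  intro j
  induction j with
  | zero => omega
  | succ m ih =>
    intro _ hle
    by_cases hm : m = 0
    · subst hm
      refine ⟨{v}, Finset.mem_singleton_self v, ?_, Finset.card_singleton v, ?_⟩
      · intro z hz
        rw [Finset.mem_singleton] at hz
        subst hz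
        exact self_mem_compF _
      · rw [connected_iff_exists_forall_reachable]
        refine ⟨⟨v, by exact_mod_cast Finset.mem_singleton_self v⟩, ?_⟩
        rintro ⟨z, hz⟩
        have hzv : z = v := by simpa using hz
        subst hzv
        exact Reachable.refl _
    · obtain ⟨s, hvs, hsub, hcard, hconn⟩ := ih (by omega) (by omega)
      have hne : s ≠ compF G v := by
        intro h
        rw [h] at hcard
        omega
      obtain ⟨u, hu, hus⟩ := (Finset.ssubset_iff_of_subset hsub).mp
        (lt_of_le_of_ne hsub hne)
      obtain ⟨p⟩ : G.Reachable v u := mem_compF.mp hu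
      obtain ⟨x, hx, y, hy, hxy⟩ := walk_boundary p hvs hus
      have hycomp : y ∈ compF G v := compF_closed x y (hsub hx) hxy
      refine ⟨insert y s, Finset.mem_insert_of_mem hvs, ?_, ?_, ?_⟩
      · intro z hz
        rcases Finset.mem_insert.mp hz with rfl | hzs
        · exact hycomp
        · exact hsub hzs
      · rw [Finset.card_insert_of_notMem hy, hcard]
      · exact insert_connected hconn hx hy hxy

/-- If `G` has all components of size at most `k` and the decks agree, so does `H`. -/
lemma comps_small_of_deck {k : ℕ} (hdeck : SameDeck G H k)
    (hcomp' : ∀ v, (compF G v).card ≤ k) (h2k : n < 2 * k) (hk1 : 1 ≤ k) :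
    ∀ v, (compF H v).card ≤ k := by
  intro v
  by_contra hbig
  push_neg at hbig
  obtain ⟨s1, hvs1, hs1sub, hs1card, hs1conn⟩ := grow (G := H) v k hk1 (le_of_lt hbig)
  have hne : s1 ≠ compF H v := fun h => by rw [h] at hs1card; omega
  obtain ⟨u, hu, hus⟩ := (Finset.ssubset_iff_of_subset hs1sub).mp
    (lt_of_le_of_ne hs1sub hne)
  have hcu : compF H u = compF H v := compF_congr hu
  obtain ⟨s2, hus2, hs2sub, hs2card, hs2conn⟩ := grow (G := H) u k hk1 (by rw [hcu]; omega)
  have hne2 : s1 ≠ s2 := fun h => hus (h ▸ hus2)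
  have hle := connCnt_le_one hcomp' h2k hk1
  rw [connCnt_eq_of_deck hdeck, connCnt, Finset.card_le_one] at hle
  refine hne2 (hle s1 ?_ s2 ?_) <;> rw [Finset.mem_filter, Finset.mem_powersetCard]
  · exact ⟨⟨Finset.subset_univ _, hs1card⟩, hs1conn⟩
  · exact ⟨⟨Finset.subset_univ _, hs2card⟩, hs2conn⟩

end Conn

section Matching

variable {α γ : Type} [DecidableEq α] [DecidableEq γ]

lemma card_filter_erase (s : Finset α) (x : α) (hx : x ∈ s) (p : α → Prop)
    [DecidablePred p] :
    ((s.erase x).filter p).card = (s.filter p).card - (if p x then 1 else 0) := by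
  rw [Finset.filter_erase]
  by_cases h : p x
  · rw [if_pos h, Finset.card_erase_of_mem (Finset.mem_filter.mpr ⟨hx, h⟩)]
  · rw [if_neg h, Finset.erase_eq_of_notMem (fun hc => h (Finset.mem_filter.mp hc).2),
      Nat.sub_zero]

lemma matching_lemma :
    ∀ (N : ℕ) (A B : Finset α) (f g : α → γ), A.card = N →
    (∀ a ∈ A, (B.filter (fun b => g b = f a)).card
        = (A.filter (fun a' => f a' = f a)).card) →
    (∀ b ∈ B, (A.filter (fun a => f a = g b)).card
        = (B.filter (fun b' => g b' = g b)).card) →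
    ∃ σ : α → α, Set.InjOn σ ↑A ∧ A.image σ = B ∧ ∀ a ∈ A, g (σ a) = f a := by
  intro N
  induction N with
  | zero =>
    intro A B f g hcard hA hB
    have hAe : A = ∅ := Finset.card_eq_zero.mp hcard
    subst hAe
    have hBe : B = ∅ := by
      rw [Finset.eq_empty_iff_forall_notMem]
      intro b hb
      have := hB b hb
      simp only [Finset.filter_empty, Finset.card_empty] at this
      have hbmem : b ∈ B.filter (fun b' => g b' = g b) :=
        Finset.mem_filter.mpr ⟨hb, rfl⟩
      have := Finset.card_pos.mpr ⟨b, hbmem⟩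
      omega
    subst hBe
    exact ⟨id, Set.injOn_id _, by simp, by simp⟩
  | succ N ih =>
    intro A B f g hcard hA hB
    obtain ⟨a, ha⟩ := Finset.card_pos.mp (by omega : 0 < A.card)
    have hBfib : 0 < (B.filter (fun b => g b = f a)).card := by
      rw [hA a ha]
      exact Finset.card_pos.mpr ⟨a, Finset.mem_filter.mpr ⟨ha, rfl⟩⟩
    obtain ⟨b, hbfib⟩ := Finset.card_pos.mp hBfib
    rw [Finset.mem_filter] at hbfib
    obtain ⟨hbB, hgb⟩ := hbfib
    have hcard' : (A.erase a).card = N := by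
      rw [Finset.card_erase_of_mem ha, hcard]
      omega
    have hA' : ∀ a' ∈ A.erase a,
        ((B.erase b).filter (fun b' => g b' = f a')).card
          = ((A.erase a).filter (fun a'' => f a'' = f a')).card := by
      intro a' ha'
      rw [card_filter_erase B b hbB, card_filter_erase A a ha,
        hA a' (Finset.mem_of_mem_erase ha'), hgb]
    have hB' : ∀ b' ∈ B.erase b,
        ((A.erase a).filter (fun a' => f a' = g b')).card
          = ((B.erase b).filter (fun b'' => g b'' = g b')).card := by
      intro b' hb'
      rw [card_filter_erase A a ha, card_filter_erase B b hbB,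
        hB b' (Finset.mem_of_mem_erase hb'), hgb]
    obtain ⟨σ', hinj', himg', hval'⟩ := ih (A.erase a) (B.erase b) f g hcard' hA' hB'
    refine ⟨fun x => if x = a then b else σ' x, ?_, ?_, ?_⟩
    · intro x hx y hy hxy
      simp only [Finset.mem_coe] at hx hy
      by_cases hxa : x = a <;> by_cases hya : y = a
      · rw [hxa, hya]
      · exfalso
        have hxy' : b = σ' y := by simpa [hxa, hya] using hxy
        have hyA' : y ∈ A.erase a := Finset.mem_erase.mpr ⟨hya, hy⟩
        have hmem : σ' y ∈ (A.erase a).image σ' := Finset.mem_image_of_mem σ' hyA'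
        rw [himg'] at hmem
        exact (Finset.notMem_erase b B) (hxy' ▸ hmem)
      · exfalso
        have hxy' : σ' x = b := by simpa [hxa, hya] using hxy
        have hxA' : x ∈ A.erase a := Finset.mem_erase.mpr ⟨hxa, hx⟩
        have hmem : σ' x ∈ (A.erase a).image σ' := Finset.mem_image_of_mem σ' hxA'
        rw [himg'] at hmem
        exact (Finset.notMem_erase b B) (hxy' ▸ hmem)
      · have hxy' : σ' x = σ' y := by simpa [hxa, hya] using hxy
        exact hinj' (Finset.mem_coe.mpr (Finset.mem_erase.mpr ⟨hxa, hx⟩))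
          (Finset.mem_coe.mpr (Finset.mem_erase.mpr ⟨hya, hy⟩)) hxy'
    · have hAins : A = insert a (A.erase a) := (Finset.insert_erase ha).symm
      rw [hAins, Finset.image_insert, if_pos rfl]
      have : (A.erase a).image (fun x => if x = a then b else σ' x)
          = (A.erase a).image σ' := by
        apply Finset.image_congr
        intro x hx
        simp only [Finset.mem_coe] at hx
        simp [(Finset.mem_erase.mp hx).1]
      rw [this, himg', Finset.insert_erase hbB]
    · intro x hx
      by_cases hxa : x = a
      · subst hxa
        simpa using hgb
      · simpa [hxa] using hval' x (Finset.mem_erase.mpr ⟨hxa, hx⟩)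

end Matching

section Cls

/-- Graphs on `Fin c`, for varying `c`. -/
def GraphSig : Type := Σ c : ℕ, SimpleGraph (Fin c)

instance graphSigSetoid : Setoid GraphSig where
  r a b := Nonempty (a.2 ≃g b.2)
  iseqv := ⟨fun a => ⟨Iso.refl⟩, fun ⟨e⟩ => ⟨e.symm⟩, fun ⟨e⟩ ⟨e'⟩ => ⟨e.trans e'⟩⟩

/-- Canonical representative of the induced subgraph on `s`. -/
noncomputable def canon (G : SimpleGraph (Fin n)) (s : Finset (Fin n)) :
    SimpleGraph (Fin s.card) :=
  SimpleGraph.comap (fun i => (↑((s.orderIsoOfFin rfl) i) : Fin n) : Fin s.card → Fin n) G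

/-- `canon` is isomorphic to the induced subgraph. -/
noncomputable def canonIso (G : SimpleGraph (Fin n)) (s : Finset (Fin n)) :
    canon G s ≃g G.induce (↑s : Set (Fin n)) where
  toEquiv := (s.orderIsoOfFin rfl).toEquiv.trans
    ((Equiv.refl _).subtypeEquiv (fun a => by simp))
  map_rel_iff' := Iff.rfl

/-- The isomorphism class of the induced subgraph on `s`. -/
noncomputable def cls (G : SimpleGraph (Fin n)) (s : Finset (Fin n)) :
    Quotient graphSigSetoid :=
  ⟦⟨s.card, canon G s⟩⟧

lemma cls_eq_iff {G H : SimpleGraph (Fin n)} {s t : Finset (Fin n)} :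
    cls G s = cls H t ↔
      Nonempty (G.induce (↑s : Set (Fin n)) ≃g H.induce (↑t : Set (Fin n))) := by
  rw [cls, cls]
  refine Quotient.eq.trans ?_
  constructor
  · rintro ⟨e⟩
    exact ⟨((canonIso G s).symm.trans e).trans (canonIso H t)⟩
  · rintro ⟨e⟩
    exact ⟨((canonIso G s).trans e).trans (canonIso H t).symm⟩

lemma card_eq_of_iso {G H : SimpleGraph (Fin n)} {s t : Finset (Fin n)}
    (e : G.induce (↑s : Set (Fin n)) ≃g H.induce (↑t : Set (Fin n))) :
    s.card = t.card := by
  have h1 : Fintype.card (↑s : Set (Fin n)) = Fintype.card (↑t : Set (Fin n)) :=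
    Fintype.card_congr e.toEquiv
  simpa using h1

end Cls

section CompCnt

variable {G H : SimpleGraph (Fin n)}

/-- Number of components of `G` of size `c` isomorphic to the pattern `P`. -/
noncomputable def compCnt (G : SimpleGraph (Fin n)) (c : ℕ) {m : ℕ}
    (P : SimpleGraph (Fin m)) : ℕ :=
  (((Finset.univ : Finset (Fin n)).powersetCard c).filter
    (fun (s : Finset (Fin n)) =>
      Nonempty (G.induce (↑s : Set (Fin n)) ≃g P) ∧ IsCompSet G s)).card

lemma IsCompSet.card_le {k : ℕ} {s : Finset (Fin n)} (hs : IsCompSet G s)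
    (hG : ∀ v, (compF G v).card ≤ k) : s.card ≤ k := by
  obtain ⟨v, hv⟩ := hs.nonempty
  rw [hs.eq_compF hv]
  exact hG v

lemma compCnt_zero_of_big {k c m : ℕ} (hG : ∀ v, (compF G v).card ≤ k) (hc : k < c)
    (P : SimpleGraph (Fin m)) : compCnt G c P = 0 := by
  rw [compCnt, Finset.card_eq_zero, Finset.eq_empty_iff_forall_notMem]
  intro s hs
  rw [Finset.mem_filter, Finset.mem_powersetCard] at hs
  have := hs.2.2.card_le hG
  omega

/-- fiber of the class map over component sets -/
lemma fiber_filter_eq (X Y : SimpleGraph (Fin n)) (D : Finset (Fin n)) :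
    ((Finset.univ : Finset (Finset (Fin n))).filter
        (fun (s : Finset (Fin n)) => IsCompSet X s)).filter
        (fun s => cls X s = cls Y D)
      = ((Finset.univ : Finset (Fin n)).powersetCard D.card).filter
        (fun (s : Finset (Fin n)) =>
          Nonempty (X.induce (↑s : Set (Fin n)) ≃g canon Y D) ∧ IsCompSet X s) := by
  ext s
  simp only [Finset.mem_filter, Finset.mem_univ, true_and, Finset.mem_powersetCard,
    Finset.subset_univ]
  constructor
  · rintro ⟨hC, hcls⟩
    obtain ⟨e⟩ := cls_eq_iff.mp hcls
    exact ⟨card_eq_of_iso e, ⟨e.trans (canonIso Y D).symm⟩, hC⟩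
  · rintro ⟨hcard, ⟨e⟩, hC⟩
    exact ⟨hC, cls_eq_iff.mpr ⟨e.trans (canonIso Y D)⟩⟩

lemma fiber_filter_big_eq (X Y : SimpleGraph (Fin n)) (D : Finset (Fin n)) (c : ℕ)
    (hc : c < D.card) :
    ((Finset.univ : Finset (Finset (Fin n))).filter
        (fun (s : Finset (Fin n)) => IsCompSet X s ∧ c < s.card)).filter
        (fun s => cls X s = cls Y D)
      = ((Finset.univ : Finset (Finset (Fin n))).filter
        (fun (s : Finset (Fin n)) => IsCompSet X s)).filter
        (fun s => cls X s = cls Y D) := by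
  ext s
  simp only [Finset.mem_filter, Finset.mem_univ, true_and]
  constructor
  · rintro ⟨⟨hC, _⟩, hcls⟩
    exact ⟨hC, hcls⟩
  · rintro ⟨hC, hcls⟩
    obtain ⟨e⟩ := cls_eq_iff.mp hcls
    exact ⟨⟨hC, by rw [card_eq_of_iso e]; exact hc⟩, hcls⟩

lemma compCnt_key {k : ℕ} (hkn : k ≤ n)
    (hG : ∀ v, (compF G v).card ≤ k) (hH : ∀ v, (compF H v).card ≤ k)
    (hcnt : ∀ c : ℕ, c ≤ k → ∀ (m : ℕ) (P : SimpleGraph (Fin m)),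
      subCnt G Finset.univ c P = subCnt H Finset.univ c P) :
    ∀ (j c : ℕ), k < c + j → ∀ (m : ℕ) (P : SimpleGraph (Fin m)),
      compCnt G c P = compCnt H c P := by
  intro j
  induction j with
  | zero =>
    intro c hc m P
    rw [compCnt_zero_of_big hG (by omega) P, compCnt_zero_of_big hH (by omega) P]
  | succ j ih =>
    intro c hc m P
    by_cases hck : k < c
    · rw [compCnt_zero_of_big hG hck P, compCnt_zero_of_big hH hck P]
    push_neg at hck
    by_cases hPconn : P.Connected
    case neg =>
      have hzero : ∀ (X : SimpleGraph (Fin n)), compCnt X c P = 0 := by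
        intro X
        rw [compCnt, Finset.card_eq_zero, Finset.eq_empty_iff_forall_notMem]
        intro s hs
        rw [Finset.mem_filter] at hs
        obtain ⟨_, ⟨e⟩, hC⟩ := hs
        exact hPconn (e.connected_iff.mp hC.1)
      rw [hzero G, hzero H]
    case pos =>
      -- the set of "big" component sets
      set BigG := (Finset.univ : Finset (Finset (Fin n))).filter
        (fun (s : Finset (Fin n)) => IsCompSet G s ∧ c < s.card) with hBigG
      set BigH := (Finset.univ : Finset (Finset (Fin n))).filter
        (fun (s : Finset (Fin n)) => IsCompSet H s ∧ c < s.card) with hBigH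
      -- decomposition of subCnt into component part and bad part
      have decomp : ∀ (X : SimpleGraph (Fin n)),
          subCnt X Finset.univ c P = compCnt X c P
            + (((Finset.univ : Finset (Fin n)).powersetCard c).filter
                (fun (s : Finset (Fin n)) =>
                  Nonempty (X.induce (↑s : Set (Fin n)) ≃g P) ∧ ¬ IsCompSet X s)).card := by
        intro X
        rw [subCnt, compCnt]
        rw [← Finset.filter_filter, ← Finset.filter_filter]
        exact (Finset.card_filter_add_card_filter_not
          (p := fun s => IsCompSet X s)).symm
      -- the bad part is a union over big components
      have badUnion : ∀ (X : SimpleGraph (Fin n)) (hX : ∀ v, (compF X v).card ≤ k),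
          ((Finset.univ : Finset (Fin n)).powersetCard c).filter
              (fun (s : Finset (Fin n)) =>
                Nonempty (X.induce (↑s : Set (Fin n)) ≃g P) ∧ ¬ IsCompSet X s)
            = ((Finset.univ : Finset (Finset (Fin n))).filter
                (fun (s : Finset (Fin n)) => IsCompSet X s ∧ c < s.card)).biUnion
              (fun D => (D.powersetCard c).filter
                (fun (s : Finset (Fin n)) =>
                  Nonempty (X.induce (↑s : Set (Fin n)) ≃g P))) := by
        intro X hX
        ext s
        simp only [Finset.mem_filter, Finset.mem_powersetCard, Finset.subset_univ, true_and,
          Finset.mem_biUnion, Finset.mem_univ]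
        constructor
        · rintro ⟨hcard, ⟨e⟩, hnc⟩
          have hconn : (X.induce (↑s : Set (Fin n))).Connected :=
            e.connected_iff.mpr hPconn
          obtain ⟨⟨v, hv⟩⟩ := hconn.nonempty
          have hvs : v ∈ s := by exact_mod_cast hv
          have hsub := subset_compF_of_connected hconn hvs
          have hlt : c < (compF X v).card := by
            have hle : s.card ≤ (compF X v).card := Finset.card_le_card hsub
            rcases lt_or_eq_of_le hle with h | h
            · omega
            · exfalso
              have heq : s = compF X v := Finset.eq_of_subset_of_card_le hsub (by omega)
              rw [heq] at hnc
              exact hnc (compF_isCompSet X v)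
          exact ⟨compF X v, ⟨compF_isCompSet X v, hlt⟩, ⟨hsub, hcard⟩, ⟨e⟩⟩
        · rintro ⟨D, ⟨hD, hDc⟩, ⟨hsub, hcard⟩, ⟨e⟩⟩
          refine ⟨hcard, ⟨e⟩, ?_⟩
          intro hcs
          obtain ⟨v, hv⟩ := hcs.nonempty
          have h1 : s = compF X v := hcs.eq_compF hv
          have h2 : D = compF X v := hD.eq_compF (hsub hv)
          rw [h1, ← h2] at hcard
          omega
      -- disjointness for the union
      have disj : ∀ (X : SimpleGraph (Fin n)),
          ∀ D1 ∈ (Finset.univ : Finset (Finset (Fin n))).filter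
              (fun (s : Finset (Fin n)) => IsCompSet X s ∧ c < s.card),
          ∀ D2 ∈ (Finset.univ : Finset (Finset (Fin n))).filter
              (fun (s : Finset (Fin n)) => IsCompSet X s ∧ c < s.card),
          D1 ≠ D2 →
          Disjoint ((D1.powersetCard c).filter
              (fun (s : Finset (Fin n)) =>
                Nonempty (X.induce (↑s : Set (Fin n)) ≃g P)))
            ((D2.powersetCard c).filter
              (fun (s : Finset (Fin n)) =>
                Nonempty (X.induce (↑s : Set (Fin n)) ≃g P))) := by
        intro X D1 hD1 D2 hD2 hne
        rw [Finset.mem_filter] at hD1 hD2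
        rw [Finset.disjoint_left]
        intro s hs1 hs2
        rw [Finset.mem_filter, Finset.mem_powersetCard] at hs1 hs2
        obtain ⟨⟨hsub1, hcard1⟩, ⟨e⟩⟩ := hs1
        obtain ⟨⟨hsub2, _⟩, _⟩ := hs2
        have hconn : (X.induce (↑s : Set (Fin n))).Connected :=
          e.connected_iff.mpr hPconn
        obtain ⟨⟨v, hv⟩⟩ := hconn.nonempty
        have hvs : v ∈ s := by exact_mod_cast hv
        exact hne ((hD1.2.1.eq_compF (hsub1 hvs)).trans (hD2.2.1.eq_compF (hsub2 hvs)).symm)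
      -- matching between big components of G and H
      have hfibG : ∀ D ∈ BigG,
          (BigH.filter (fun E => cls H E = cls G D)).card
            = (BigG.filter (fun D' => cls G D' = cls G D)).card := by
        intro D hD
        rw [hBigG, Finset.mem_filter] at hD
        obtain ⟨_, hDC, hDc⟩ := hD
        have hDk : D.card ≤ k := hDC.card_le hG
        rw [hBigH, hBigG, fiber_filter_big_eq H G D c hDc, fiber_filter_big_eq G G D c hDc,
          fiber_filter_eq H G D, fiber_filter_eq G G D]
        exact (ih D.card (by omega) D.card (canon G D)).symm
      have hfibH : ∀ E ∈ BigH,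
          (BigG.filter (fun D => cls G D = cls H E)).card
            = (BigH.filter (fun E' => cls H E' = cls H E)).card := by
        intro E hE
        rw [hBigH, Finset.mem_filter] at hE
        obtain ⟨_, hEC, hEc⟩ := hE
        have hEk : E.card ≤ k := hEC.card_le hH
        rw [hBigH, hBigG, fiber_filter_big_eq G H E c hEc, fiber_filter_big_eq H H E c hEc,
          fiber_filter_eq G H E, fiber_filter_eq H H E]
        exact ih E.card (by omega) E.card (canon H E)
      obtain ⟨σ, hinj, himg, hval⟩ := matching_lemma BigG.card BigG BigH
        (cls G) (cls H) rfl hfibG hfibH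
      -- sums over big components agree
      have hsums : ∑ D ∈ BigG, subCnt G D c P = ∑ E ∈ BigH, subCnt H E c P := by
        rw [← himg, Finset.sum_image (fun x hx y hy h => hinj hx hy h)]
        refine Finset.sum_congr rfl fun D hD => ?_
        obtain ⟨e⟩ := cls_eq_iff.mp (hval D hD)
        exact (subCnt_congr e c P).symm
      -- put everything together
      have hdecG := decomp G
      have hdecH := decomp H
      rw [badUnion G hG, Finset.card_biUnion (disj G)] at hdecG
      rw [badUnion H hH, Finset.card_biUnion (disj H)] at hdecH
      have hsub := hcnt c hck m P
      rw [hdecG, hdecH] at hsub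
      have : ∑ D ∈ BigG, subCnt G D c P
          = ∑ u ∈ BigG, (((u.powersetCard c)).filter
              (fun (s : Finset (Fin n)) =>
                Nonempty (G.induce (↑s : Set (Fin n)) ≃g P))).card := rfl
      rw [hBigG, hBigH] at hsums
      rw [show (∑ u ∈ (Finset.univ : Finset (Finset (Fin n))).filter
          (fun (s : Finset (Fin n)) => IsCompSet G s ∧ c < s.card),
            (((u.powersetCard c)).filter
              (fun (s : Finset (Fin n)) =>
                Nonempty (G.induce (↑s : Set (Fin n)) ≃g P))).card)
          = ∑ E ∈ (Finset.univ : Finset (Finset (Fin n))).filter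
          (fun (s : Finset (Fin n)) => IsCompSet H s ∧ c < s.card),
            (((E.powersetCard c)).filter
              (fun (s : Finset (Fin n)) =>
                Nonempty (H.induce (↑s : Set (Fin n)) ≃g P))).card from hsums] at hsub
      omega

end CompCnt

section Glue

variable {G H : SimpleGraph (Fin n)}

lemma glue (σ : Finset (Fin n) → Finset (Fin n))
    (hinj : Set.InjOn σ ↑((Finset.univ : Finset (Finset (Fin n))).filter
      (fun (s : Finset (Fin n)) => IsCompSet G s)))
    (himg : ((Finset.univ : Finset (Finset (Fin n))).filter
        (fun (s : Finset (Fin n)) => IsCompSet G s)).image σ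
      = (Finset.univ : Finset (Finset (Fin n))).filter
        (fun (s : Finset (Fin n)) => IsCompSet H s))
    (hval : ∀ D ∈ (Finset.univ : Finset (Finset (Fin n))).filter
        (fun (s : Finset (Fin n)) => IsCompSet G s),
      cls H (σ D) = cls G D) :
    Nonempty (G ≃g H) := by
  classical
  set CompG := (Finset.univ : Finset (Finset (Fin n))).filter
    (fun (s : Finset (Fin n)) => IsCompSet G s) with hCompG
  set CompH := (Finset.univ : Finset (Finset (Fin n))).filter
    (fun (s : Finset (Fin n)) => IsCompSet H s) with hCompH
  have hiso : ∀ D, D ∈ CompG →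
      Nonempty (G.induce (↑D : Set (Fin n)) ≃g H.induce (↑(σ D) : Set (Fin n))) :=
    fun D hD => (cls_eq_iff.mp (hval D hD)).map (fun e => e.symm)
  have ch : ∀ D, D ∈ CompG →
      (G.induce (↑D : Set (Fin n)) ≃g H.induce (↑(σ D) : Set (Fin n))) :=
    fun D hD => (hiso D hD).some
  have hmemG : ∀ v : Fin n, compF G v ∈ CompG := fun v =>
    Finset.mem_filter.mpr ⟨Finset.mem_univ _, compF_isCompSet G v⟩
  have hself : ∀ v : Fin n, v ∈ (↑(compF G v) : Set (Fin n)) := fun v =>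
    Finset.mem_coe.mpr (self_mem_compF v)
  set F : Fin n → Fin n :=
    fun v => ↑(ch (compF G v) (hmemG v) ⟨v, hself v⟩) with hF
  have align : ∀ (D D' : Finset (Fin n)) (h : D = D') (hm : D ∈ CompG) (hm' : D' ∈ CompG)
      (x : Fin n) (hx : x ∈ (↑D : Set (Fin n))) (hx' : x ∈ (↑D' : Set (Fin n))),
      (↑(ch D hm ⟨x, hx⟩) : Fin n) = ↑(ch D' hm' ⟨x, hx'⟩) := by
    intro D D' h
    subst h
    intros
    rfl
  have hFmem : ∀ v : Fin n, F v ∈ σ (compF G v) := fun v => by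
    have := (ch (compF G v) (hmemG v) ⟨v, hself v⟩).2
    exact_mod_cast this
  have hσComp : ∀ D, D ∈ CompG → IsCompSet H (σ D) := by
    intro D hD
    have : σ D ∈ CompH := by
      rw [← himg]
      exact Finset.mem_image_of_mem σ hD
    exact (Finset.mem_filter.mp this).2
  have hσeq_of : ∀ u v : Fin n, F u ∈ σ (compF G v) →
      σ (compF G u) = σ (compF G v) := by
    intro u v hmem
    rcases (hσComp _ (hmemG u)).eq_or_disjoint (hσComp _ (hmemG v)) with heq | hdisj
    · exact heq
    · exact absurd (hFmem u) (Finset.disjoint_left.mp hdisj.symm hmem)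
  have hDeq_of : ∀ u v : Fin n, σ (compF G u) = σ (compF G v) →
      compF G u = compF G v := fun u v h =>
    hinj (Finset.mem_coe.mpr (hmemG u)) (Finset.mem_coe.mpr (hmemG v)) h
  -- injectivity
  have hinjF : Function.Injective F := by
    intro u v huv
    have hσeq : σ (compF G u) = σ (compF G v) :=
      hσeq_of u v (by rw [huv]; exact hFmem v)
    have hDeq : compF G u = compF G v := hDeq_of u v hσeq
    have hvmem : v ∈ (↑(compF G u) : Set (Fin n)) := by
      rw [hDeq]; exact hself v
    have hFv : F v = ↑(ch (compF G u) (hmemG u) ⟨v, hvmem⟩) :=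
      align (compF G v) (compF G u) hDeq.symm (hmemG v) (hmemG u) v (hself v) hvmem
    rw [hFv] at huv
    have := (ch (compF G u) (hmemG u)).toEquiv.injective (Subtype.ext huv)
    exact congrArg Subtype.val this
  -- surjectivity
  have hsurjF : Function.Surjective F := by
    intro w
    have hwH : compF H w ∈ CompG.image σ := by
      rw [himg]
      exact Finset.mem_filter.mpr ⟨Finset.mem_univ _, compF_isCompSet H w⟩
    obtain ⟨D, hD, hσD⟩ := Finset.mem_image.mp hwH
    have hw : w ∈ (↑(σ D) : Set (Fin n)) := by
      rw [hσD]
      exact Finset.mem_coe.mpr (self_mem_compF w)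
    set y := (ch D hD).symm ⟨w, hw⟩ with hy
    have hymem : (↑y : Fin n) ∈ (↑D : Set (Fin n)) := y.2
    have hyD : (↑y : Fin n) ∈ D := by exact_mod_cast hymem
    have hDcomp : IsCompSet G D := (Finset.mem_filter.mp hD).2
    have hDeq : compF G ↑y = D := (hDcomp.eq_compF hyD).symm
    refine ⟨↑y, ?_⟩
    have h1 : F ↑y = ↑(ch D hD ⟨↑y, hymem⟩) :=
      align (compF G ↑y) D hDeq (hmemG _) hD ↑y (hself _) hymem
    rw [h1]
    have h2 : (⟨↑y, hymem⟩ : (↑D : Set (Fin n))) = y := Subtype.ext rfl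
    rw [h2, hy]
    rw [show (ch D hD) ((ch D hD).symm ⟨w, hw⟩) = ⟨w, hw⟩ from
      (ch D hD).toEquiv.apply_symm_apply ⟨w, hw⟩]
  -- adjacency
  have hadj : ∀ u v : Fin n, H.Adj (F u) (F v) ↔ G.Adj u v := by
    intro u v
    constructor
    · intro h
      have hσeq : σ (compF G u) = σ (compF G v) := by
        by_contra hne
        have hFvnot : F v ∉ σ (compF G u) := by
          rcases (hσComp _ (hmemG u)).eq_or_disjoint (hσComp _ (hmemG v)) with heq | hdisj
          · exact absurd heq hne
          · exact Finset.disjoint_left.mp hdisj.symm (hFmem v)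
        exact (hσComp _ (hmemG u)).2 (F u) (hFmem u) (F v) hFvnot h
      have hDeq : compF G u = compF G v := hDeq_of u v hσeq
      have hvmem : v ∈ (↑(compF G u) : Set (Fin n)) := by
        rw [hDeq]; exact hself v
      have hFv : F v = ↑(ch (compF G u) (hmemG u) ⟨v, hvmem⟩) :=
        align (compF G v) (compF G u) hDeq.symm (hmemG v) (hmemG u) v (hself v) hvmem
      rw [hFv] at h
      have h2 : (H.induce (↑(σ (compF G u)) : Set (Fin n))).Adj
          (ch (compF G u) (hmemG u) ⟨u, hself u⟩)
          (ch (compF G u) (hmemG u) ⟨v, hvmem⟩) := h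
      have h3 := (ch (compF G u) (hmemG u)).map_rel_iff.mp h2
      exact h3
    · intro h
      have hvcomp : v ∈ compF G u := mem_compF.mpr h.reachable
      have hDeq : compF G v = compF G u := compF_congr hvcomp
      have hvmem : v ∈ (↑(compF G u) : Set (Fin n)) := Finset.mem_coe.mpr hvcomp
      have hFv : F v = ↑(ch (compF G u) (hmemG u) ⟨v, hvmem⟩) :=
        align (compF G v) (compF G u) hDeq (hmemG v) (hmemG u) v (hself v) hvmem
      rw [hFv]
      have h2 : (G.induce (↑(compF G u) : Set (Fin n))).Adj ⟨u, hself u⟩ ⟨v, hvmem⟩ := h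
      exact (ch (compF G u) (hmemG u)).map_rel_iff.mpr h2
  exact ⟨⟨Equiv.ofBijective F ⟨hinjF, hsurjF⟩, fun {a b} => hadj a b⟩⟩

end Glue

end Recon

open Recon in
/-- If `n > 2ℓ` and every component of the `n`-vertex graph `G` has at most `n-ℓ`
vertices, then any `n`-vertex graph with the same `(n-ℓ)`-deck as `G` is isomorphic
to `G`. -/
theorem reconstructible_of_small_components (n ℓ : ℕ) (hℓ : 1 ≤ ℓ) (hn : 2 * ℓ < n)
    (G : SimpleGraph (Fin n))
    (hcomp : ∀ c : G.ConnectedComponent, Nat.card c.supp ≤ n - ℓ)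
    (H : SimpleGraph (Fin n)) (hdeck : SameDeck G H (n - ℓ)) :
    Nonempty (G ≃g H) := by
  classical
  set k := n - ℓ with hkdef
  have hkn : k ≤ n := by omega
  have hk1 : 1 ≤ k := by omega
  have h2k : n < 2 * k := by omega
  have hG : ∀ v, (compF G v).card ≤ k := fun v => by
    rw [card_compF]
    exact hcomp _
  have hH : ∀ v, (compF H v).card ≤ k := comps_small_of_deck hdeck hG h2k hk1
  have hcnt : ∀ c : ℕ, c ≤ k → ∀ (m : ℕ) (P : SimpleGraph (Fin m)),
      subCnt G Finset.univ c P = subCnt H Finset.univ c P :=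
    fun c hc m P => subCnt_univ_eq_of_deck hdeck hkn hc P
  have hkey : ∀ (c m : ℕ) (P : SimpleGraph (Fin m)), compCnt G c P = compCnt H c P :=
    fun c m P => compCnt_key hkn hG hH hcnt (k + 1) c (by omega) m P
  have hfibG : ∀ D ∈ (Finset.univ : Finset (Finset (Fin n))).filter
      (fun (s : Finset (Fin n)) => IsCompSet G s),
      (((Finset.univ : Finset (Finset (Fin n))).filter
        (fun (s : Finset (Fin n)) => IsCompSet H s)).filter
          (fun E => cls H E = cls G D)).card
        = (((Finset.univ : Finset (Finset (Fin n))).filter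
        (fun (s : Finset (Fin n)) => IsCompSet G s)).filter
          (fun D' => cls G D' = cls G D)).card := by
    intro D hD
    rw [fiber_filter_eq H G D, fiber_filter_eq G G D]
    exact (hkey D.card D.card (canon G D)).symm
  have hfibH : ∀ E ∈ (Finset.univ : Finset (Finset (Fin n))).filter
      (fun (s : Finset (Fin n)) => IsCompSet H s),
      (((Finset.univ : Finset (Finset (Fin n))).filter
        (fun (s : Finset (Fin n)) => IsCompSet G s)).filter
          (fun D => cls G D = cls H E)).card
        = (((Finset.univ : Finset (Finset (Fin n))).filter
        (fun (s : Finset (Fin n)) => IsCompSet H s)).filter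
          (fun E' => cls H E' = cls H E)).card := by
    intro E hE
    rw [fiber_filter_eq G H E, fiber_filter_eq H H E]
    exact hkey E.card E.card (canon H E)
  obtain ⟨σ, hinj, himg, hval⟩ := matching_lemma
    (((Finset.univ : Finset (Finset (Fin n))).filter
      (fun (s : Finset (Fin n)) => IsCompSet G s)).card)
    ((Finset.univ : Finset (Finset (Fin n))).filter
      (fun (s : Finset (Fin n)) => IsCompSet G s))
    ((Finset.univ : Finset (Finset (Fin n))).filter
      (fun (s : Finset (Fin n)) => IsCompSet H s))
    (cls G) (cls H) rfl hfibG hfibH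
  exact glue σ hinj himg hval
end

section
/- Let n and ℓ be positive integers with ℓ < n. If G is an n-vertex simple graph in which every connected component has fewer than n−ℓ vertices, then every n-vertex simple graph having the same (n−ℓ)-deck as G is isomorphic to G (no restriction on n beyond n > ℓ is needed). -/
open SimpleGraph

set_option linter.unusedSectionVars false
section
variable {V : Type*} [Fintype V] [DecidableEq V] {G H : SimpleGraph V}
section fimg
variable {s t : Set V}

noncomputable def fimg (e : G.induce s ≃g H.induce t) (A : Finset V) (hA : ↑A ⊆ s) : Finset V :=
  A.attach.image (fun a => ((e ⟨a.1, hA a.2⟩ : t) : V))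

lemma mem_fimg (e : G.induce s ≃g H.induce t) (A : Finset V) (hA : ↑A ⊆ s) {x : V} :
    x ∈ fimg e A hA ↔ ∃ a : V, ∃ h : a ∈ A, ((e ⟨a, hA h⟩ : t) : V) = x := by
  simp [fimg]

lemma fimg_subset (e : G.induce s ≃g H.induce t) (A : Finset V) (hA : ↑A ⊆ s) :
    ↑(fimg e A hA) ⊆ t := by
  intro x hx
  rw [Finset.mem_coe, mem_fimg] at hx
  obtain ⟨a, h, rfl⟩ := hx
  exact (e ⟨a, hA h⟩).2

noncomputable def fimgIso (e : G.induce s ≃g H.induce t) (A : Finset V) (hA : ↑A ⊆ s) :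
    G.induce (↑A : Set V) ≃g H.induce (↑(fimg e A hA) : Set V) := by
  refine ⟨Equiv.ofBijective
    (fun a => ⟨((e ⟨a.1, hA a.2⟩ : t) : V), (mem_fimg e A hA).2 ⟨a.1, a.2, rfl⟩⟩) ⟨?_, ?_⟩, ?_⟩
  · intro a b hab
    have h1 : ((e ⟨a.1, hA a.2⟩ : t) : V) = ((e ⟨b.1, hA b.2⟩ : t) : V) := by
      simpa using congrArg Subtype.val hab
    have := e.toEquiv.injective (Subtype.coe_injective h1)
    exact Subtype.ext (congrArg Subtype.val this :)
  · rintro ⟨x, hx⟩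
    obtain ⟨a, h, hax⟩ := (mem_fimg e A hA).1 hx
    exact ⟨⟨a, h⟩, Subtype.ext hax⟩
  · intro a b
    exact e.map_rel_iff
lemma fimg_card (e : G.induce s ≃g H.induce t) (A : Finset V) (hA : ↑A ⊆ s) :
    (fimg e A hA).card = A.card := by
  rw [fimg, Finset.card_image_of_injective _ ?_, Finset.card_attach]
  intro a b hab
  have := e.toEquiv.injective (Subtype.coe_injective hab)
  exact Subtype.ext (congrArg Subtype.val this :)

lemma fimg_fimg (e : G.induce s ≃g H.induce t) (A : Finset V) (hA : ↑A ⊆ s) :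
    fimg e.symm (fimg e A hA) (fimg_subset e A hA) = A := by
  ext x
  rw [mem_fimg]
  constructor
  · rintro ⟨a, h, rfl⟩
    obtain ⟨b, hb, hba⟩ := (mem_fimg e A hA).1 h
    subst hba
    rw [show (⟨((e ⟨b, hA hb⟩ : t) : V), _⟩ : t) = e ⟨b, hA hb⟩ from Subtype.ext rfl]
    simpa using hb
  · intro hx
    refine ⟨((e ⟨x, hA hx⟩ : t) : V), (mem_fimg e A hA).2 ⟨x, hx, rfl⟩, ?_⟩
    rw [show (⟨((e ⟨x, hA hx⟩ : t) : V), _⟩ : t) = e ⟨x, hA hx⟩ from Subtype.ext rfl]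
    simp

end fimg

/-- number of `d`-subsets of `s` inducing a graph isomorphic to `C` -/
noncomputable def cnt {d : ℕ} (G : SimpleGraph V) (C : SimpleGraph (Fin d)) (s : Finset V) : ℕ :=
  (@Finset.filter _ (fun (A : Finset V) => Nonempty (C ≃g G.induce (↑A : Set V)))
    (Classical.decPred _) (s.powersetCard d)).card

lemma cnt_eq_of_iso {d : ℕ} (C : SimpleGraph (Fin d)) {s t : Finset V}
    (e : G.induce (↑s : Set V) ≃g H.induce (↑t : Set V)) : cnt G C s = cnt H C t := by
  classical
  unfold cnt
  have hmem : ∀ (A : Finset V), A ∈ s.powersetCard d → ↑A ⊆ (↑s : Set V) := fun A hA => by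
    rw [Finset.mem_powersetCard] at hA
    exact_mod_cast hA.1
  have hmem' : ∀ (B : Finset V), B ∈ t.powersetCard d → ↑B ⊆ (↑t : Set V) := fun B hB => by
    rw [Finset.mem_powersetCard] at hB
    exact_mod_cast hB.1
  refine Finset.card_bij'
    (fun (A : Finset V) (hA : _) => fimg e A (hmem A (Finset.mem_filter.1 hA).1))
    (fun (B : Finset V) (hB : _) => fimg e.symm B (hmem' B (Finset.mem_filter.1 hB).1)) ?_ ?_ ?_ ?_
  · intro A hA
    obtain ⟨hA1, hA2⟩ := Finset.mem_filter.1 hA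
    rw [Finset.mem_powersetCard] at hA1
    refine Finset.mem_filter.2 ⟨Finset.mem_powersetCard.2 ⟨?_, ?_⟩, ?_⟩
    · exact_mod_cast fimg_subset e A _
    · rw [fimg_card, hA1.2]
    · exact hA2.map (fun i => i.trans (fimgIso e A _))
  · intro B hB
    obtain ⟨hB1, hB2⟩ := Finset.mem_filter.1 hB
    rw [Finset.mem_powersetCard] at hB1
    refine Finset.mem_filter.2 ⟨Finset.mem_powersetCard.2 ⟨?_, ?_⟩, ?_⟩
    · exact_mod_cast fimg_subset e.symm B _
    · rw [fimg_card, hB1.2]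
    · exact hB2.map (fun i => i.trans (fimgIso e.symm B _))
  · intro A hA
    exact fimg_fimg e A _
  · intro B hB
    have := fimg_fimg e.symm B (hmem' B (Finset.mem_filter.1 hB).1)
    simpa using this

lemma cnt_filter {d : ℕ} (G : SimpleGraph V) (C : SimpleGraph (Fin d))
    [DecidablePred (fun A : Finset V => Nonempty (C ≃g G.induce (↑A : Set V)))]
    (s : Finset V) : cnt G C s
      = ((s.powersetCard d).filter
          (fun A : Finset V => Nonempty (C ≃g G.induce (↑A : Set V)))).card := by
  unfold cnt
  rw [Finset.filter_congr_decidable]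

lemma card_supersets {A : Finset V} {d k : ℕ} (hA : A.card = d) (hd : d ≤ k) :
    ((Finset.univ.powersetCard k).filter (fun B => A ⊆ B)).card
      = (Fintype.card V - d).choose (k - d) := by
  classical
  have hc := Finset.card_powersetCard (k - d) Aᶜ
  rw [Finset.card_compl, hA] at hc
  rw [← hc]
  refine Finset.card_nbij' (fun B => B \ A) (fun B' => B' ∪ A) ?_ ?_ ?_ ?_
  · intro B hB
    obtain ⟨hB1, hB2⟩ := Finset.mem_filter.1 hB
    rw [Finset.mem_powersetCard] at hB1
    rw [Finset.mem_coe, Finset.mem_powersetCard]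
    constructor
    · intro x hx
      rw [Finset.mem_sdiff] at hx
      simpa using hx.2
    · rw [Finset.card_sdiff_of_subset hB2, hB1.2, hA]
  · intro B' hB'
    rw [Finset.mem_coe, Finset.mem_powersetCard] at hB'
    refine Finset.mem_filter.2 ⟨Finset.mem_powersetCard.2 ⟨Finset.subset_univ _, ?_⟩,
      Finset.subset_union_right⟩
    have hdisj : Disjoint B' A := by
      rw [Finset.disjoint_left]
      intro x hx hxA
      have := hB'.1 hx
      simp at this
      exact this hxA
    rw [Finset.card_union_of_disjoint hdisj, hB'.2, hA]
    omega
  · intro B hB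
    obtain ⟨hB1, hB2⟩ := Finset.mem_filter.1 hB
    exact Finset.sdiff_union_of_subset hB2
  · intro B' hB'
    rw [Finset.mem_coe, Finset.mem_powersetCard] at hB'
    have hdisj : Disjoint B' A := by
      rw [Finset.disjoint_left]
      intro x hx hxA
      have := hB'.1 hx
      simp at this
      exact this hxA
    show (B' ∪ A) \ A = B'
    rw [Finset.union_sdiff_right]
    exact Finset.sdiff_eq_self_of_disjoint hdisj

lemma sum_cnt_eq {k d : ℕ} (hd : d ≤ k) (G' : SimpleGraph V) (C : SimpleGraph (Fin d)) :
    ∑ B ∈ Finset.univ.powersetCard k, cnt G' C B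
      = cnt G' C Finset.univ * (Fintype.card V - d).choose (k - d) := by
  classical
  set P : Finset V → Prop := fun A => Nonempty (C ≃g G'.induce (↑A : Set V)) with hP
  have hcnt : ∀ s : Finset V, cnt G' C s = ((s.powersetCard d).filter P).card := by
    intro s
    unfold cnt
    congr 1
  set pairs : Finset (Finset V × Finset V) :=
    ((Finset.univ.powersetCard k) ×ˢ (Finset.univ.powersetCard d)).filter
      (fun p => p.2 ⊆ p.1 ∧ P p.2) with hpairs
  have h1 : pairs.card = ∑ B ∈ Finset.univ.powersetCard k, cnt G' C B := by
    rw [Finset.card_eq_sum_card_fiberwise (f := Prod.fst) (t := Finset.univ.powersetCard k)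
      (fun p hp => (Finset.mem_product.1 (Finset.mem_filter.1 hp).1).1)]
    refine Finset.sum_congr rfl (fun B hB => ?_)
    rw [hcnt]
    refine Finset.card_bij (fun p _ => p.2) ?_ ?_ ?_
    · intro p hp
      obtain ⟨hp1, hp2⟩ := Finset.mem_filter.1 hp
      obtain ⟨hp3, hp4⟩ := Finset.mem_filter.1 hp1
      rw [Finset.mem_product] at hp3
      refine Finset.mem_filter.2 ⟨Finset.mem_powersetCard.2 ⟨?_, ?_⟩, hp4.2⟩
      · show p.2 ⊆ B
        rw [← hp2]; exact hp4.1
      · exact (Finset.mem_powersetCard.1 hp3.2).2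
    · intro p hp q hq hpq
      have h1 : p.1 = B := (Finset.mem_filter.1 hp).2
      have h2 : q.1 = B := (Finset.mem_filter.1 hq).2
      exact Prod.ext (h1.trans h2.symm) hpq
    · intro A hA
      obtain ⟨hA1, hA2⟩ := Finset.mem_filter.1 hA
      rw [Finset.mem_powersetCard] at hA1
      refine ⟨(B, A), Finset.mem_filter.2 ⟨Finset.mem_filter.2 ⟨Finset.mem_product.2
        ⟨hB, Finset.mem_powersetCard.2 ⟨Finset.subset_univ _, hA1.2⟩⟩, hA1.1, hA2⟩, rfl⟩, rfl⟩
  have h2 : pairs.card = cnt G' C Finset.univ * (Fintype.card V - d).choose (k - d) := by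
    rw [Finset.card_eq_sum_card_fiberwise (f := Prod.snd)
      (t := (Finset.univ.powersetCard d).filter P) ?_]
    · rw [hcnt]
      rw [Finset.sum_congr rfl (g := fun _ => (Fintype.card V - d).choose (k - d))
        (fun A hA => ?_), Finset.sum_const, smul_eq_mul]
      · obtain ⟨hA1, hA2⟩ := Finset.mem_filter.1 hA
        rw [Finset.mem_powersetCard] at hA1
        rw [← card_supersets hA1.2 hd]
        refine Finset.card_bij (fun p _ => p.1) ?_ ?_ ?_
        · intro p hp
          obtain ⟨hp1, hp2⟩ := Finset.mem_filter.1 hp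
          obtain ⟨hp3, hp4⟩ := Finset.mem_filter.1 hp1
          rw [Finset.mem_product] at hp3
          refine Finset.mem_filter.2 ⟨hp3.1, ?_⟩
          show A ⊆ p.1
          rw [← hp2]; exact hp4.1
        · intro p hp q hq hpq
          have h1 : p.2 = A := (Finset.mem_filter.1 hp).2
          have h2 : q.2 = A := (Finset.mem_filter.1 hq).2
          exact Prod.ext hpq (h1.trans h2.symm)
        · intro B hB
          obtain ⟨hB1, hB2⟩ := Finset.mem_filter.1 hB
          exact ⟨(B, A), Finset.mem_filter.2 ⟨Finset.mem_filter.2 ⟨Finset.mem_product.2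
            ⟨hB1, Finset.mem_powersetCard.2 ⟨Finset.subset_univ _, hA1.2⟩⟩, hB2, hA2⟩, rfl⟩, rfl⟩
    · intro p hp
      obtain ⟨hp1, hp2⟩ := Finset.mem_filter.1 hp
      obtain ⟨hp3, _⟩ := Finset.mem_product.1 hp1
      exact Finset.mem_filter.2 ⟨(Finset.mem_product.1 hp1).2, hp2.2⟩
  omega

lemma kelly {k d : ℕ} (hd : d ≤ k) (hk : k ≤ Fintype.card V)
    (C : SimpleGraph (Fin d))
    (φ : {s : Finset V // s.card = k} ≃ {s : Finset V // s.card = k})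
    (hφ : ∀ s, Nonempty ((G.induce (↑s.1 : Set V)) ≃g (H.induce (↑(φ s).1 : Set V)))) :
    cnt G C Finset.univ = cnt H C Finset.univ := by
  classical
  have hsum : ∑ B ∈ Finset.univ.powersetCard k, cnt G C B
      = ∑ B ∈ Finset.univ.powersetCard k, cnt H C B := by
    have e1 : ∑ B ∈ Finset.univ.powersetCard k, cnt G C B
        = ∑ s : {s : Finset V // s.card = k}, cnt G C s.1 := by
      rw [← Finset.sum_subtype _ (fun B => Finset.mem_powersetCard_univ) (cnt G C)]
    have e2 : ∑ B ∈ Finset.univ.powersetCard k, cnt H C B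
        = ∑ s : {s : Finset V // s.card = k}, cnt H C s.1 := by
      rw [← Finset.sum_subtype _ (fun B => Finset.mem_powersetCard_univ) (cnt H C)]
    rw [e1, e2, ← Equiv.sum_comp φ (fun s => cnt H C s.1)]
    refine Finset.sum_congr rfl (fun s _ => ?_)
    exact cnt_eq_of_iso C (hφ s).some
  have p1 := sum_cnt_eq hd G C
  have p2 := sum_cnt_eq hd H C
  rw [p1, p2] at hsum
  have hpos : 0 < (Fintype.card V - d).choose (k - d) :=
    Nat.choose_pos (by omega)
  exact Nat.eq_of_mul_eq_mul_right hpos hsum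

lemma comp_conn (G : SimpleGraph V) (K : G.ConnectedComponent) :
    (G.induce K.supp).Connected := by
  classical
  rw [connected_iff]
  constructor
  · rintro ⟨x, hx⟩ ⟨y, hy⟩
    rw [ConnectedComponent.mem_supp_iff] at hx hy
    obtain ⟨p⟩ := ConnectedComponent.exact (hx.trans hy.symm)
    have hsub : {v | v ∈ p.support} ⊆ K.supp := by
      intro w hw
      rw [ConnectedComponent.mem_supp_iff, ← hx]
      exact (ConnectedComponent.sound (Walk.reachable (p.takeUntil w hw))).symm
    have hc := (p.connected_induce_support).preconnected
      ⟨x, by simp⟩ ⟨y, by simp [Walk.end_mem_support]⟩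
    exact hc.map (G.induceHomOfLE hsub).toHom
  · obtain ⟨v, hv⟩ := K.exists_rep
    exact ⟨⟨v, by rw [ConnectedComponent.mem_supp_iff]; exact hv⟩⟩

lemma subset_supp_of_connected {A : Finset V} (h : (G.induce (↑A : Set V)).Connected)
    {x : V} (hx : x ∈ A) : ↑A ⊆ (G.connectedComponentMk x).supp := by
  intro y hy
  rw [ConnectedComponent.mem_supp_iff]
  have := h.preconnected ⟨y, hy⟩ ⟨x, hx⟩
  have := this.map (SimpleGraph.Embedding.induce (↑A : Set V)).toHom
  exact ConnectedComponent.sound this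

lemma singleton_conn (G : SimpleGraph V) (v : V) :
    (G.induce (↑({v} : Finset V) : Set V)).Connected := by
  rw [connected_iff]
  refine ⟨fun x y => ?_, ⟨⟨v, by simp⟩⟩⟩
  have hx : x = ⟨v, by simp⟩ := Subtype.ext (by have := x.2; simpa using this)
  have hy : y = ⟨v, by simp⟩ := Subtype.ext (by have := y.2; simpa using this)
  rw [hx, hy]

lemma insert_conn {A : Finset V} (h : (G.induce (↑A : Set V)).Connected)
    {a v : V} (ha : a ∈ A) (hadj : G.Adj a v) :
    (G.induce (↑(insert v A) : Set V)).Connected := by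
  classical
  rw [connected_iff]
  have hsub : (↑A : Set V) ⊆ ↑(insert v A) := by
    intro x hx; simp at hx ⊢; tauto
  have hreach : ∀ x : (↑(insert v A) : Set V),
      (G.induce (↑(insert v A) : Set V)).Reachable x ⟨a, by simp [ha]⟩ := by
    rintro ⟨x, hx⟩
    rcases Finset.mem_insert.1 (by exact_mod_cast hx) with rfl | hxA
    · refine Adj.reachable ?_
      show G.Adj x a
      exact hadj.symm
    · have := (h.preconnected ⟨x, by exact_mod_cast hxA⟩ ⟨a, by exact_mod_cast ha⟩).map
        (G.induceHomOfLE hsub).toHom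
      exact this
  exact ⟨fun x y => (hreach x).trans (hreach y).symm, ⟨⟨v, by simp⟩⟩⟩

lemma crossing_edge {A : Finset V} {u w : V} (p : G.Walk u w) (hu : u ∈ A) (hw : w ∉ A) :
    ∃ a b, a ∈ A ∧ b ∉ A ∧ G.Adj a b := by
  classical
  induction p with
  | nil => exact absurd hu hw
  | @cons x y z hxy q ih =>
    by_cases hy : y ∈ A
    · exact ih hy hw
    · exact ⟨x, y, hu, hy, hxy⟩

lemma grow (G : SimpleGraph V) (K : G.ConnectedComponent) {j : ℕ} (hj1 : 1 ≤ j)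
    (hj2 : j ≤ Nat.card K.supp) :
    ∃ A : Finset V, ↑A ⊆ K.supp ∧ A.card = j ∧ (G.induce (↑A : Set V)).Connected := by
  classical
  induction j with
  | zero => omega
  | succ i ih =>
    rcases Nat.eq_or_lt_of_le hj1 with h1 | h1
    · obtain ⟨v, hv⟩ := K.exists_rep
      refine ⟨{v}, ?_, by simp [← h1], singleton_conn G v⟩
      intro x hx
      simp at hx
      subst hx
      rw [ConnectedComponent.mem_supp_iff]; exact hv
    · obtain ⟨A, hA1, hA2, hA3⟩ := ih (by omega) (by omega)
      have hcard : Nat.card K.supp = (K.supp.toFinset).card := by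
        rw [Nat.card_coe_set_eq, Set.ncard_eq_toFinset_card']
      have hAsub : A ⊆ K.supp.toFinset := fun x hx => Set.mem_toFinset.2 (hA1 hx)
      have hne : A ≠ K.supp.toFinset := by
        intro h
        rw [h] at hA2
        omega
      obtain ⟨w, hwK, hwA⟩ := Finset.exists_of_ssubset (lt_of_le_of_ne hAsub hne)
      obtain ⟨u, hu⟩ := Finset.card_pos.1 (by omega : 0 < A.card)
      have huK : u ∈ K.supp := hA1 hu
      have hwK' : w ∈ K.supp := Set.mem_toFinset.1 hwK
      rw [ConnectedComponent.mem_supp_iff] at huK hwK'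
      obtain ⟨p⟩ := ConnectedComponent.exact (huK.trans hwK'.symm)
      obtain ⟨a, b, haA, hbA, hab⟩ := crossing_edge p hu hwA
      refine ⟨insert b A, ?_, ?_, insert_conn hA3 haA hab⟩
      · intro x hx
        rcases Finset.mem_insert.1 (by exact_mod_cast hx) with rfl | hxA
        · rw [ConnectedComponent.mem_supp_iff]
          rw [← ConnectedComponent.connectedComponentMk_eq_of_adj hab]
          exact hA1 haA
        · exact hA1 hxA
      · rw [Finset.card_insert_of_notMem hbA, hA2]

/-- The support of a component as a finset. -/
noncomputable def suppF {G : SimpleGraph V} (K : G.ConnectedComponent) : Finset V :=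
  (Set.toFinite K.supp).toFinset

lemma coe_suppF {G : SimpleGraph V} (K : G.ConnectedComponent) :
    ↑(suppF K) = K.supp := Set.Finite.coe_toFinset _

lemma mem_suppF {G : SimpleGraph V} {K : G.ConnectedComponent} {x : V} :
    x ∈ suppF K ↔ x ∈ K.supp := Set.Finite.mem_toFinset _

lemma card_suppF {G : SimpleGraph V} (K : G.ConnectedComponent) :
    (suppF K).card = Nat.card K.supp := by
  rw [Nat.card_coe_set_eq, Set.ncard_eq_toFinset_card K.supp (Set.toFinite K.supp)]
  rfl

lemma small_comps {k : ℕ} (hk1 : 1 ≤ k)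
    (hG : ∀ K : G.ConnectedComponent, Nat.card K.supp < k)
    (φ : {s : Finset V // s.card = k} ≃ {s : Finset V // s.card = k})
    (hφ : ∀ s, Nonempty ((G.induce (↑s.1 : Set V)) ≃g (H.induce (↑(φ s).1 : Set V)))) :
    ∀ K : H.ConnectedComponent, Nat.card K.supp < k := by
  intro K
  by_contra hge
  push_neg at hge
  obtain ⟨A, hA1, hA2, hA3⟩ := grow H K hk1 hge
  set s : {s : Finset V // s.card = k} := φ.symm ⟨A, hA2⟩ with hs
  obtain ⟨e⟩ := hφ s
  have hφs : (φ s).1 = A := congrArg Subtype.val (φ.apply_symm_apply ⟨A, hA2⟩)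
  have hconn : (G.induce (↑s.1 : Set V)).Connected := by
    rw [e.connected_iff, hφs]
    exact hA3
  have hpos : 0 < s.1.card := by rw [s.2]; omega
  obtain ⟨u, hu⟩ := Finset.card_pos.1 hpos
  have hsub := subset_supp_of_connected hconn hu
  have hcard : k ≤ Nat.card (G.connectedComponentMk u).supp := by
    classical
    have h1 : s.1 ⊆ (suppF (G.connectedComponentMk u)) := by
      intro x hx
      exact mem_suppF.2 (hsub hx)
    have := Finset.card_le_card h1
    rw [s.2, card_suppF] at this
    exact this
  have := hG (G.connectedComponentMk u)
  omega

lemma cnt_decomp [Nonempty V] {d : ℕ} (hd : 1 ≤ d) (G : SimpleGraph V)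
    (C : SimpleGraph (Fin d)) (hC : C.Connected) [Fintype G.ConnectedComponent] :
    cnt G C Finset.univ = ∑ K : G.ConnectedComponent, cnt G C (suppF K) := by
  classical
  simp only [cnt_filter]
  set f : Finset V → G.ConnectedComponent := fun A =>
    if h : A.Nonempty then G.connectedComponentMk h.choose
    else G.connectedComponentMk (Classical.arbitrary V) with hf
  rw [Finset.card_eq_sum_card_fiberwise (f := f) (t := Finset.univ) (fun _ _ => Finset.mem_univ _)]
  refine Finset.sum_congr rfl (fun K _ => ?_)
  congr 1
  ext A
  simp only [Finset.mem_filter, Finset.mem_powersetCard]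
  constructor
  · rintro ⟨⟨⟨hA1, hA2⟩, hP⟩, hfA⟩
    have hne : A.Nonempty := Finset.card_pos.1 (by omega)
    have hconn : (G.induce (↑A : Set V)).Connected := (hP.some.connected_iff).1 hC
    have hsub := subset_supp_of_connected hconn hne.choose_spec
    rw [hf] at hfA
    simp only [dif_pos hne] at hfA
    refine ⟨⟨?_, hA2⟩, hP⟩
    intro x hx
    rw [mem_suppF, ← hfA]
    exact hsub hx
  · rintro ⟨⟨hA1, hA2⟩, hP⟩
    have hne : A.Nonempty := Finset.card_pos.1 (by omega)
    refine ⟨⟨⟨Finset.subset_univ _, hA2⟩, hP⟩, ?_⟩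
    rw [hf]
    simp only [dif_pos hne]
    have := hA1 hne.choose_spec
    rw [mem_suppF, ConnectedComponent.mem_supp_iff] at this
    exact this

lemma cnt_supp_small {d : ℕ} (G : SimpleGraph V) (C : SimpleGraph (Fin d))
    (K : G.ConnectedComponent) (hK : Nat.card K.supp < d) :
    cnt G C (suppF K) = 0 := by
  classical
  unfold cnt
  rw [Finset.card_eq_zero]
  rw [Finset.filter_eq_empty_iff]
  intro A hA
  rw [Finset.mem_powersetCard] at hA
  have := Finset.card_le_card hA.1
  rw [card_suppF] at this
  omega

lemma cnt_supp_one {d : ℕ} (G : SimpleGraph V) (C : SimpleGraph (Fin d))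
    (K : G.ConnectedComponent) (hK : Nat.card K.supp = d)
    (h : Nonempty (C ≃g G.induce K.supp)) : cnt G C (suppF K) = 1 := by
  classical
  rw [cnt_filter]
  have hps : (suppF K).powersetCard d = {suppF K} := by
    have hcard : (suppF K).card = d := by rw [card_suppF, hK]
    rw [← hcard]
    exact Finset.powersetCard_self _
  rw [hps, Finset.filter_singleton, if_pos, Finset.card_singleton]
  rw [show ((↑(suppF K) : Set V)) = K.supp from coe_suppF K]
  exact h

lemma cnt_supp_zero {d : ℕ} (G : SimpleGraph V) (C : SimpleGraph (Fin d))
    (K : G.ConnectedComponent) (hK : Nat.card K.supp = d)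
    (h : ¬ Nonempty (C ≃g G.induce K.supp)) : cnt G C (suppF K) = 0 := by
  classical
  rw [cnt_filter]
  have hps : (suppF K).powersetCard d = {suppF K} := by
    have hcard : (suppF K).card = d := by rw [card_suppF, hK]
    rw [← hcard]
    exact Finset.powersetCard_self _
  rw [hps, Finset.filter_singleton, if_neg, Finset.card_empty]
  rw [show ((↑(suppF K) : Set V)) = K.supp from coe_suppF K]
  exact h

lemma count_at_size [Nonempty V] {k : ℕ} (hk : k ≤ Fintype.card V)
    (φ : {s : Finset V // s.card = k} ≃ {s : Finset V // s.card = k})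
    (hφ : ∀ s, Nonempty ((G.induce (↑s.1 : Set V)) ≃g (H.induce (↑(φ s).1 : Set V))))
    {d : ℕ} (hd1 : 1 ≤ d) (hdk : d ≤ k)
    (C : SimpleGraph (Fin d)) (hC : C.Connected)
    (θ₁ : {K : G.ConnectedComponent // d + 1 ≤ Nat.card K.supp}
        ≃ {K' : H.ConnectedComponent // d + 1 ≤ Nat.card K'.supp})
    (hθ₁ : ∀ K, Nonempty (G.induce K.1.supp ≃g H.induce ((θ₁ K).1.supp))) :
    Nat.card {K : G.ConnectedComponent //
        Nat.card K.supp = d ∧ Nonempty (C ≃g G.induce K.supp)}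
      = Nat.card {K' : H.ConnectedComponent //
        Nat.card K'.supp = d ∧ Nonempty (C ≃g H.induce K'.supp)} := by
  classical
  -- decomposition of the global count for a graph
  have decomp : ∀ (G' : SimpleGraph V),
      cnt G' C Finset.univ
        = (Finset.univ.filter (fun K : G'.ConnectedComponent =>
            Nat.card K.supp = d ∧ Nonempty (C ≃g G'.induce K.supp))).card
          + ∑ K ∈ Finset.univ.filter (fun K : G'.ConnectedComponent =>
              d + 1 ≤ Nat.card K.supp), cnt G' C (suppF K) := by
    intro G'
    rw [cnt_decomp hd1 G' C hC]
    rw [← Finset.sum_filter_add_sum_filter_not Finset.univ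
      (fun K : G'.ConnectedComponent => Nat.card K.supp = d)]
    congr 1
    · -- size-d components contribute the indicator
      have : ∀ K ∈ Finset.univ.filter (fun K : G'.ConnectedComponent =>
          Nat.card K.supp = d), cnt G' C (suppF K)
            = if Nonempty (C ≃g G'.induce K.supp) then 1 else 0 := by
        intro K hK
        have hKd := (Finset.mem_filter.1 hK).2
        by_cases h : Nonempty (C ≃g G'.induce K.supp)
        · rw [cnt_supp_one G' C K hKd h, if_pos h]
        · rw [cnt_supp_zero G' C K hKd h, if_neg h]
      rw [Finset.sum_congr rfl this, Finset.sum_ite, Finset.sum_const, Finset.sum_const,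
        smul_eq_mul, mul_one, smul_eq_mul, mul_zero, add_zero, Finset.filter_filter]
    · -- the rest : components of size ≠ d
      rw [← Finset.sum_filter_add_sum_filter_not
        (Finset.univ.filter (fun K : G'.ConnectedComponent => ¬ Nat.card K.supp = d))
        (fun K => d + 1 ≤ Nat.card K.supp)]
      have hz : ∑ K ∈ (Finset.univ.filter (fun K : G'.ConnectedComponent =>
          ¬ Nat.card K.supp = d)).filter (fun K => ¬ d + 1 ≤ Nat.card K.supp),
            cnt G' C (suppF K) = 0 := by
        refine Finset.sum_eq_zero (fun K hK => ?_)
        obtain ⟨h1, h2⟩ := Finset.mem_filter.1 hK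
        have h3 := (Finset.mem_filter.1 h1).2
        exact cnt_supp_small G' C K (by omega)
      rw [hz, add_zero]
      congr 1
      ext K
      simp only [Finset.filter_filter, Finset.mem_filter, Finset.mem_univ, true_and]
      omega
  -- the large-size sums agree via θ₁
  have hlarge : ∑ K ∈ Finset.univ.filter (fun K : G.ConnectedComponent =>
        d + 1 ≤ Nat.card K.supp), cnt G C (suppF K)
      = ∑ K ∈ Finset.univ.filter (fun K : H.ConnectedComponent =>
        d + 1 ≤ Nat.card K.supp), cnt H C (suppF K) := by
    rw [Finset.sum_subtype (Finset.univ.filter (fun K : G.ConnectedComponent =>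
        d + 1 ≤ Nat.card K.supp)) (p := fun K => d + 1 ≤ Nat.card K.supp)
        (by intro x; simp) (fun K => cnt G C (suppF K))]
    rw [Finset.sum_subtype (Finset.univ.filter (fun K : H.ConnectedComponent =>
        d + 1 ≤ Nat.card K.supp)) (p := fun K => d + 1 ≤ Nat.card K.supp)
        (by intro x; simp) (fun K => cnt H C (suppF K))]
    rw [← Equiv.sum_comp θ₁ (fun K' => cnt H C (suppF K'.1))]
    refine Finset.sum_congr rfl (fun K _ => ?_)
    have e : G.induce (↑(suppF K.1) : Set V) ≃g H.induce (↑(suppF (θ₁ K).1) : Set V) := by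
      rw [coe_suppF, coe_suppF]
      exact (hθ₁ K).some
    exact cnt_eq_of_iso C e
  have hG' := decomp G
  have hH' := decomp H
  rw [kelly hdk hk C φ hφ] at hG'
  rw [hlarge] at hG'
  have hcards : (Finset.univ.filter (fun K : G.ConnectedComponent =>
      Nat.card K.supp = d ∧ Nonempty (C ≃g G.induce K.supp))).card
    = (Finset.univ.filter (fun K : H.ConnectedComponent =>
      Nat.card K.supp = d ∧ Nonempty (C ≃g H.induce K.supp))).card := by omega
  rw [Nat.card_eq_fintype_card, Nat.card_eq_fintype_card,
    Fintype.card_subtype, Fintype.card_subtype]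
  exact hcards

/-- Setoid of graph isomorphism on graphs on `Fin d`. -/
def isoSetoid (d : ℕ) : Setoid (SimpleGraph (Fin d)) where
  r A B := Nonempty (A ≃g B)
  iseqv := ⟨fun A => ⟨Iso.refl⟩, fun h => ⟨h.some.symm⟩, fun h1 h2 => ⟨h1.some.trans h2.some⟩⟩

lemma exists_fin_iso (G' : SimpleGraph V) (s : Set V) {d : ℕ} (h : Nat.card s = d) :
    ∃ C : SimpleGraph (Fin d), Nonempty (C ≃g G'.induce s) := by
  have hF : Fintype s := Fintype.ofFinite _
  have hcard : Fintype.card s = d := by rw [← Nat.card_eq_fintype_card, h]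
  let eqv : s ≃ Fin d := Fintype.equivFinOfCardEq hcard
  exact ⟨(G'.induce s).comap eqv.symm.toEmbedding, ⟨Iso.comap eqv.symm (G'.induce s)⟩⟩

/-- the iso class of a component of size `d` -/
noncomputable def cls (G' : SimpleGraph V) {d : ℕ}
    (K : {K : G'.ConnectedComponent // Nat.card K.supp = d}) : Quotient (isoSetoid d) :=
  ⟦(exists_fin_iso G' K.1.supp K.2).choose⟧

lemma cls_spec (G' : SimpleGraph V) {d : ℕ}
    (K : {K : G'.ConnectedComponent // Nat.card K.supp = d}) (C : SimpleGraph (Fin d)) :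
    cls G' K = ⟦C⟧ ↔ Nonempty (C ≃g G'.induce K.1.supp) := by
  obtain ⟨e⟩ := (exists_fin_iso G' K.1.supp K.2).choose_spec
  rw [cls, Quotient.eq]
  constructor
  · rintro ⟨f⟩
    exact ⟨f.symm.trans e⟩
  · rintro ⟨g⟩
    exact ⟨e.trans g.symm⟩

/-- split a `{x // d ≤ c x}` subtype into exact size `d` and size `> d` -/
def splitEquiv {α : Type*} (c : α → ℕ) (d : ℕ) :
    {x : α // d ≤ c x} ≃ {x : α // c x = d} ⊕ {x : α // d + 1 ≤ c x} where
  toFun x := if h : c x.1 = d then Sum.inl ⟨x.1, h⟩ else Sum.inr ⟨x.1, by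
    have := x.2; omega⟩
  invFun y := Sum.elim (fun z => ⟨z.1, by omega⟩) (fun z => ⟨z.1, by have := z.2; omega⟩) y
  left_inv x := by
    by_cases h : c x.1 = d
    · simp only [dif_pos h, Sum.elim_inl]
    · simp only [dif_neg h, Sum.elim_inr]
  right_inv y := by
    rcases y with z | z
    · simp only [Sum.elim_inl]
      exact dif_pos z.2
    · have : ¬ c z.1 = d := by have := z.2; omega
      simp only [Sum.elim_inr]
      exact dif_neg this

lemma splitEquiv_inl_val {α : Type*} (c : α → ℕ) (d : ℕ) (z : {x : α // c x = d}) :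
    (((splitEquiv c d).symm (Sum.inl z)) : {x : α // d ≤ c x}).1 = z.1 := rfl

lemma splitEquiv_inr_val {α : Type*} (c : α → ℕ) (d : ℕ) (z : {x : α // d + 1 ≤ c x}) :
    (((splitEquiv c d).symm (Sum.inr z)) : {x : α // d ≤ c x}).1 = z.1 := rfl

lemma step_lemma [Nonempty V] {k : ℕ} (hk : k ≤ Fintype.card V)
    (φ : {s : Finset V // s.card = k} ≃ {s : Finset V // s.card = k})
    (hφ : ∀ s, Nonempty ((G.induce (↑s.1 : Set V)) ≃g (H.induce (↑(φ s).1 : Set V))))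
    {d : ℕ} (hd1 : 1 ≤ d) (hdk : d ≤ k)
    (θ₁ : {K : G.ConnectedComponent // d + 1 ≤ Nat.card K.supp}
        ≃ {K' : H.ConnectedComponent // d + 1 ≤ Nat.card K'.supp})
    (hθ₁ : ∀ K, Nonempty (G.induce K.1.supp ≃g H.induce ((θ₁ K).1.supp))) :
    ∃ θ : {K : G.ConnectedComponent // d ≤ Nat.card K.supp}
        ≃ {K' : H.ConnectedComponent // d ≤ Nat.card K'.supp},
      ∀ K, Nonempty (G.induce K.1.supp ≃g H.induce ((θ K).1.supp)) := by
  classical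
  -- fibers of `cls` are equinumerous
  have key : ∀ q : Quotient (isoSetoid d),
      Nonempty ({K : {K : G.ConnectedComponent // Nat.card K.supp = d} // cls G K = q}
        ≃ {K' : {K' : H.ConnectedComponent // Nat.card K'.supp = d} // cls H K' = q}) := by
    intro q
    induction q using Quotient.ind with
    | _ C =>
    by_cases hC : C.Connected
    · have e1 : {K : {K : G.ConnectedComponent // Nat.card K.supp = d} // cls G K = ⟦C⟧}
          ≃ {K : G.ConnectedComponent //
              Nat.card K.supp = d ∧ Nonempty (C ≃g G.induce K.supp)} :=
        { toFun := fun x => ⟨x.1.1, x.1.2, (cls_spec G x.1 C).1 x.2⟩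
          invFun := fun y => ⟨⟨y.1, y.2.1⟩, (cls_spec G ⟨y.1, y.2.1⟩ C).2 y.2.2⟩
          left_inv := fun x => rfl
          right_inv := fun y => rfl }
      have e2 : {K' : {K' : H.ConnectedComponent // Nat.card K'.supp = d} // cls H K' = ⟦C⟧}
          ≃ {K' : H.ConnectedComponent //
              Nat.card K'.supp = d ∧ Nonempty (C ≃g H.induce K'.supp)} :=
        { toFun := fun x => ⟨x.1.1, x.1.2, (cls_spec H x.1 C).1 x.2⟩
          invFun := fun y => ⟨⟨y.1, y.2.1⟩, (cls_spec H ⟨y.1, y.2.1⟩ C).2 y.2.2⟩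
          left_inv := fun x => rfl
          right_inv := fun y => rfl }
      have hcard := count_at_size hk φ hφ hd1 hdk C hC θ₁ hθ₁
      exact ⟨e1.trans ((Finite.card_eq.mp hcard).some.trans e2.symm)⟩
    · have hGempty : IsEmpty
          {K : {K : G.ConnectedComponent // Nat.card K.supp = d} // cls G K = ⟦C⟧} := by
        refine ⟨fun x => hC ?_⟩
        obtain ⟨f⟩ := (cls_spec G x.1 C).1 x.2
        rw [f.connected_iff]
        exact comp_conn G x.1.1
      have hHempty : IsEmpty
          {K' : {K' : H.ConnectedComponent // Nat.card K'.supp = d} // cls H K' = ⟦C⟧} := by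
        refine ⟨fun x => hC ?_⟩
        obtain ⟨f⟩ := (cls_spec H x.1 C).1 x.2
        rw [f.connected_iff]
        exact comp_conn H x.1.1
      exact ⟨Equiv.equivOfIsEmpty _ _⟩
  -- exact-size matching
  let θd : {K : G.ConnectedComponent // Nat.card K.supp = d}
      ≃ {K' : H.ConnectedComponent // Nat.card K'.supp = d} :=
    Equiv.ofFiberEquiv (f := cls G) (g := cls H) (fun q => (key q).some)
  have hθd : ∀ K, Nonempty (G.induce K.1.supp ≃g H.induce ((θd K).1.supp)) := by
    intro K
    have h1 : cls H (θd K) = ⟦(exists_fin_iso G K.1.supp K.2).choose⟧ :=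
      Equiv.ofFiberEquiv_map (f := cls G) (g := cls H) (fun q => (key q).some) K
    obtain ⟨f⟩ := (cls_spec H (θd K) _).1 h1
    obtain ⟨g⟩ := (exists_fin_iso G K.1.supp K.2).choose_spec
    exact ⟨g.symm.trans f⟩
  -- combine
  refine ⟨(splitEquiv (fun K : G.ConnectedComponent => Nat.card K.supp) d).trans
    ((θd.sumCongr θ₁).trans
      (splitEquiv (fun K' : H.ConnectedComponent => Nat.card K'.supp) d).symm), fun K => ?_⟩
  by_cases h : Nat.card K.1.supp = d
  · have : ((splitEquiv (fun K : G.ConnectedComponent => Nat.card K.supp) d) K)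
        = Sum.inl ⟨K.1, h⟩ := by
      simp only [splitEquiv, Equiv.coe_fn_mk, dif_pos h]
    rw [Equiv.trans_apply, Equiv.trans_apply, this]
    exact hθd ⟨K.1, h⟩
  · have hge : d + 1 ≤ Nat.card K.1.supp := by have := K.2; omega
    have : ((splitEquiv (fun K : G.ConnectedComponent => Nat.card K.supp) d) K)
        = Sum.inr ⟨K.1, hge⟩ := by
      simp only [splitEquiv, Equiv.coe_fn_mk, dif_neg h]
    rw [Equiv.trans_apply, Equiv.trans_apply, this]
    exact hθ₁ ⟨K.1, hge⟩

lemma glue (θ : G.ConnectedComponent ≃ H.ConnectedComponent)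
    (hθ : ∀ K, Nonempty (G.induce K.supp ≃g H.induce (θ K).supp)) :
    Nonempty (G ≃g H) := by
  classical
  have e : ∀ K : G.ConnectedComponent, G.induce K.supp ≃g H.induce (θ K).supp :=
    fun K => (hθ K).some
  have hmemself : ∀ v : V, v ∈ (G.connectedComponentMk v).supp := fun v => rfl
  set f : V → V := fun v => ↑(e (G.connectedComponentMk v) ⟨v, hmemself v⟩) with hfdef
  have f_eq : ∀ (v : V) (K : G.ConnectedComponent) (h : G.connectedComponentMk v = K),
      f v = ↑(e K ⟨v, (ConnectedComponent.mem_supp_iff K v).2 h⟩) := by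
    intro v K h
    subst h
    rfl
  have hmk : ∀ v : V, H.connectedComponentMk (f v) = θ (G.connectedComponentMk v) := by
    intro v
    exact (ConnectedComponent.mem_supp_iff _ _).1 (e (G.connectedComponentMk v) ⟨v, hmemself v⟩).2
  have hinj : Function.Injective f := by
    intro v w hvw
    have h1 : θ (G.connectedComponentMk v) = θ (G.connectedComponentMk w) := by
      rw [← hmk v, ← hmk w, hvw]
    have h2 : G.connectedComponentMk v = G.connectedComponentMk w := θ.injective h1
    set K := G.connectedComponentMk v with hK
    rw [f_eq v K rfl, f_eq w K h2.symm] at hvw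
    have := (e K).toEquiv.injective (Subtype.coe_injective hvw)
    exact congrArg Subtype.val this
  have hsurj : Function.Surjective f := by
    intro w
    set K := θ.symm (H.connectedComponentMk w) with hK
    have hw : w ∈ (θ K).supp := by
      rw [ConnectedComponent.mem_supp_iff, hK, θ.apply_symm_apply]
    set x := (e K).symm ⟨w, hw⟩ with hx
    refine ⟨↑x, ?_⟩
    have hvK : G.connectedComponentMk ↑x = K := (ConnectedComponent.mem_supp_iff _ _).1 x.2
    rw [f_eq ↑x K hvK]
    have : (⟨↑x, (ConnectedComponent.mem_supp_iff K ↑x).2 hvK⟩ : K.supp) = x :=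
      Subtype.ext rfl
    rw [this, hx, RelIso.apply_symm_apply]
  have hadj : ∀ v w : V, H.Adj (f v) (f w) ↔ G.Adj v w := by
    intro v w
    constructor
    · intro h
      have h1 : θ (G.connectedComponentMk v) = θ (G.connectedComponentMk w) := by
        rw [← hmk v, ← hmk w]
        exact ConnectedComponent.connectedComponentMk_eq_of_adj h
      have h2 : G.connectedComponentMk w = G.connectedComponentMk v :=
        (θ.injective h1).symm
      set K := G.connectedComponentMk v with hK
      rw [f_eq v K rfl, f_eq w K h2] at h
      have : (H.induce (θ K).supp).Adj
          (e K ⟨v, (ConnectedComponent.mem_supp_iff K v).2 rfl⟩)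
          (e K ⟨w, (ConnectedComponent.mem_supp_iff K w).2 h2⟩) := h
      exact (e K).map_rel_iff.1 this
    · intro h
      have h2 : G.connectedComponentMk w = G.connectedComponentMk v :=
        (ConnectedComponent.connectedComponentMk_eq_of_adj h).symm
      set K := G.connectedComponentMk v with hK
      rw [f_eq v K rfl, f_eq w K h2]
      have : (G.induce K.supp).Adj
          ⟨v, (ConnectedComponent.mem_supp_iff K v).2 rfl⟩
          ⟨w, (ConnectedComponent.mem_supp_iff K w).2 h2⟩ := h
      exact (e K).map_rel_iff.2 this
  exact ⟨⟨Equiv.ofBijective f ⟨hinj, hsurj⟩, fun {a b} => hadj a b⟩⟩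

lemma mb_aux [Nonempty V] {k : ℕ} (hk : k ≤ Fintype.card V)
    (φ : {s : Finset V // s.card = k} ≃ {s : Finset V // s.card = k})
    (hφ : ∀ s, Nonempty ((G.induce (↑s.1 : Set V)) ≃g (H.induce (↑(φ s).1 : Set V))))
    (hGsmall : ∀ K : G.ConnectedComponent, Nat.card K.supp < k)
    (hHsmall : ∀ K : H.ConnectedComponent, Nat.card K.supp < k) :
    ∀ (j d : ℕ), 1 ≤ d → k ≤ d + j →
      ∃ θ : {K : G.ConnectedComponent // d ≤ Nat.card K.supp}
          ≃ {K' : H.ConnectedComponent // d ≤ Nat.card K'.supp},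
        ∀ K, Nonempty (G.induce K.1.supp ≃g H.induce ((θ K).1.supp)) := by
  intro j
  induction j with
  | zero =>
    intro d hd1 hdk
    have hGe : IsEmpty {K : G.ConnectedComponent // d ≤ Nat.card K.supp} :=
      ⟨fun K => by have := hGsmall K.1; have := K.2; omega⟩
    have hHe : IsEmpty {K' : H.ConnectedComponent // d ≤ Nat.card K'.supp} :=
      ⟨fun K => by have := hHsmall K.1; have := K.2; omega⟩
    exact ⟨Equiv.equivOfIsEmpty _ _, fun K => (hGe.false K).elim⟩
  | succ j ih =>
    intro d hd1 hdk
    by_cases hcase : k ≤ d + j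
    · exact ih d hd1 hcase
    · obtain ⟨θ₁, hθ₁⟩ := ih (d + 1) (by omega) (by omega)
      exact step_lemma hk φ hφ hd1 (by omega) θ₁ hθ₁

end

/-- If `ℓ < n` and every component of the `n`-vertex graph `G` has fewer than `n-ℓ`
vertices, then any `n`-vertex graph with the same `(n-ℓ)`-deck as `G` is isomorphic
to `G` (no further restriction on `n` is needed). -/
theorem reconstructible_of_smaller_components (n ℓ : ℕ) (hℓ : 1 ≤ ℓ) (hn : ℓ < n)
    (G : SimpleGraph (Fin n))
    (hcomp : ∀ c : G.ConnectedComponent, Nat.card c.supp < n - ℓ)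
    (H : SimpleGraph (Fin n)) (hdeck : SameDeck G H (n - ℓ)) :
    Nonempty (G ≃g H) := by
  classical
  set k := n - ℓ with hkdef
  have hk1 : 1 ≤ k := by omega
  have hnpos : 0 < n := by omega
  have hne : Nonempty (Fin n) := ⟨⟨0, hnpos⟩⟩
  obtain ⟨φ, hφ⟩ := hdeck
  have hk : k ≤ Fintype.card (Fin n) := by rw [Fintype.card_fin]; omega
  have hGsmall : ∀ K : G.ConnectedComponent, Nat.card K.supp < k := hcomp
  have hHsmall := small_comps hk1 hGsmall φ hφ
  obtain ⟨θ₁, hθ₁⟩ := mb_aux hk φ hφ hGsmall hHsmall k 1 le_rfl (by omega)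
  have hall : ∀ (G' : SimpleGraph (Fin n)) (K : G'.ConnectedComponent),
      1 ≤ Nat.card K.supp := by
    intro G' K
    obtain ⟨v, hv⟩ := K.exists_rep
    have : Nonempty K.supp := ⟨⟨v, (ConnectedComponent.mem_supp_iff _ _).2 hv⟩⟩
    exact Nat.card_pos
  let eG : G.ConnectedComponent ≃ {K : G.ConnectedComponent // 1 ≤ Nat.card K.supp} :=
    (Equiv.subtypeUnivEquiv (hall G)).symm
  let eH : {K' : H.ConnectedComponent // 1 ≤ Nat.card K'.supp} ≃ H.ConnectedComponent :=
    Equiv.subtypeUnivEquiv (hall H)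
  refine glue ((eG.trans θ₁).trans eH) ?_
  intro K
  exact hθ₁ (eG K)
end

section
/- Let n and ℓ be positive integers with ℓ < n. Let G and H be n-vertex triangle-free simple graphs having the same (n−ℓ)-deck, and suppose that for every integer i with i ≥ n−ℓ, G and H have the same number of vertices of degree i. Then G and H have the same degree list (the multiset of vertex degrees of G equals that of H). -/
open SimpleGraph

/-- The degree of a vertex. -/
noncomputable def ndeg {V : Type*} (G : SimpleGraph V) (v : V) : ℕ :=
  Nat.card {w : V // G.Adj v w}

section ManvelAux

open Finset
open scoped Classical

lemma ndeg_iso' {V W : Type*} {Γ : SimpleGraph V} {Γ' : SimpleGraph W}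
    (e : Γ ≃g Γ') (v : V) : ndeg Γ v = ndeg Γ' (e v) := by
  unfold ndeg
  exact Nat.card_congr (Equiv.subtypeEquiv e.toEquiv (fun w => (e.map_adj_iff).symm))

/-- The `d`-th star count: `∑_v C(deg v, d)`. -/
noncomputable def Ndeg {V : Type*} [Fintype V] (d : ℕ) (Γ : SimpleGraph V) : ℕ :=
  ∑ v, (ndeg Γ v).choose d

lemma Ndeg_iso' {V W : Type*} [Fintype V] [Fintype W] {Γ : SimpleGraph V} {Γ' : SimpleGraph W}
    (e : Γ ≃g Γ') (d : ℕ) : Ndeg d Γ = Ndeg d Γ' := by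
  unfold Ndeg
  exact Fintype.sum_equiv e.toEquiv _ _ (fun v => by rw [ndeg_iso' e]; rfl)

lemma ndeg_induce {n : ℕ} (G : SimpleGraph (Fin n)) (s : Finset (Fin n))
    (v : (↑s : Set (Fin n))) :
    ndeg (SimpleGraph.induce (↑s : Set (Fin n)) G) v
      = (s.filter (fun w => G.Adj ↑v w)).card := by
  unfold ndeg
  rw [Nat.card_eq_fintype_card]
  have e : {w : (↑s : Set (Fin n)) // (SimpleGraph.induce (↑s : Set (Fin n)) G).Adj v w}
      ≃ {w : Fin n // w ∈ s ∧ G.Adj ↑v w} :=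
    { toFun := fun w => ⟨↑w.1, by exact_mod_cast w.1.2, w.2⟩
      invFun := fun w => ⟨⟨w.1, by exact_mod_cast w.2.1⟩, w.2.2⟩
      left_inv := fun w => rfl
      right_inv := fun w => rfl }
  rw [Fintype.card_congr e, Fintype.card_subtype]
  congr 1
  ext w
  simp

lemma ndeg_eq_card_filter {n : ℕ} (G : SimpleGraph (Fin n)) (v : Fin n) :
    ndeg G v = (univ.filter (fun w => G.Adj v w)).card := by
  unfold ndeg
  rw [Nat.card_eq_fintype_card, Fintype.card_subtype]

lemma card_supersets_s8 {α : Type*} [Fintype α] [DecidableEq α] (t : Finset α) (k : ℕ)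
    (h : t.card ≤ k) :
    ((univ.powersetCard k).filter (fun s => t ⊆ s)).card
      = (Fintype.card α - t.card).choose (k - t.card) := by
  rw [← Finset.card_compl t, ← Finset.card_powersetCard]
  apply Finset.card_bij (fun s _ => s \ t)
  · rintro s hs
    simp only [mem_filter, mem_powersetCard] at hs
    obtain ⟨⟨-, hcard⟩, hts⟩ := hs
    rw [mem_powersetCard]
    constructor
    · intro x hx
      simp only [mem_sdiff] at hx
      simp [hx.2]
    · rw [card_sdiff_of_subset hts, hcard]
  · rintro s1 hs1 s2 hs2 heq
    simp only [mem_filter, mem_powersetCard] at hs1 hs2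
    have h1 := Finset.sdiff_union_of_subset hs1.2
    have h2 := Finset.sdiff_union_of_subset hs2.2
    rw [← h1, ← h2, heq]
  · rintro u hu
    rw [mem_powersetCard] at hu
    obtain ⟨hsub, hcard⟩ := hu
    have hdisj : Disjoint u t := by
      refine Finset.disjoint_left.2 fun x hx hxt => ?_
      have := hsub hx
      simp at this
      exact this hxt
    refine ⟨u ∪ t, ?_, ?_⟩
    · simp only [mem_filter, mem_powersetCard]
      refine ⟨⟨subset_univ _, ?_⟩, subset_union_right⟩
      rw [card_union_of_disjoint hdisj, hcard]
      omega
    · rw [Finset.union_sdiff_right, Finset.sdiff_eq_self_of_disjoint hdisj]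

lemma double_count {n : ℕ} (G : SimpleGraph (Fin n)) (d k : ℕ) (hd : d + 1 ≤ k) :
    ∑ s ∈ (univ : Finset (Fin n)).powersetCard k,
        Ndeg d (SimpleGraph.induce (↑s : Set (Fin n)) G)
      = (∑ v, (ndeg G v).choose d) * (n - (d+1)).choose (k - (d+1)) := by
  have step1 : ∀ s : Finset (Fin n),
      Ndeg d (SimpleGraph.induce (↑s : Set (Fin n)) G)
        = ∑ v ∈ s, ((s.filter (fun w => G.Adj v w)).card).choose d := by
    intro s
    unfold Ndeg
    rw [← Finset.sum_coe_sort s (fun v => ((s.filter (fun w => G.Adj v w)).card).choose d)]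
    exact Fintype.sum_equiv (Equiv.subtypeEquivRight (fun x => Finset.mem_coe)) _ _
      (fun v => by rw [ndeg_induce]; rfl)
  have step2 : ∀ (s : Finset (Fin n)) (v : Fin n),
      ((s.filter (fun w => G.Adj v w)).card).choose d
        = ∑ L ∈ ((univ.filter (fun w => G.Adj v w)).powersetCard d),
            if L ⊆ s then 1 else 0 := by
    intro s v
    have : (s.filter (fun w => G.Adj v w)).powersetCard d
        = ((univ.filter (fun w => G.Adj v w)).powersetCard d).filter (fun L => L ⊆ s) := by
      ext L
      simp only [mem_powersetCard, mem_filter, Finset.subset_iff, mem_univ, true_and]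
      constructor
      · rintro ⟨h1, h2⟩
        exact ⟨⟨fun x hx => (h1 hx).2, h2⟩, fun x hx => (h1 hx).1⟩
      · rintro ⟨⟨h1, h2⟩, h3⟩
        exact ⟨fun x hx => ⟨h3 hx, h1 hx⟩, h2⟩
    rw [← Finset.card_powersetCard, this, Finset.card_filter]
  have key : ∀ s : Finset (Fin n), Ndeg d (SimpleGraph.induce (↑s : Set (Fin n)) G)
      = ∑ v : Fin n, ∑ L ∈ ((univ.filter (fun w => G.Adj v w)).powersetCard d),
          if insert v L ⊆ s then 1 else 0 := by
    intro s
    rw [step1]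
    have : ∑ v ∈ s, ((s.filter (fun w => G.Adj v w)).card).choose d
        = ∑ v : Fin n, if v ∈ s then ((s.filter (fun w => G.Adj v w)).card).choose d else 0 := by
      rw [Finset.sum_ite_mem, Finset.univ_inter]
    rw [this]
    refine Finset.sum_congr rfl (fun v _ => ?_)
    by_cases hv : v ∈ s
    · rw [if_pos hv, step2]
      refine Finset.sum_congr rfl (fun L _ => ?_)
      simp [Finset.insert_subset_iff, hv]
    · rw [if_neg hv]
      symm
      refine Finset.sum_eq_zero (fun L _ => ?_)
      simp [Finset.insert_subset_iff, hv]
  calc ∑ s ∈ (univ : Finset (Fin n)).powersetCard k,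
        Ndeg d (SimpleGraph.induce (↑s : Set (Fin n)) G)
      = ∑ s ∈ (univ : Finset (Fin n)).powersetCard k, ∑ v : Fin n,
          ∑ L ∈ ((univ.filter (fun w => G.Adj v w)).powersetCard d),
            if insert v L ⊆ s then 1 else 0 :=
        Finset.sum_congr rfl (fun s _ => key s)
    _ = ∑ v : Fin n, ∑ L ∈ ((univ.filter (fun w => G.Adj v w)).powersetCard d),
          ∑ s ∈ (univ : Finset (Fin n)).powersetCard k,
            if insert v L ⊆ s then 1 else 0 := by
        rw [Finset.sum_comm]
        exact Finset.sum_congr rfl (fun v _ => Finset.sum_comm)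
    _ = ∑ v : Fin n, ∑ L ∈ ((univ.filter (fun w => G.Adj v w)).powersetCard d),
          (n - (d+1)).choose (k - (d+1)) := by
        refine Finset.sum_congr rfl (fun v _ => Finset.sum_congr rfl (fun L hL => ?_))
        have hcard : (insert v L).card = d + 1 := by
          rw [mem_powersetCard] at hL
          rw [Finset.card_insert_of_notMem, hL.2]
          intro hv
          have := hL.1 hv
          simp only [mem_filter] at this
          exact G.irrefl this.2
        have h2 := card_supersets_s8 (α := Fin n) (insert v L) k (by omega)
        rw [hcard, Fintype.card_fin] at h2
        rw [← Finset.card_filter, h2]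
    _ = (∑ v, (ndeg G v).choose d) * (n - (d+1)).choose (k - (d+1)) := by
        rw [Finset.sum_mul]
        refine Finset.sum_congr rfl (fun v _ => ?_)
        rw [Finset.sum_const, Finset.card_powersetCard, ndeg_eq_card_filter, smul_eq_mul]

end ManvelAux

/-- Manvel: if `G` and `H` are triangle-free, have the same `(n-ℓ)`-deck, and have the
same number of vertices of degree `i` for each `i ≥ n-ℓ`, then they have the same
degree list (multiset of vertex degrees). -/
theorem degree_list_determined (n ℓ : ℕ) (hℓ : 1 ≤ ℓ) (hn : ℓ < n)
    (G H : SimpleGraph (Fin n))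
    (hGtf : ∀ (v : Fin n) (c : G.Walk v v), c.IsCycle → c.length ≠ 3)
    (hHtf : ∀ (v : Fin n) (c : H.Walk v v), c.IsCycle → c.length ≠ 3)
    (hdeck : SameDeck G H (n - ℓ))
    (hbig : ∀ i : ℕ, n - ℓ ≤ i →
      Nat.card {v : Fin n // ndeg G v = i} = Nat.card {v : Fin n // ndeg H v = i}) :
    Finset.univ.val.map (ndeg G) = Finset.univ.val.map (ndeg H) := by
  classical
  set k := n - ℓ with hk
  have hk1 : 1 ≤ k := by omega
  have hkn : k ≤ n := by omega
  -- the deck gives equality of summed star counts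
  have hdecksum : ∀ d : ℕ,
      ∑ s ∈ (Finset.univ : Finset (Fin n)).powersetCard k,
          Ndeg d (SimpleGraph.induce (↑s : Set (Fin n)) G)
        = ∑ s ∈ (Finset.univ : Finset (Fin n)).powersetCard k,
            Ndeg d (SimpleGraph.induce (↑s : Set (Fin n)) H) := by
    intro d
    obtain ⟨φ, hφ⟩ := hdeck
    rw [Finset.sum_subtype ((Finset.univ : Finset (Fin n)).powersetCard k)
        (fun s => Finset.mem_powersetCard_univ)
        (fun s => Ndeg d (SimpleGraph.induce (↑s : Set (Fin n)) G)),
      Finset.sum_subtype ((Finset.univ : Finset (Fin n)).powersetCard k)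
        (fun s => Finset.mem_powersetCard_univ)
        (fun s => Ndeg d (SimpleGraph.induce (↑s : Set (Fin n)) H))]
    rw [← Equiv.sum_comp φ (fun s => Ndeg d (SimpleGraph.induce (↑s.1 : Set (Fin n)) H))]
    exact Finset.sum_congr rfl (fun s _ => Ndeg_iso' (hφ s).some d)
  -- hence equality of star counts for each d < k
  have hstar : ∀ d : ℕ, d + 1 ≤ k →
      (∑ v, (ndeg G v).choose d) = ∑ v, (ndeg H v).choose d := by
    intro d hd
    have h1 := double_count G d k hd
    have h2 := double_count H d k hd
    have hpos : 0 < (n - (d+1)).choose (k - (d+1)) := Nat.choose_pos (by omega)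
    have := hdecksum d
    rw [h1, h2] at this
    exact Nat.eq_of_mul_eq_mul_right hpos this
  -- fiberwise counts
  set aG : ℕ → ℕ := fun i => (Finset.univ.filter (fun v => ndeg G v = i)).card with haG
  set aH : ℕ → ℕ := fun i => (Finset.univ.filter (fun v => ndeg H v = i)).card with haH
  have hndeg_lt : ∀ (Γ : SimpleGraph (Fin n)) (v : Fin n), ndeg Γ v < n := by
    intro Γ v
    rw [ndeg_eq_card_filter]
    have hsub : Finset.univ.filter (fun w => Γ.Adj v w) ⊆ Finset.univ.erase v := by
      intro w hw
      simp only [Finset.mem_filter] at hw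
      exact Finset.mem_erase.2 ⟨fun h => Γ.irrefl (h ▸ hw.2), Finset.mem_univ w⟩
    calc (Finset.univ.filter (fun w => Γ.Adj v w)).card
        ≤ (Finset.univ.erase v).card := Finset.card_le_card hsub
      _ < n := by
          rw [Finset.card_erase_of_mem (Finset.mem_univ v)]
          simp only [Finset.card_univ, Fintype.card_fin]
          omega
  have hfiber : ∀ (Γ : SimpleGraph (Fin n)) (d : ℕ),
      (∑ v, (ndeg Γ v).choose d)
        = ∑ i ∈ Finset.range n,
            (Finset.univ.filter (fun v => ndeg Γ v = i)).card * i.choose d := by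
    intro Γ d
    rw [← Finset.sum_fiberwise_of_maps_to
      (fun v _ => Finset.mem_range.2 (hndeg_lt Γ v)) (fun v => (ndeg Γ v).choose d)]
    refine Finset.sum_congr rfl (fun i _ => ?_)
    calc ∑ v ∈ Finset.univ.filter (fun v => ndeg Γ v = i), (ndeg Γ v).choose d
        = ∑ _v ∈ Finset.univ.filter (fun v => ndeg Γ v = i), i.choose d := by
          refine Finset.sum_congr rfl (fun v hv => ?_)
          rw [(Finset.mem_filter.1 hv).2]
      _ = _ := by rw [Finset.sum_const, smul_eq_mul]
  -- each fibre count agrees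
  have hbig' : ∀ i : ℕ, k ≤ i → aG i = aH i := by
    intro i hi
    have := hbig i hi
    simpa [haG, haH, Nat.card_eq_fintype_card, Fintype.card_subtype] using this
  have claim : ∀ j : ℕ, ∀ i : ℕ, n - j ≤ i → aG i = aH i := by
    intro j
    induction j with
    | zero => intro i hi; exact hbig' i (by omega)
    | succ j ih =>
      intro i hi
      by_cases hik : n - j ≤ i
      · exact ih i hik
      · by_cases hk2 : k ≤ i
        · exact hbig' i hk2
        · -- here i = n - (j+1) and i < k
          have hin : i < n := by omega
          have E := hstar i (by omega)
          rw [hfiber G i, hfiber H i] at E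
          have hiu : i ∈ Finset.range n := Finset.mem_range.2 hin
          rw [← Finset.sum_erase_add (Finset.range n) _ hiu,
            ← Finset.sum_erase_add (Finset.range n) _ hiu] at E
          have herase : ∑ i' ∈ (Finset.range n).erase i, aG i' * i'.choose i
              = ∑ i' ∈ (Finset.range n).erase i, aH i' * i'.choose i := by
            refine Finset.sum_congr rfl (fun i' hi' => ?_)
            simp only [Finset.mem_erase, Finset.mem_range] at hi'
            rcases lt_or_gt_of_ne hi'.1 with hlt | hgt
            · rw [Nat.choose_eq_zero_of_lt hlt, Nat.mul_zero, Nat.mul_zero]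
            · rw [ih i' (by omega)]
          rw [herase] at E
          have := Nat.add_left_cancel E
          simpa [Nat.choose_self] using this
  have hall : ∀ i : ℕ, aG i = aH i := fun i => claim n i (by omega)
  -- conclude multiset equality
  refine Multiset.ext.2 (fun i => ?_)
  rw [Multiset.count_map, Multiset.count_map]
  have hGi : Multiset.card (Multiset.filter (fun a => i = ndeg G a) Finset.univ.val)
      = aG i := by
    rw [← Finset.filter_val]
    have h : Finset.filter (fun a => i = ndeg G a) Finset.univ
        = Finset.filter (fun v => ndeg G v = i) Finset.univ :=
      Finset.filter_congr (fun x _ => eq_comm)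
    rw [h]
    rfl
  have hHi : Multiset.card (Multiset.filter (fun a => i = ndeg H a) Finset.univ.val)
      = aH i := by
    rw [← Finset.filter_val]
    have h : Finset.filter (fun a => i = ndeg H a) Finset.univ
        = Finset.filter (fun v => ndeg H v = i) Finset.univ :=
      Finset.filter_congr (fun x _ => eq_comm)
    rw [h]
    rfl
  rw [hGi, hHi, hall i]
end
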